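/- arXiv:2102.04905 — 11 statements merged into one kernel-verified Lean document; each statement's English description precedes it below -/
import Mathlib

section
/- Let λ0, λ1 > 0, γ0 > γ1, t > 0 and γ1·t < x < γ0·t. Then for every natural number n ≥ 0, ∫_0^{ξ0(t,x)} λ0·e^{−λ0·τ} · λ1 · z(t−τ, x−γ0·τ)^n/(n!)² · θ(t−τ, x−γ0·τ) dτ = λ0·λ1·ξ0(t,x) · z(t,x)^n/(n!·(n+1)!) · θ(t,x). (This verifies that the explicit odd-switch telegraph density p_1(t,x;2n+1) = λ1·z(t,x)^n/(n!)²·θ(t,x) produces the even-switch density p_0(t,x;2n+2) = λ0·λ1·ξ0(t,x)·z(t,x)^n/(n!(n+1)!)·θ(t,x) under conditioning on the first velocity switch from state 0.) -/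
open Real Filter MeasureTheory

/-- `ξ₀(t,x) = (x − γ₁ t)/(γ₀ − γ₁)`. -/
noncomputable def xi0 (g0 g1 t x : ℝ) : ℝ := (x - g1 * t) / (g0 - g1)

/-- `ξ₁(t,x) = (γ₀ t − x)/(γ₀ − γ₁)`. -/
noncomputable def xi1 (g0 g1 t x : ℝ) : ℝ := (g0 * t - x) / (g0 - g1)

/-- `z(t,x) = λ₀ λ₁ ξ₀(t,x) ξ₁(t,x)`. -/
noncomputable def zf (l0 l1 g0 g1 t x : ℝ) : ℝ := l0 * l1 * xi0 g0 g1 t x * xi1 g0 g1 t x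

/-- `θ(t,x) = exp(−λ₀ ξ₀(t,x) − λ₁ ξ₁(t,x))/(γ₀ − γ₁)`. -/
noncomputable def thetaf (l0 l1 g0 g1 t x : ℝ) : ℝ :=
  Real.exp (-(l0 * xi0 g0 g1 t x) - l1 * xi1 g0 g1 t x) / (g0 - g1)

/-- conditioning on the first velocity switch from state 0 turns the odd-switch
density `p₁(t,x;2n+1)` into the even-switch density `p₀(t,x;2n+2)`. -/
theorem telegraph_density_first_switch_even (l0 l1 g0 g1 t x : ℝ)
    (hl0 : 0 < l0) (hl1 : 0 < l1) (hg : g1 < g0) (ht : 0 < t)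
    (hx1 : g1 * t < x) (hx2 : x < g0 * t) (n : ℕ) :
    ∫ τ in (0 : ℝ)..(xi0 g0 g1 t x),
        l0 * Real.exp (-(l0 * τ)) * l1 *
          (zf l0 l1 g0 g1 (t - τ) (x - g0 * τ)) ^ n / (Nat.factorial n : ℝ) ^ 2 *
          thetaf l0 l1 g0 g1 (t - τ) (x - g0 * τ)
      = l0 * l1 * xi0 g0 g1 t x * (zf l0 l1 g0 g1 t x) ^ n
          / ((Nat.factorial n : ℝ) * (Nat.factorial (n + 1) : ℝ)) * thetaf l0 l1 g0 g1 t x := by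
  have hgg : g0 - g1 ≠ 0 := sub_ne_zero.mpr (ne_of_gt hg)
  set X0 := xi0 g0 g1 t x with hX0
  set X1 := xi1 g0 g1 t x with hX1
  have hxi0 : ∀ τ : ℝ, xi0 g0 g1 (t - τ) (x - g0 * τ) = X0 - τ := by
    intro τ; rw [hX0]; simp only [xi0]; field_simp; ring
  have hxi1 : ∀ τ : ℝ, xi1 g0 g1 (t - τ) (x - g0 * τ) = X1 := by
    intro τ; rw [hX1]; simp only [xi1]; ring_nf
  have hpt : ∀ τ : ℝ,
      l0 * Real.exp (-(l0 * τ)) * l1 *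
          (zf l0 l1 g0 g1 (t - τ) (x - g0 * τ)) ^ n / (Nat.factorial n : ℝ) ^ 2 *
          thetaf l0 l1 g0 g1 (t - τ) (x - g0 * τ)
      = (l0 * l1 * (l0 * l1 * X1) ^ n / (Nat.factorial n : ℝ) ^ 2 *
          thetaf l0 l1 g0 g1 t x) * (X0 - τ) ^ n := by
    intro τ
    have hexp : Real.exp (-(l0 * τ)) * Real.exp (-(l0 * (X0 - τ)) - l1 * X1)
        = Real.exp (-(l0 * X0) - l1 * X1) := by
      rw [← Real.exp_add]; ring_nf
    simp only [zf, thetaf, hxi0, hxi1, ← hX0, ← hX1]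
    rw [show l0 * l1 * (X0 - τ) * X1 = l0 * l1 * X1 * (X0 - τ) from by ring, mul_pow]
    have hfn : (Nat.factorial n : ℝ) ≠ 0 := Nat.cast_ne_zero.mpr (Nat.factorial_ne_zero n)
    field_simp
    linear_combination ((l0 * l1 * X1) ^ n * (X0 - τ) ^ n) * hexp
  rw [intervalIntegral.integral_congr (g := fun τ =>
      (l0 * l1 * (l0 * l1 * X1) ^ n / (Nat.factorial n : ℝ) ^ 2 *
        thetaf l0 l1 g0 g1 t x) * (X0 - τ) ^ n) (fun τ _ => hpt τ),
    intervalIntegral.integral_const_mul]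
  have hint : (∫ τ in (0:ℝ)..X0, (X0 - τ) ^ n) = X0 ^ (n + 1) / (n + 1) := by
    rw [show (fun τ : ℝ => (X0 - τ) ^ n) = fun τ : ℝ => (X0 - τ) ^ n from rfl]
    rw [intervalIntegral.integral_comp_sub_left (fun u => u ^ n) X0]
    simp [integral_pow]
  rw [hint]
  have hfact : (Nat.factorial (n + 1) : ℝ) = (n + 1) * (Nat.factorial n : ℝ) := by
    push_cast [Nat.factorial_succ]; ring
  have hfn : (Nat.factorial n : ℝ) ≠ 0 := Nat.cast_ne_zero.mpr (Nat.factorial_ne_zero n)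
  have hn1 : ((n : ℝ) + 1) ≠ 0 := by positivity
  rw [hfact]
  simp only [zf, ← hX0, ← hX1]
  field_simp
  ring
end

section
/- Let λ0, λ1 > 0, γ0 > γ1, t > 0 and γ1·t < x < γ0·t. Then for every natural number n ≥ 1, ∫_0^{ξ0(t,x)} λ0·e^{−λ0·τ} · λ0·λ1·ξ1(t−τ, x−γ0·τ) · z(t−τ, x−γ0·τ)^{n−1}/((n−1)!·n!) · θ(t−τ, x−γ0·τ) dτ = λ0 · z(t,x)^n/(n!)² · θ(t,x). (This verifies that the explicit even-switch telegraph density p_1(t,x;2n) produces the odd-switch density p_0(t,x;2n+1) = λ0·z(t,x)^n/(n!)²·θ(t,x) under conditioning on the first velocity switch from state 0.) -/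
open Real Filter MeasureTheory

/-- conditioning on the first velocity switch from state 0 turns the even-switch
density `p₁(t,x;2n)` into the odd-switch density `p₀(t,x;2n+1)`. -/
theorem telegraph_density_first_switch_odd (l0 l1 g0 g1 t x : ℝ)
    (hl0 : 0 < l0) (hl1 : 0 < l1) (hg : g1 < g0) (ht : 0 < t)
    (hx1 : g1 * t < x) (hx2 : x < g0 * t) (n : ℕ) (hn : 1 ≤ n) :
    ∫ τ in (0 : ℝ)..(xi0 g0 g1 t x),
        l0 * Real.exp (-(l0 * τ)) *
          (l0 * l1 * xi1 g0 g1 (t - τ) (x - g0 * τ) *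
            (zf l0 l1 g0 g1 (t - τ) (x - g0 * τ)) ^ (n - 1)
            / ((Nat.factorial (n - 1) : ℝ) * (Nat.factorial n : ℝ))) *
          thetaf l0 l1 g0 g1 (t - τ) (x - g0 * τ)
      = l0 * (zf l0 l1 g0 g1 t x) ^ n / (Nat.factorial n : ℝ) ^ 2 *
          thetaf l0 l1 g0 g1 t x := by
  obtain ⟨m, rfl⟩ : ∃ m, n = m + 1 := ⟨n - 1, (Nat.succ_pred_eq_of_pos hn).symm⟩
  have hgne : g0 - g1 ≠ 0 := sub_ne_zero.mpr hg.ne'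
  set a := xi0 g0 g1 t x with ha
  set b := xi1 g0 g1 t x with hb
  have h0 : ∀ τ : ℝ, xi0 g0 g1 (t - τ) (x - g0 * τ) = a - τ := by
    intro τ; simp only [ha, xi0]; field_simp; ring
  have h1 : ∀ τ : ℝ, xi1 g0 g1 (t - τ) (x - g0 * τ) = b := by
    intro τ; simp only [hb, xi1]; field_simp; ring
  set θ := thetaf l0 l1 g0 g1 t x with hθ
  have hth : ∀ τ : ℝ, thetaf l0 l1 g0 g1 (t - τ) (x - g0 * τ) = Real.exp (l0 * τ) * θ := by
    intro τ
    simp only [hθ, thetaf, h0, h1, ← ha, ← hb]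
    rw [show -(l0 * (a - τ)) - l1 * b = l0 * τ + (-(l0 * a) - l1 * b) from by ring,
      Real.exp_add]
    ring
  have hz : ∀ τ : ℝ, zf l0 l1 g0 g1 (t - τ) (x - g0 * τ) = l0 * l1 * (a - τ) * b := by
    intro τ; simp only [zf, h0, h1]
  set C : ℝ := l0 * (l0 * l1 * b) ^ (m + 1) * θ /
    ((Nat.factorial m : ℝ) * (Nat.factorial (m + 1) : ℝ)) with hC
  have hint : ∀ τ : ℝ,
      l0 * Real.exp (-(l0 * τ)) *
          (l0 * l1 * xi1 g0 g1 (t - τ) (x - g0 * τ) *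
            (zf l0 l1 g0 g1 (t - τ) (x - g0 * τ)) ^ (m + 1 - 1)
            / ((Nat.factorial (m + 1 - 1) : ℝ) * (Nat.factorial (m + 1) : ℝ))) *
          thetaf l0 l1 g0 g1 (t - τ) (x - g0 * τ)
        = C * (a - τ) ^ m := by
    intro τ
    have hexp : Real.exp (-(l0 * τ)) * Real.exp (l0 * τ) = 1 := by
      rw [← Real.exp_add]; ring_nf; exact Real.exp_zero
    simp only [hth, hz, h1, Nat.add_sub_cancel, hC]
    have : (l0 * l1 * (a - τ) * b) ^ m = (l0 * l1 * b) ^ m * (a - τ) ^ m := by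
      rw [← mul_pow]; ring_nf
    rw [this, pow_succ]
    linear_combination (l0 * (l0 * l1 * b) * (l0 * l1 * b) ^ m * (a - τ) ^ m * θ /
      ((Nat.factorial m : ℝ) * (Nat.factorial (m + 1) : ℝ))) * hexp
  simp only [hint]
  rw [intervalIntegral.integral_const_mul]
  have hsub : (∫ τ in (0:ℝ)..a, (a - τ) ^ m) = ∫ u in (0:ℝ)..a, u ^ m := by
    have := intervalIntegral.integral_comp_sub_left (a := (0:ℝ)) (b := a)
      (fun u => u ^ m) a
    simpa using this
  rw [hsub, integral_pow]
  have hfm : (Nat.factorial m : ℝ) ≠ 0 := Nat.cast_ne_zero.mpr (Nat.factorial_ne_zero m)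
  have hfm1 : (Nat.factorial (m + 1) : ℝ) ≠ 0 := Nat.cast_ne_zero.mpr (Nat.factorial_ne_zero _)
  have hm1 : ((m : ℝ) + 1) ≠ 0 := by positivity
  have hfact : (Nat.factorial (m + 1) : ℝ) = ((m : ℝ) + 1) * (Nat.factorial m : ℝ) := by
    rw [Nat.factorial_succ]; push_cast; ring
  have hzeq : zf l0 l1 g0 g1 t x = l0 * l1 * a * b := rfl
  rw [hzeq, hC, hfact]
  have hab : (l0 * l1 * a * b) ^ (m + 1) = (l0 * l1 * b) ^ (m + 1) * a ^ (m + 1) := by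
    rw [← mul_pow]; ring_nf
  rw [hab]
  field_simp
  ring
end

section
/- Let λ0, λ1 > 0, γ0 > 0 > γ1, y > 0 and t > y/γ0. Then for every natural number n ≥ 1, ∫_0^{y/γ0} λ0·e^{−λ0·τ} · (λ1/ξ0(t−τ, y−γ0·τ)) · z(t−τ, y−γ0·τ)^{n−1}/((n−1)!)² · θ(t−τ, y−γ0·τ) · ((y − γ0·τ) − (γ1/n)·ξ1(t−τ, y−γ0·τ)) dτ = λ0·λ1·y · z(t,y)^{n−1}/((n−1)!·n!) · θ(t,y). (This is the induction step of Theorem 2.1 showing that the explicit first-passage density f_1(·;2n−1) = (λ1/ξ0)·z^{n−1}/((n−1)!)²·θ·(y − γ1·ξ1/n) yields f_0(t,y;2n) = λ0·λ1·y·z^{n−1}/((n−1)!·n!)·θ via the coupled integral equation obtained by conditioning on the first velocity switch.) -/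
open Real Filter MeasureTheory

/-- induction step of Theorem 2.1 — the first-passage density `f₁(·;2n−1)`
yields `f₀(t,y;2n)` via the coupled integral equation (conditioning on the first switch). -/
theorem fpt_induction_step_even (l0 l1 g0 g1 t y : ℝ)
    (hl0 : 0 < l0) (hl1 : 0 < l1) (hg0 : 0 < g0) (hg1 : g1 < 0)
    (hy : 0 < y) (ht : y / g0 < t) (n : ℕ) (hn : 1 ≤ n) :
    ∫ τ in (0 : ℝ)..(y / g0),
        l0 * Real.exp (-(l0 * τ)) *
          (l1 / xi0 g0 g1 (t - τ) (y - g0 * τ)) *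
          (zf l0 l1 g0 g1 (t - τ) (y - g0 * τ)) ^ (n - 1) / (Nat.factorial (n - 1) : ℝ) ^ 2 *
          thetaf l0 l1 g0 g1 (t - τ) (y - g0 * τ) *
          ((y - g0 * τ) - (g1 / (n : ℝ)) * xi1 g0 g1 (t - τ) (y - g0 * τ))
      = l0 * l1 * y * (zf l0 l1 g0 g1 t y) ^ (n - 1)
          / ((Nat.factorial (n - 1) : ℝ) * (Nat.factorial n : ℝ)) * thetaf l0 l1 g0 g1 t y := by
  obtain ⟨m, rfl⟩ : ∃ m, n = m + 1 := ⟨n - 1, (Nat.succ_pred_eq_of_pos hn).symm⟩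
  clear hn
  simp only [Nat.add_sub_cancel]
  have hD : (0:ℝ) < g0 - g1 := by linarith
  have hbpos : 0 < xi1 g0 g1 t y := by
    have : y < t * g0 := (div_lt_iff₀ hg0).mp ht
    unfold xi1
    apply div_pos
    · linarith
    · exact hD
  set a := xi0 g0 g1 t y with ha
  set b := xi1 g0 g1 t y with hb
  set θ := thetaf l0 l1 g0 g1 t y with hθ
  set T := y / g0 with hT
  have hTpos : 0 < T := div_pos hy hg0
  have hyab : g0 * a + g1 * b = y := by
    rw [ha, hb]; unfold xi0 xi1; field_simp; ring
  have hcT : a - T = -g1 * b / g0 := by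
    rw [eq_div_iff hg0.ne']
    rw [ha, hb, hT]; unfold xi0 xi1
    field_simp
    ring
  have hcpos : 0 < a - T := by
    rw [hcT]
    apply div_pos
    · nlinarith
    · exact hg0
  have hτpos : ∀ τ ∈ Set.uIcc (0:ℝ) T, 0 < a - τ := by
    intro τ hτ
    rw [Set.uIcc_of_le hTpos.le] at hτ
    have := hτ.2
    linarith
  set K := l0 * l1 * θ * (l0 * l1 * b) ^ m / ((Nat.factorial m : ℝ))^2 with hK
  set c2 := g1 * b * (m:ℝ) / ((m:ℝ)+1) with hc2
  rw [intervalIntegral.integral_congr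
      (g := fun τ => K * (g0 * (a - τ)^m + c2 * (a - τ)^(m-1)))]
  · -- compute the integral
    have Ipow : ∀ k : ℕ, ∫ τ in (0:ℝ)..T, (a - τ)^k = (a^(k+1) - (a-T)^(k+1))/(k+1) := by
      intro k
      have h := intervalIntegral.integral_comp_sub_left (a := (0:ℝ)) (b := T) (fun x => x^k) a
      simp only [sub_zero] at h
      rw [h, integral_pow]
    have hint1 : IntervalIntegrable (fun τ => g0 * (a - τ)^m) volume 0 T :=
      ((continuous_const.mul ((continuous_const.sub continuous_id).pow m)).intervalIntegrable _ _)
    have hint2 : IntervalIntegrable (fun τ => c2 * (a - τ)^(m-1)) volume 0 T :=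
      ((continuous_const.mul
        ((continuous_const.sub continuous_id).pow (m-1))).intervalIntegrable _ _)
    rw [intervalIntegral.integral_const_mul, intervalIntegral.integral_add hint1 hint2,
        intervalIntegral.integral_const_mul, intervalIntegral.integral_const_mul,
        Ipow m, Ipow (m-1)]
    have hz : zf l0 l1 g0 g1 t y = l0 * l1 * a * b := by
      rw [ha, hb]; unfold zf; ring
    have hgc : g0 * (a - T) + g1 * b = 0 := by
      rw [hcT]; field_simp; ring
    obtain ⟨c, hc⟩ : ∃ c, a - T = c := ⟨_, rfl⟩
    rw [hc] at hgc
    rw [hc, hz, hK, hc2]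
    rcases m with _ | k
    · norm_num [Nat.factorial]
      linear_combination l0 * l1 * θ * hyab - l0 * l1 * θ * hgc
    · have hnum : g0 * (a^(k+2) - c^(k+2)) + g1 * b * (a^(k+1) - c^(k+1)) = y * a^(k+1) := by
        linear_combination a^(k+1) * hyab - c^(k+1) * hgc
      simp only [Nat.add_sub_cancel]
      have hk1 : (0:ℝ) < (k:ℝ) + 1 := by positivity
      have hk2 : (0:ℝ) < (k:ℝ) + 2 := by positivity
      have hbr : g0 * ((a ^ (k + 1 + 1) - c ^ (k + 1 + 1)) / (((k+1:ℕ):ℝ) + 1)) +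
            g1 * b * ((k+1:ℕ):ℝ) / (((k+1:ℕ):ℝ) + 1) *
              ((a ^ (k + 1) - c ^ (k + 1)) / ((k:ℝ) + 1))
          = y * a ^ (k + 1) / (((k+1:ℕ):ℝ) + 1) := by
        push_cast
        field_simp
        linear_combination hnum
      rw [hbr]
      simp only [Nat.factorial_succ]
      push_cast
      have hkf : (0:ℝ) < (Nat.factorial k : ℝ) := by positivity
      field_simp
      ring
  · intro τ hτ
    have hne : (a - τ) ≠ 0 := (hτpos τ hτ).ne'
    simp only
    have h0 : xi0 g0 g1 (t - τ) (y - g0 * τ) = a - τ := by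
      rw [ha]; unfold xi0; field_simp; ring
    have h1 : xi1 g0 g1 (t - τ) (y - g0 * τ) = b := by
      rw [hb]; unfold xi1
      rw [div_eq_div_iff (by linarith) (by linarith)]
      ring
    have h2 : thetaf l0 l1 g0 g1 (t - τ) (y - g0 * τ) = θ * Real.exp (l0 * τ) := by
      rw [hθ]; unfold thetaf
      rw [h0, h1, ← ha, ← hb, div_mul_eq_mul_div, ← Real.exp_add]
      congr 2
      ring
    have hz : zf l0 l1 g0 g1 (t - τ) (y - g0 * τ) = l0 * l1 * (a - τ) * b := by
      unfold zf; rw [h0, h1]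
    have hx : y - g0 * τ = g0 * (a - τ) + g1 * b := by linear_combination -hyab
    have hexpneg : Real.exp (-(l0 * τ)) = (Real.exp (l0 * τ))⁻¹ := by
      rw [Real.exp_neg]
    have hE : Real.exp (l0 * τ) ≠ 0 := (Real.exp_pos _).ne'
    rw [h0, h1, h2, hz, hx, hexpneg, hK, hc2]
    obtain ⟨u, hu⟩ : ∃ u, a - τ = u := ⟨_, rfl⟩
    obtain ⟨E, hEe⟩ : ∃ E, Real.exp (l0 * τ) = E := ⟨_, rfl⟩
    rw [hu] at hne
    rw [hEe] at hE
    rw [hu, hEe]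
    rcases m with _ | k
    · norm_num [Nat.factorial]
      field_simp
    · simp only [Nat.add_sub_cancel]
      push_cast
      field_simp
      ring
end

section
/- Let λ0, λ1 > 0, γ0 > 0 > γ1, y > 0 and t > y/γ0. Then for every natural number n ≥ 1, ∫_0^{ξ1(t,y)} λ1·e^{−λ1·τ} · λ0·λ1·(y − γ1·τ) · z(t−τ, y−γ1·τ)^{n−1}/((n−1)!·n!) · θ(t−τ, y−γ1·τ) dτ = (λ1/ξ0(t,y)) · z(t,y)^n/(n!)² · (y − (γ1/(n+1))·ξ1(t,y)) · θ(t,y). (This is the induction step of Theorem 2.1 showing that the explicit first-passage density f_0(·;2n) = λ0·λ1·y·z^{n−1}/((n−1)!·n!)·θ yields f_1(t,y;2n+1) = (λ1/ξ0)·z^n/(n!)²·(y − γ1·ξ1/(n+1))·θ via the coupled integral equation obtained by conditioning on the first velocity switch.) -/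
open Real Filter MeasureTheory

lemma integral_sub_pow' (b : ℝ) (k : ℕ) :
    ∫ τ in (0:ℝ)..b, (b - τ) ^ k = b ^ (k + 1) / (k + 1) := by
  rw [intervalIntegral.integral_comp_sub_left (fun x => x ^ k) b]
  simp [integral_pow]

/-- induction step of Theorem 2.1 — the first-passage density `f₀(·;2n)`
yields `f₁(t,y;2n+1)` via the coupled integral equation (conditioning on the first switch). -/
theorem fpt_induction_step_odd (l0 l1 g0 g1 t y : ℝ)
    (hl0 : 0 < l0) (hl1 : 0 < l1) (hg0 : 0 < g0) (hg1 : g1 < 0)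
    (hy : 0 < y) (ht : y / g0 < t) (n : ℕ) (hn : 1 ≤ n) :
    ∫ τ in (0 : ℝ)..(xi1 g0 g1 t y),
        l1 * Real.exp (-(l1 * τ)) *
          (l0 * l1 * (y - g1 * τ) *
            (zf l0 l1 g0 g1 (t - τ) (y - g1 * τ)) ^ (n - 1)
            / ((Nat.factorial (n - 1) : ℝ) * (Nat.factorial n : ℝ))) *
          thetaf l0 l1 g0 g1 (t - τ) (y - g1 * τ)
      = (l1 / xi0 g0 g1 t y) * (zf l0 l1 g0 g1 t y) ^ n / (Nat.factorial n : ℝ) ^ 2 *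
          (y - (g1 / ((n : ℝ) + 1)) * xi1 g0 g1 t y) * thetaf l0 l1 g0 g1 t y := by
  obtain ⟨m, rfl⟩ : ∃ m, n = m + 1 := ⟨n - 1, (Nat.succ_pred_eq_of_pos hn).symm⟩
  have hΔ : (0:ℝ) < g0 - g1 := by linarith
  have hΔ' : g0 - g1 ≠ 0 := ne_of_gt hΔ
  have ht0 : 0 < t := lt_trans (div_pos hy hg0) ht
  set X := xi0 g0 g1 t y with hXdef
  set b := xi1 g0 g1 t y with hbdef
  set Θ := thetaf l0 l1 g0 g1 t y with hTdef
  have hX : 0 < X := by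
    rw [hXdef, xi0]
    exact div_pos (by nlinarith) hΔ
  set C : ℝ := l1 * (l0 * l1) ^ (m + 1) * X ^ m * Θ /
      ((Nat.factorial m : ℝ) * (Nat.factorial (m + 1) : ℝ)) with hCdef
  have key : ∀ τ : ℝ,
      l1 * Real.exp (-(l1 * τ)) *
        (l0 * l1 * (y - g1 * τ) *
          (zf l0 l1 g0 g1 (t - τ) (y - g1 * τ)) ^ (m + 1 - 1)
          / ((Nat.factorial (m + 1 - 1) : ℝ) * (Nat.factorial (m + 1) : ℝ))) *
        thetaf l0 l1 g0 g1 (t - τ) (y - g1 * τ)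
      = C * ((y - g1 * b) * (b - τ) ^ m + g1 * (b - τ) ^ (m + 1)) := by
    intro τ
    have hxi0 : xi0 g0 g1 (t - τ) (y - g1 * τ) = X := by
      rw [hXdef]; unfold xi0; ring_nf
    have hxi1 : xi1 g0 g1 (t - τ) (y - g1 * τ) = b - τ := by
      rw [hbdef]; unfold xi1; field_simp; ring
    simp only [Nat.add_sub_cancel, zf, thetaf, hxi0, hxi1]
    rw [hCdef, hTdef, thetaf, ← hXdef, ← hbdef]
    rw [show (-(l0 * X) - l1 * b) = (-(l1 * τ)) + (-(l0 * X) - l1 * (b - τ)) by ring,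
      Real.exp_add]
    simp only [mul_pow]
    ring
  rw [intervalIntegral.integral_congr (fun τ _ => key τ)]
  have hint1 : IntervalIntegrable (fun τ : ℝ => (y - g1 * b) * (b - τ) ^ m)
      volume 0 b :=
    (Continuous.intervalIntegrable (by continuity) _ _)
  have hint2 : IntervalIntegrable (fun τ : ℝ => g1 * (b - τ) ^ (m + 1))
      volume 0 b :=
    (Continuous.intervalIntegrable (by continuity) _ _)
  rw [intervalIntegral.integral_const_mul, intervalIntegral.integral_add hint1 hint2,
    intervalIntegral.integral_const_mul, intervalIntegral.integral_const_mul,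
    integral_sub_pow', integral_sub_pow']
  have hfm : (Nat.factorial m : ℝ) ≠ 0 := Nat.cast_ne_zero.mpr (Nat.factorial_ne_zero m)
  have hfm1 : (Nat.factorial (m + 1) : ℝ) ≠ 0 :=
    Nat.cast_ne_zero.mpr (Nat.factorial_ne_zero (m + 1))
  have hm1 : ((m : ℝ) + 1) ≠ 0 := by positivity
  have hm2 : ((m : ℝ) + 1 + 1) ≠ 0 := by positivity
  have hfac : (Nat.factorial (m + 1) : ℝ) = ((m : ℝ) + 1) * (Nat.factorial m : ℝ) := by
    rw [Nat.factorial_succ]; push_cast; ring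
  rw [hCdef, zf, ← hXdef, ← hbdef]
  push_cast
  rw [hfac]
  field_simp
  ring
end

section
/- Let λ0, λ1 > 0, γ0 > 0 > γ1, t > 0 and 0 < x < γ0·t. For every natural number n ≥ 0, ∫_0^{x/γ0} λ1·e^{−λ0·s} · (λ0/(γ0·ξ0(t−s, x−γ0·s))) · z(t−s, x−γ0·s)^n/(n!)² · θ(t−s, x−γ0·s) · ((x − γ0·s) − (γ1/(n+1))·ξ1(t−s, x−γ0·s)) ds = (λ0·λ1·x/γ0) · z(t,x)^n/(n!·(n+1)!) · θ(t,x). (This verifies the first equation of the coupled system for positive telegraphic meanders: the explicit meander density g⁺(t,x;2n+1) = (λ0/(γ0·ξ0))·z^n/(n!)²·θ·(x − γ1·ξ1/(n+1)) produces g⁺(t,x;2n+2) = (λ0·λ1·x/γ0)·z^n/(n!(n+1)!)·θ by conditioning on the last velocity change.) -/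
open Real Filter MeasureTheory

lemma deriv_val_eq (K A u s : ℝ) (n : ℕ) (hAs : A - s ≠ 0) :
    K * ((A - s) ^ n / (A - s) * ((u - s) + (A - u) / ((n:ℝ) + 1)))
      = -(K / ((n:ℝ) + 1)) * ((n:ℝ) * (A - s) ^ (n - 1) * (-1) * (u - s) + (A - s) ^ n * (-1)) := by
  have hn1 : ((n:ℝ) + 1) ≠ 0 := by positivity
  rcases n with _ | m
  · push_cast; field_simp; ring
  · have h : ((m + 1 : ℕ) - 1) = m := rfl
    rw [h, pow_succ]
    push_cast
    field_simp
    ring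

lemma integrand_eq (l0 l1 g0 g1 A B u s : ℝ) (n : ℕ)
    (hg0 : g0 ≠ 0) (hd : g0 - g1 ≠ 0) (hAs : A - s ≠ 0)
    (hgAu : g0 * (A - u) = -g1 * B) :
    l1 * Real.exp (-(l0 * s)) * (l0 / (g0 * (A - s))) *
        (l0 * l1 * (A - s) * B) ^ n / (Nat.factorial n : ℝ) ^ 2 *
        (Real.exp (-(l0 * (A - s)) - l1 * B) / (g0 - g1)) *
        ((g0 * u - g0 * s) - g1 / ((n : ℝ) + 1) * B)
      = (l0 * l1 * (l0 * l1 * B) ^ n / (Nat.factorial n : ℝ) ^ 2 *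
          (Real.exp (-(l0 * A) - l1 * B) / (g0 - g1))) *
        ((A - s) ^ n / (A - s) * ((u - s) + (A - u) / ((n : ℝ) + 1))) := by
  have hn1 : ((n:ℝ) + 1) ≠ 0 := by positivity
  have hcrit : (g0 * u - g0 * s) - g1 / ((n:ℝ) + 1) * B
      = g0 * ((u - s) + (A - u) / ((n:ℝ) + 1)) := by
    field_simp
    linear_combination (-1 : ℝ) * hgAu
  have hexp : Real.exp (-(l0 * (A - s)) - l1 * B)
      = Real.exp (-(l0 * A) - l1 * B) * Real.exp (l0 * s) := by
    rw [← Real.exp_add]; ring_nf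
  have hsplit : (l0 * l1 * (A - s) * B) ^ n = (l0 * l1 * B) ^ n * (A - s) ^ n := by
    rw [← mul_pow]; ring_nf
  rw [hcrit, hexp, hsplit, Real.exp_neg]
  have he := Real.exp_ne_zero (l0 * s)
  field_simp

lemma value_eq (l0 l1 g0 g1 A B u E : ℝ) (n : ℕ)
    (hg0 : g0 ≠ 0) (hd : g0 - g1 ≠ 0) (hfact : (Nat.factorial n : ℝ) ≠ 0) :
    (-(l0 * l1 * (l0 * l1 * B) ^ n / (Nat.factorial n : ℝ) ^ 2 * (E / (g0 - g1))
          / ((n:ℝ) + 1)) * ((A - u) ^ n * (u - u)))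
      - (-(l0 * l1 * (l0 * l1 * B) ^ n / (Nat.factorial n : ℝ) ^ 2 * (E / (g0 - g1))
          / ((n:ℝ) + 1)) * ((A - 0) ^ n * (u - 0)))
      = (l0 * l1 * (g0 * u) / g0) * (l0 * l1 * A * B) ^ n
          / ((Nat.factorial n : ℝ) * (Nat.factorial (n + 1) : ℝ)) * (E / (g0 - g1)) := by
  have hn1 : ((n:ℝ) + 1) ≠ 0 := by positivity
  have hfs : (Nat.factorial (n + 1) : ℝ) = ((n:ℝ) + 1) * (Nat.factorial n : ℝ) := by
    push_cast [Nat.factorial_succ]; ring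
  have hsplit : (l0 * l1 * A * B) ^ n = (l0 * l1 * B) ^ n * A ^ n := by
    rw [← mul_pow]; ring_nf
  rw [hfs, hsplit]
  field_simp
  ring

/-- first equation of the coupled system for positive telegraphic meanders —
the meander density `g⁺(t,x;2n+1)` produces `g⁺(t,x;2n+2)` by conditioning on the last
velocity change. -/
theorem meander_last_switch_even (l0 l1 g0 g1 t x : ℝ)
    (hl0 : 0 < l0) (hl1 : 0 < l1) (hg0 : 0 < g0) (hg1 : g1 < 0)
    (ht : 0 < t) (hx1 : 0 < x) (hx2 : x < g0 * t) (n : ℕ) :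
    ∫ s in (0 : ℝ)..(x / g0),
        l1 * Real.exp (-(l0 * s)) *
          (l0 / (g0 * xi0 g0 g1 (t - s) (x - g0 * s))) *
          (zf l0 l1 g0 g1 (t - s) (x - g0 * s)) ^ n / (Nat.factorial n : ℝ) ^ 2 *
          thetaf l0 l1 g0 g1 (t - s) (x - g0 * s) *
          ((x - g0 * s) - (g1 / ((n : ℝ) + 1)) * xi1 g0 g1 (t - s) (x - g0 * s))
      = (l0 * l1 * x / g0) * (zf l0 l1 g0 g1 t x) ^ n
          / ((Nat.factorial n : ℝ) * (Nat.factorial (n + 1) : ℝ)) * thetaf l0 l1 g0 g1 t x := by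
  have hd : (0:ℝ) < g0 - g1 := by linarith
  set A := xi0 g0 g1 t x with hA
  set B := xi1 g0 g1 t x with hB
  set u := x / g0 with hu
  have hu0 : 0 < u := div_pos hx1 hg0
  have hBpos : 0 < B := div_pos (by linarith) hd
  have huA : u < A := by
    rw [hu, hA, xi0, div_lt_div_iff₀ hg0 hd]
    nlinarith [mul_pos (neg_pos.2 hg1) (sub_pos.2 hx2)]
  have h0 : ∀ s : ℝ, xi0 g0 g1 (t - s) (x - g0 * s) = A - s := by
    intro s; rw [hA]; unfold xi0; field_simp; ring
  have h1 : ∀ s : ℝ, xi1 g0 g1 (t - s) (x - g0 * s) = B := by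
    intro s; rw [hB]; unfold xi1; field_simp; ring
  have hxu : x = g0 * u := by rw [hu]; field_simp
  have hgAu : g0 * (A - u) = -g1 * B := by
    rw [hA, hB, hu, xi0, xi1]; field_simp; ring
  have hAs : ∀ s ∈ Set.uIcc (0:ℝ) u, 0 < A - s := by
    intro s hs
    rw [Set.uIcc_of_le hu0.le] at hs
    have := hs.2; linarith
  have hfact : (Nat.factorial n : ℝ) ≠ 0 := Nat.cast_ne_zero.2 n.factorial_ne_zero
  set K : ℝ := l0 * l1 * (l0 * l1 * B) ^ n / (Nat.factorial n : ℝ) ^ 2 *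
      (Real.exp (-(l0 * A) - l1 * B) / (g0 - g1)) with hK
  -- Step 1: rewrite the integrand on the interval of integration
  have hcongr : Set.EqOn
      (fun s => l1 * Real.exp (-(l0 * s)) *
          (l0 / (g0 * xi0 g0 g1 (t - s) (x - g0 * s))) *
          (zf l0 l1 g0 g1 (t - s) (x - g0 * s)) ^ n / (Nat.factorial n : ℝ) ^ 2 *
          thetaf l0 l1 g0 g1 (t - s) (x - g0 * s) *
          ((x - g0 * s) - (g1 / ((n : ℝ) + 1)) * xi1 g0 g1 (t - s) (x - g0 * s)))
      (fun s => K * ((A - s) ^ n / (A - s) * ((u - s) + (A - u) / ((n:ℝ) + 1))))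
      (Set.uIcc (0:ℝ) u) := by
    intro s hs
    have hAs' : A - s ≠ 0 := (hAs s hs).ne'
    show l1 * Real.exp (-(l0 * s)) *
          (l0 / (g0 * xi0 g0 g1 (t - s) (x - g0 * s))) *
          (zf l0 l1 g0 g1 (t - s) (x - g0 * s)) ^ n / (Nat.factorial n : ℝ) ^ 2 *
          thetaf l0 l1 g0 g1 (t - s) (x - g0 * s) *
          ((x - g0 * s) - (g1 / ((n : ℝ) + 1)) * xi1 g0 g1 (t - s) (x - g0 * s))
        = K * ((A - s) ^ n / (A - s) * ((u - s) + (A - u) / ((n:ℝ) + 1)))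
    rw [zf, thetaf, h0 s, h1 s, hK]
    have hx' : x - g0 * s = g0 * u - g0 * s := by rw [← hxu]
    rw [hx']
    exact integrand_eq l0 l1 g0 g1 A B u s n hg0.ne' hd.ne' hAs' hgAu
  rw [intervalIntegral.integral_congr hcongr]
  -- Step 2: fundamental theorem of calculus with explicit antiderivative
  have hderiv : ∀ s ∈ Set.uIcc (0:ℝ) u,
      HasDerivAt (fun y => -(K / ((n:ℝ) + 1)) * ((A - y) ^ n * (u - y)))
        (K * ((A - s) ^ n / (A - s) * ((u - s) + (A - u) / ((n:ℝ) + 1)))) s := by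
    intro s hs
    have hAs' : A - s ≠ 0 := (hAs s hs).ne'
    have hpow : HasDerivAt (fun y : ℝ => (A - y) ^ n)
        ((n:ℝ) * (A - s) ^ (n - 1) * (-1)) s := ((hasDerivAt_id s).const_sub A).pow n
    have hlin : HasDerivAt (fun y : ℝ => u - y) (-1 : ℝ) s :=
      (hasDerivAt_id s).const_sub u
    have h3 := (hpow.mul hlin).const_mul (-(K / ((n:ℝ) + 1)))
    have hval := deriv_val_eq K A u s n hAs'
    rw [hval]
    exact h3
  have hint : IntervalIntegrable
      (fun s => K * ((A - s) ^ n / (A - s) * ((u - s) + (A - u) / ((n:ℝ) + 1))))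
      volume 0 u := by
    apply ContinuousOn.intervalIntegrable
    apply ContinuousOn.mul continuousOn_const
    apply ContinuousOn.mul
    · exact ContinuousOn.div (by fun_prop) (by fun_prop) (fun s hs => (hAs s hs).ne')
    · fun_prop
  rw [intervalIntegral.integral_eq_sub_of_hasDerivAt hderiv hint]
  -- Step 3: evaluate the antiderivative and match the right-hand side
  rw [zf, thetaf, ← hA, ← hB, hK, hxu]
  exact value_eq l0 l1 g0 g1 A B u (Real.exp (-(l0 * A) - l1 * B)) n hg0.ne' hd.ne' hfact
end

section
/- Let λ0, λ1 > 0, γ0 > 0 > γ1, t > 0 and 0 < x < γ0·t. For every natural number n ≥ 1, ∫_0^{ξ1(t,x)} λ0·e^{−λ1·s} · (λ0·λ1·(x − γ1·s)/γ0) · z(t−s, x−γ1·s)^{n−1}/((n−1)!·n!) · θ(t−s, x−γ1·s) ds = (λ0/(γ0·ξ0(t,x))) · z(t,x)^n/(n!)² · (x − (γ1/(n+1))·ξ1(t,x)) · θ(t,x). (This verifies the second equation of the coupled system for positive telegraphic meanders: the explicit meander density g⁺(t,x;2n) = (λ0·λ1·x/γ0)·z^{n−1}/((n−1)!·n!)·θ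 produces g⁺(t,x;2n+1) = (λ0/(γ0·ξ0))·z^n/(n!)²·(x − γ1·ξ1/(n+1))·θ by conditioning on the last velocity change.) -/
open Real Filter MeasureTheory

lemma int_pow_sub (b : ℝ) (k : ℕ) : ∫ s in (0:ℝ)..b, (b - s)^k = b^(k+1)/(k+1) := by
  rw [intervalIntegral.integral_comp_sub_left (fun u => u^k) b]
  simp [integral_pow]

/-- second equation of the coupled system for positive telegraphic meanders —
the meander density `g⁺(t,x;2n)` produces `g⁺(t,x;2n+1)` by conditioning on the last
velocity change. -/
theorem meander_last_switch_odd (l0 l1 g0 g1 t x : ℝ)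
    (hl0 : 0 < l0) (hl1 : 0 < l1) (hg0 : 0 < g0) (hg1 : g1 < 0)
    (ht : 0 < t) (hx1 : 0 < x) (hx2 : x < g0 * t) (n : ℕ) (hn : 1 ≤ n) :
    ∫ s in (0 : ℝ)..(xi1 g0 g1 t x),
        l0 * Real.exp (-(l1 * s)) *
          (l0 * l1 * (x - g1 * s) / g0) *
          (zf l0 l1 g0 g1 (t - s) (x - g1 * s)) ^ (n - 1)
          / ((Nat.factorial (n - 1) : ℝ) * (Nat.factorial n : ℝ)) *
          thetaf l0 l1 g0 g1 (t - s) (x - g1 * s)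
      = (l0 / (g0 * xi0 g0 g1 t x)) * (zf l0 l1 g0 g1 t x) ^ n / (Nat.factorial n : ℝ) ^ 2 *
          (x - (g1 / ((n : ℝ) + 1)) * xi1 g0 g1 t x) * thetaf l0 l1 g0 g1 t x := by
  obtain ⟨m, rfl⟩ : ∃ m, n = m + 1 := ⟨n - 1, (Nat.succ_pred_eq_of_pos hn).symm⟩
  have hc : (0:ℝ) < g0 - g1 := by linarith
  have hc' : g0 - g1 ≠ 0 := ne_of_gt hc
  set X0 := xi0 g0 g1 t x with hX0def
  set X1 := xi1 g0 g1 t x with hX1def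
  set θ := thetaf l0 l1 g0 g1 t x with hθdef
  have hX0 : X0 ≠ 0 := by
    have : 0 < X0 := div_pos (by nlinarith) hc
    exact ne_of_gt this
  have hxi0s : ∀ s : ℝ, xi0 g0 g1 (t - s) (x - g1 * s) = X0 := by
    intro s; simp only [hX0def, xi0]; field_simp; ring
  have hxi1s : ∀ s : ℝ, xi1 g0 g1 (t - s) (x - g1 * s) = X1 - s := by
    intro s; simp only [hX1def, xi1]; field_simp; ring
  have hθs : ∀ s : ℝ, thetaf l0 l1 g0 g1 (t - s) (x - g1 * s) = θ * Real.exp (l1 * s) := by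
    intro s
    simp only [hθdef, thetaf, hxi0s, hxi1s, hX0def, hX1def]
    rw [div_mul_eq_mul_div, ← Real.exp_add]
    ring_nf
  set A : ℝ := l0 * (l0 * l1 / g0) * (l0 * l1 * X0) ^ m /
      ((Nat.factorial m : ℝ) * (Nat.factorial (m + 1) : ℝ)) * θ with hAdef
  have key : ∀ s : ℝ,
      l0 * Real.exp (-(l1 * s)) * (l0 * l1 * (x - g1 * s) / g0) *
        (zf l0 l1 g0 g1 (t - s) (x - g1 * s)) ^ (m + 1 - 1)
        / ((Nat.factorial (m + 1 - 1) : ℝ) * (Nat.factorial (m + 1) : ℝ)) *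
        thetaf l0 l1 g0 g1 (t - s) (x - g1 * s)
      = A * ((x - g1 * X1) * (X1 - s) ^ m + g1 * (X1 - s) ^ (m + 1)) := by
    intro s
    simp only [Nat.add_sub_cancel, zf, hxi0s, hxi1s, hθs, hAdef]
    have he : Real.exp (-(l1 * s)) * Real.exp (l1 * s) = 1 := by
      rw [← Real.exp_add]; simp
    have hfm : (Nat.factorial m : ℝ) ≠ 0 := Nat.cast_ne_zero.2 (Nat.factorial_ne_zero m)
    have hfm1 : (Nat.factorial (m+1) : ℝ) ≠ 0 := Nat.cast_ne_zero.2 (Nat.factorial_ne_zero _)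
    have hmp : (l0 * l1 * X0 * (X1 - s)) ^ m = (l0 * l1 * X0) ^ m * (X1 - s) ^ m := by
      rw [← mul_pow]
    rw [hmp]
    rw [Real.exp_neg] at he ⊢
    field_simp
    ring
  rw [intervalIntegral.integral_congr (fun s _ => key s)]
  have hint1 : IntervalIntegrable (fun s => (x - g1 * X1) * (X1 - s) ^ m) volume 0 X1 :=
    (continuous_const.mul ((continuous_const.sub continuous_id).pow m)).intervalIntegrable _ _
  have hint2 : IntervalIntegrable (fun s => g1 * (X1 - s) ^ (m + 1)) volume 0 X1 :=
    (continuous_const.mul ((continuous_const.sub continuous_id).pow (m+1))).intervalIntegrable _ _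
  rw [intervalIntegral.integral_const_mul, intervalIntegral.integral_add hint1 hint2,
    intervalIntegral.integral_const_mul, intervalIntegral.integral_const_mul,
    int_pow_sub, int_pow_sub]
  -- final algebra
  have hfm : (Nat.factorial m : ℝ) ≠ 0 := Nat.cast_ne_zero.2 (Nat.factorial_ne_zero m)
  have hfm1 : (Nat.factorial (m+1) : ℝ) ≠ 0 := Nat.cast_ne_zero.2 (Nat.factorial_ne_zero _)
  have hm1 : ((m:ℝ) + 1) ≠ 0 := by positivity
  have hm2 : ((m:ℝ) + 1 + 1) ≠ 0 := by positivity
  have hfs : (Nat.factorial (m+1) : ℝ) = ((m:ℝ) + 1) * (Nat.factorial m : ℝ) := by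
    rw [Nat.factorial_succ]; push_cast; ring
  simp only [hAdef, zf]
  push_cast
  rw [hfs]
  have hzp : (l0 * l1 * X0 * X1) ^ (m+1) = (l0*l1*X0)^m * l0 * l1 * X0 * X1^(m+1) := by
    rw [show l0 * l1 * X0 * X1 = (l0*l1*X0) * X1 by ring, mul_pow, pow_succ]; ring
  rw [hzp]
  field_simp
  ring
end

section
/- Let λ0, λ1 > 0, γ0 > γ1 and t > 0. Then e^{−λ0·t} + ∫_{γ1·t}^{γ0·t} λ0·(ℐ0(z(t,x)) + λ1·ξ0(t,x)·ℐ1(z(t,x)))·θ(t,x) dx = 1. (This says that the distribution of the telegraph particle position Γ(t) started from state 0 — an atom of mass e^{−λ0·t} at x = γ0·t plus the absolutely continuous part with the stated density on (γ1·t, γ0·t) — is a probability distribution.) -/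
open Real Filter MeasureTheory

/-- `ℐ₀(z) = ∑ zⁿ/(n!)² = I₀(2√z)`. -/
noncomputable def calI0 (z : ℝ) : ℝ := ∑' n : ℕ, z ^ n / (Nat.factorial n : ℝ) ^ 2

/-- `ℐ₁(z) = ∑ zⁿ/(n!·(n+1)!) = I₁(2√z)/√z`. -/
noncomputable def calI1 (z : ℝ) : ℝ :=
  ∑' n : ℕ, z ^ n / ((Nat.factorial n : ℝ) * (Nat.factorial (n + 1) : ℝ))


namespace Telegraph

/-- Poisson-type term `e^{-lx}(lx)^k/k!`. -/
noncomputable def pp (l : ℝ) (k : ℕ) (x : ℝ) : ℝ :=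
  Real.exp (-(l * x)) * (l * x) ^ k / (Nat.factorial k : ℝ)

/-- Poisson tail `P(Pois(lx) > k)`. -/
noncomputable def TT (l : ℝ) : ℕ → ℝ → ℝ
  | 0 => fun x => 1 - Real.exp (-(l * x))
  | (k+1) => fun x => TT l k x - pp l (k+1) x

lemma continuous_pp (l : ℝ) (k : ℕ) : Continuous (pp l k) := by
  unfold pp; fun_prop

lemma continuous_TT (l : ℝ) (k : ℕ) : Continuous (TT l k) := by
  induction k with
  | zero =>
      have : TT l 0 = fun x => 1 - Real.exp (-(l * x)) := rfl
      rw [this]; fun_prop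
  | succ k ih =>
      have : TT l (k+1) = fun x => TT l k x - pp l (k+1) x := rfl
      rw [this]; exact ih.sub (continuous_pp l (k+1))

lemma pp_nonneg {l x : ℝ} (h : 0 ≤ l * x) (k : ℕ) : 0 ≤ pp l k x :=
  div_nonneg (mul_nonneg (Real.exp_pos _).le (pow_nonneg h k)) (Nat.cast_nonneg _)

lemma pp_le {l x y : ℝ} (h0 : 0 ≤ l * x) (hxy : l * x ≤ l * y) (k : ℕ) :
    pp l k x ≤ (l * y) ^ k / (Nat.factorial k : ℝ) := by
  have h1 : Real.exp (-(l * x)) ≤ 1 := by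
    rw [← Real.exp_zero]; exact Real.exp_le_exp.mpr (by linarith)
  have h2 : (l * x) ^ k ≤ (l * y) ^ k := pow_le_pow_left₀ h0 hxy k
  have h3 : (0:ℝ) < (Nat.factorial k : ℝ) := by exact_mod_cast Nat.factorial_pos k
  unfold pp
  have h4 : Real.exp (-(l * x)) * (l * x) ^ k ≤ (l * y) ^ k := by
    calc Real.exp (-(l * x)) * (l * x) ^ k ≤ 1 * (l * x) ^ k :=
          mul_le_mul_of_nonneg_right h1 (pow_nonneg h0 k)
      _ = (l * x) ^ k := one_mul _
      _ ≤ (l * y) ^ k := h2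
  exact (div_le_div_iff_of_pos_right h3).mpr h4

lemma hasDerivAt_pp_zero (l x : ℝ) : HasDerivAt (pp l 0) (-(l * pp l 0 x)) x := by
  have hpp : pp l 0 = fun y => Real.exp (-(l * y)) := by
    funext y; simp [pp]
  have hlin : HasDerivAt (fun y : ℝ => l * y) l x := by
    simpa using (hasDerivAt_id x).const_mul l
  have := hlin.neg.exp
  rw [hpp]
  refine this.congr_deriv ?_
  simp [pp]; ring

lemma hasDerivAt_pp_succ (l : ℝ) (k : ℕ) (x : ℝ) :
    HasDerivAt (pp l (k+1)) (l * (pp l k x - pp l (k+1) x)) x := by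
  have hlin : HasDerivAt (fun y : ℝ => l * y) l x := by
    simpa using (hasDerivAt_id x).const_mul l
  have hexp : HasDerivAt (fun y : ℝ => Real.exp (-(l * y))) (Real.exp (-(l * x)) * (-l)) x := by
    simpa using hlin.neg.exp
  have hpow : HasDerivAt (fun y : ℝ => (l * y) ^ (k+1)) (((k:ℝ)+1) * (l * x) ^ k * l) x := by
    simpa using hlin.fun_pow (k+1)
  have hmul := (hexp.mul hpow).div_const ((Nat.factorial (k+1) : ℝ))
  have hpp : pp l (k+1) = fun y =>
      (Real.exp (-(l * y)) * (l * y) ^ (k+1)) / (Nat.factorial (k+1) : ℝ) := by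
    funext y; simp [pp]
  rw [hpp]
  refine hmul.congr_deriv ?_
  have hk : (Nat.factorial k : ℝ) ≠ 0 := by exact_mod_cast (Nat.factorial_pos k).ne'
  have hfs : ((Nat.factorial (k+1) : ℝ)) = ((k:ℝ)+1) * (Nat.factorial k : ℝ) := by
    rw [Nat.factorial_succ]; push_cast; ring
  unfold pp
  rw [hfs]
  field_simp
  ring


lemma hasDerivAt_TT (l : ℝ) (k : ℕ) (x : ℝ) :
    HasDerivAt (TT l k) (l * pp l k x) x := by
  induction k with
  | zero =>
      have hlin : HasDerivAt (fun y : ℝ => l * y) l x := by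
        simpa using (hasDerivAt_id x).const_mul l
      have h := (hlin.neg.exp).const_sub 1
      have hT : TT l 0 = fun y => 1 - Real.exp (-(l * y)) := rfl
      rw [hT]
      refine h.congr_deriv ?_
      simp [pp]; ring
  | succ k ih =>
      have h := ih.sub (hasDerivAt_pp_succ l k x)
      have hT : TT l (k+1) = fun y => TT l k y - pp l (k+1) y := rfl
      rw [hT]
      refine h.congr_deriv ?_
      ring

lemma TT_zero_eval (l : ℝ) (k : ℕ) : TT l k 0 = 0 := by
  induction k with
  | zero => simp [TT]
  | succ k ih => simp [TT, ih, pp]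

lemma TT_eq (l : ℝ) (k : ℕ) (x : ℝ) :
    TT l k x = 1 - Real.exp (-(l * x)) *
      ∑ j ∈ Finset.range (k+1), (l * x) ^ j / (Nat.factorial j : ℝ) := by
  induction k with
  | zero => simp [TT]
  | succ k ih =>
      rw [show TT l (k+1) x = TT l k x - pp l (k+1) x from rfl, ih]
      conv_rhs => rw [Finset.sum_range_succ]
      unfold pp; ring

lemma TT_nonneg {l x : ℝ} (h : 0 ≤ l * x) (k : ℕ) : 0 ≤ TT l k x := by
  rw [TT_eq]
  have hs := Real.sum_le_exp_of_nonneg h (k+1)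
  have h2 : Real.exp (-(l * x)) * (∑ j ∈ Finset.range (k+1), (l * x) ^ j / (Nat.factorial j : ℝ))
      ≤ Real.exp (-(l * x)) * Real.exp (l * x) :=
    mul_le_mul_of_nonneg_left hs (Real.exp_pos _).le
  rw [← Real.exp_add] at h2
  simp at h2
  linarith

lemma TT_le_one {l x : ℝ} (h : 0 ≤ l * x) (k : ℕ) : TT l k x ≤ 1 := by
  rw [TT_eq]
  have : 0 ≤ Real.exp (-(l * x)) *
      ∑ j ∈ Finset.range (k+1), (l * x) ^ j / (Nat.factorial j : ℝ) :=
    mul_nonneg (Real.exp_pos _).le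
      (Finset.sum_nonneg fun j _ => div_nonneg (pow_nonneg h j) (Nat.cast_nonneg _))
  linarith


/-- the `k`-th term of the series for the density. -/
noncomputable def hkf (l0 l1 t : ℝ) (k : ℕ) (u : ℝ) : ℝ :=
  l0 * pp l1 k (t - u) * pp l0 k u + l1 * pp l1 k (t - u) * pp l0 (k+1) u

noncomputable def Qf (l0 l1 t : ℝ) (k : ℕ) (u : ℝ) : ℝ := pp l1 k (t - u) * TT l0 k u

noncomputable def mf (l0 l1 t : ℝ) (k : ℕ) (u : ℝ) : ℝ :=
  l1 * pp l1 k (t - u) * TT l0 (k+1) u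

lemma continuous_hkf (l0 l1 t : ℝ) (k : ℕ) : Continuous (hkf l0 l1 t k) := by
  unfold hkf
  have h1 : Continuous (fun u : ℝ => pp l1 k (t - u)) :=
    (continuous_pp l1 k).comp (continuous_const.sub continuous_id)
  exact ((continuous_const.mul h1).mul (continuous_pp l0 k)).add
    ((continuous_const.mul h1).mul (continuous_pp l0 (k+1)))

lemma continuous_mf (l0 l1 t : ℝ) (k : ℕ) : Continuous (mf l0 l1 t k) := by
  unfold mf
  have h1 : Continuous (fun u : ℝ => pp l1 k (t - u)) :=
    (continuous_pp l1 k).comp (continuous_const.sub continuous_id)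
  exact (continuous_const.mul h1).mul (continuous_TT l0 (k+1))

lemma hasDerivAt_ppc_zero (l t u : ℝ) :
    HasDerivAt (fun u => pp l 0 (t - u)) (l * pp l 0 (t - u)) u := by
  have hsub : HasDerivAt (fun u : ℝ => t - u) (-1) u := by
    simpa using (hasDerivAt_id u).const_sub t
  have := (hasDerivAt_pp_zero l (t - u)).comp u hsub
  refine this.congr_deriv ?_
  ring

lemma hasDerivAt_ppc_succ (l t : ℝ) (k : ℕ) (u : ℝ) :
    HasDerivAt (fun u => pp l (k+1) (t - u))
      (l * (pp l (k+1) (t - u) - pp l k (t - u))) u := by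
  have hsub : HasDerivAt (fun u : ℝ => t - u) (-1) u := by
    simpa using (hasDerivAt_id u).const_sub t
  have := (hasDerivAt_pp_succ l k (t - u)).comp u hsub
  refine this.congr_deriv ?_
  ring

lemma hasDerivAt_Qf_zero (l0 l1 t u : ℝ) :
    HasDerivAt (Qf l0 l1 t 0) (hkf l0 l1 t 0 u + mf l0 l1 t 0 u) u := by
  have h := (hasDerivAt_ppc_zero l1 t u).mul (hasDerivAt_TT l0 0 u)
  have hQ : Qf l0 l1 t 0 = fun u => pp l1 0 (t - u) * TT l0 0 u := rfl
  rw [hQ]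
  refine h.congr_deriv ?_
  have hT : TT l0 1 u = TT l0 0 u - pp l0 1 u := rfl
  unfold hkf mf
  rw [hT]
  ring

lemma hasDerivAt_Qf_succ (l0 l1 t : ℝ) (k : ℕ) (u : ℝ) :
    HasDerivAt (Qf l0 l1 t (k+1))
      (hkf l0 l1 t (k+1) u + mf l0 l1 t (k+1) u - mf l0 l1 t k u) u := by
  have h := (hasDerivAt_ppc_succ l1 t k u).mul (hasDerivAt_TT l0 (k+1) u)
  have hQ : Qf l0 l1 t (k+1) = fun u => pp l1 (k+1) (t - u) * TT l0 (k+1) u := rfl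
  rw [hQ]
  refine h.congr_deriv ?_
  have hT : TT l0 (k+2) u = TT l0 (k+1) u - pp l0 (k+2) u := rfl
  unfold hkf mf
  rw [hT]
  ring

lemma Qf_at_t_zero (l0 l1 t : ℝ) : Qf l0 l1 t 0 t = 1 - Real.exp (-(l0 * t)) := by
  unfold Qf
  simp [pp, TT]

lemma Qf_at_t_succ (l0 l1 t : ℝ) (k : ℕ) : Qf l0 l1 t (k+1) t = 0 := by
  unfold Qf
  simp [pp]

lemma Qf_at_zero (l0 l1 t : ℝ) (k : ℕ) : Qf l0 l1 t k 0 = 0 := by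
  unfold Qf
  simp [TT_zero_eval]


lemma one_le_factorial (k : ℕ) : (1:ℝ) ≤ (Nat.factorial k : ℝ) := by
  exact_mod_cast Nat.one_le_iff_ne_zero.mpr (Nat.factorial_pos k).ne'

lemma summable_I0 (z : ℝ) : Summable (fun k : ℕ => z ^ k / (Nat.factorial k : ℝ) ^ 2) := by
  apply Summable.of_norm_bounded (Real.summable_pow_div_factorial |z|)
  intro k
  have h1 := one_le_factorial k
  rw [norm_div, norm_pow, norm_pow, Real.norm_eq_abs, Real.norm_eq_abs,
    abs_of_nonneg (by positivity : (0:ℝ) ≤ (Nat.factorial k : ℝ))]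
  gcongr
  nlinarith

lemma summable_I1 (z : ℝ) :
    Summable (fun k : ℕ => z ^ k / ((Nat.factorial k : ℝ) * (Nat.factorial (k + 1) : ℝ))) := by
  apply Summable.of_norm_bounded (Real.summable_pow_div_factorial |z|)
  intro k
  have h1 := one_le_factorial k
  have h2 := one_le_factorial (k+1)
  rw [norm_div, norm_pow, Real.norm_eq_abs, Real.norm_eq_abs,
    abs_of_nonneg (by positivity : (0:ℝ) ≤ (Nat.factorial k : ℝ) * (Nat.factorial (k+1) : ℝ))]
  gcongr
  nlinarith

lemma hkf_eq (l0 l1 t : ℝ) (k : ℕ) (u : ℝ) :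
    hkf l0 l1 t k u =
      (l0 * Real.exp (-(l0 * u) - l1 * (t - u))) *
        ((l0 * l1 * u * (t - u)) ^ k / (Nat.factorial k : ℝ) ^ 2) +
      (l0 * l1 * u * Real.exp (-(l0 * u) - l1 * (t - u))) *
        ((l0 * l1 * u * (t - u)) ^ k /
          ((Nat.factorial k : ℝ) * (Nat.factorial (k + 1) : ℝ))) := by
  have hexp : Real.exp (-(l0 * u) - l1 * (t - u)) =
      Real.exp (-(l1 * (t - u))) * Real.exp (-(l0 * u)) := by
    rw [← Real.exp_add]; ring_nf
  have hz : (l0 * l1 * u * (t - u)) ^ k = (l1 * (t - u)) ^ k * (l0 * u) ^ k := by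
    rw [← mul_pow]; ring_nf
  have hk : (Nat.factorial k : ℝ) ≠ 0 := by positivity
  have hk1 : (Nat.factorial (k+1) : ℝ) ≠ 0 := by positivity
  have hfs : ((Nat.factorial (k+1) : ℝ)) = ((k:ℝ)+1) * (Nat.factorial k : ℝ) := by
    rw [Nat.factorial_succ]; push_cast; ring
  unfold hkf pp
  rw [hexp, hz, hfs, pow_succ]
  have hk2 : ((k:ℝ)+1) ≠ 0 := by positivity
  field_simp

lemma tsum_hkf (l0 l1 t u : ℝ) :
    ∑' k, hkf l0 l1 t k u =
      l0 * (calI0 (l0 * l1 * u * (t - u)) + l1 * u * calI1 (l0 * l1 * u * (t - u))) *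
        Real.exp (-(l0 * u) - l1 * (t - u)) := by
  set z := l0 * l1 * u * (t - u) with hzdef
  set E := Real.exp (-(l0 * u) - l1 * (t - u)) with hEdef
  have h1 : Summable fun k : ℕ => (l0 * E) * (z ^ k / (Nat.factorial k : ℝ) ^ 2) :=
    (summable_I0 z).mul_left _
  have h2 : Summable fun k : ℕ =>
      (l0 * l1 * u * E) * (z ^ k / ((Nat.factorial k : ℝ) * (Nat.factorial (k + 1) : ℝ))) :=
    (summable_I1 z).mul_left _
  calc ∑' k, hkf l0 l1 t k u
      = ∑' k : ℕ, ((l0 * E) * (z ^ k / (Nat.factorial k : ℝ) ^ 2) +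
          (l0 * l1 * u * E) *
            (z ^ k / ((Nat.factorial k : ℝ) * (Nat.factorial (k + 1) : ℝ)))) :=
        tsum_congr fun k => hkf_eq l0 l1 t k u
    _ = (l0 * E) * calI0 z + (l0 * l1 * u * E) * calI1 z := by
        rw [Summable.tsum_add h1 h2, tsum_mul_left, tsum_mul_left]
        rfl
    _ = l0 * (calI0 z + l1 * u * calI1 z) * E := by ring


section

variable {l0 l1 t : ℝ} (hl0 : 0 < l0) (hl1 : 0 < l1) (ht : 0 < t)

lemma integral_hkf_zero :
    ∫ u in (0:ℝ)..t, hkf l0 l1 t 0 u =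
      (1 - Real.exp (-(l0 * t))) - ∫ u in (0:ℝ)..t, mf l0 l1 t 0 u := by
  have hftc := intervalIntegral.integral_eq_sub_of_hasDerivAt
    (f := Qf l0 l1 t 0) (f' := fun u => hkf l0 l1 t 0 u + mf l0 l1 t 0 u)
    (a := 0) (b := t) (fun u _ => hasDerivAt_Qf_zero l0 l1 t u)
    (((continuous_hkf l0 l1 t 0).add (continuous_mf l0 l1 t 0)).intervalIntegrable 0 t)
  rw [intervalIntegral.integral_add ((continuous_hkf l0 l1 t 0).intervalIntegrable 0 t)
    ((continuous_mf l0 l1 t 0).intervalIntegrable 0 t)] at hftc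
  rw [Qf_at_t_zero, Qf_at_zero] at hftc
  linarith

lemma integral_hkf_succ (k : ℕ) :
    ∫ u in (0:ℝ)..t, hkf l0 l1 t (k+1) u =
      (∫ u in (0:ℝ)..t, mf l0 l1 t k u) - ∫ u in (0:ℝ)..t, mf l0 l1 t (k+1) u := by
  have hftc := intervalIntegral.integral_eq_sub_of_hasDerivAt
    (f := Qf l0 l1 t (k+1))
    (f' := fun u => hkf l0 l1 t (k+1) u + mf l0 l1 t (k+1) u - mf l0 l1 t k u)
    (a := 0) (b := t) (fun u _ => hasDerivAt_Qf_succ l0 l1 t k u)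
    ((((continuous_hkf l0 l1 t (k+1)).add (continuous_mf l0 l1 t (k+1))).sub
      (continuous_mf l0 l1 t k)).intervalIntegrable 0 t)
  rw [intervalIntegral.integral_sub (f := fun u => hkf l0 l1 t (k+1) u + mf l0 l1 t (k+1) u) (((continuous_hkf l0 l1 t (k+1)).add
        (continuous_mf l0 l1 t (k+1))).intervalIntegrable 0 t)
      ((continuous_mf l0 l1 t k).intervalIntegrable 0 t),
    intervalIntegral.integral_add ((continuous_hkf l0 l1 t (k+1)).intervalIntegrable 0 t)
      ((continuous_mf l0 l1 t (k+1)).intervalIntegrable 0 t)] at hftc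
  rw [Qf_at_t_succ, Qf_at_zero] at hftc
  linarith

set_option linter.unusedSectionVars false in
lemma sum_integral_hkf (N : ℕ) :
    ∑ k ∈ Finset.range (N+1), ∫ u in (0:ℝ)..t, hkf l0 l1 t k u =
      (1 - Real.exp (-(l0 * t))) - ∫ u in (0:ℝ)..t, mf l0 l1 t N u := by
  induction N with
  | zero => simpa using integral_hkf_zero (l0 := l0) (l1 := l1) (t := t)
  | succ N ih =>
      rw [Finset.sum_range_succ, ih, integral_hkf_succ]
      ring

include hl0 hl1 ht in
lemma mf_integral_nonneg (k : ℕ) : 0 ≤ ∫ u in (0:ℝ)..t, mf l0 l1 t k u := by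
  apply intervalIntegral.integral_nonneg ht.le
  intro u hu
  have h1 : 0 ≤ l1 * (t - u) := mul_nonneg hl1.le (by linarith [hu.2])
  have h2 : 0 ≤ l0 * u := mul_nonneg hl0.le hu.1
  exact mul_nonneg (mul_nonneg hl1.le (pp_nonneg h1 k)) (TT_nonneg h2 (k+1))

include hl0 hl1 ht in
lemma mf_integral_le (k : ℕ) :
    ∫ u in (0:ℝ)..t, mf l0 l1 t k u ≤ t * (l1 * ((l1*t)^k / (Nat.factorial k : ℝ))) := by
  have hb : ∀ u ∈ Set.Icc (0:ℝ) t, mf l0 l1 t k u ≤ l1 * ((l1*t)^k / (Nat.factorial k : ℝ)) := by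
    intro u hu
    have h1 : 0 ≤ l1 * (t - u) := mul_nonneg hl1.le (by linarith [hu.2])
    have h2 : 0 ≤ l0 * u := mul_nonneg hl0.le hu.1
    have h3 : l1 * (t - u) ≤ l1 * t := by nlinarith [hu.1]
    have h4 := pp_le h1 h3 k
    have h5 := TT_le_one h2 (k+1)
    have h6 := TT_nonneg h2 (k+1)
    have h7 := pp_nonneg h1 k
    unfold mf
    calc l1 * pp l1 k (t - u) * TT l0 (k+1) u ≤ l1 * pp l1 k (t - u) * 1 :=
          mul_le_mul_of_nonneg_left h5 (mul_nonneg hl1.le h7)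
      _ = l1 * pp l1 k (t - u) := mul_one _
      _ ≤ l1 * ((l1*t)^k / (Nat.factorial k : ℝ)) :=
          mul_le_mul_of_nonneg_left h4 hl1.le
  calc ∫ u in (0:ℝ)..t, mf l0 l1 t k u
      ≤ ∫ _u in (0:ℝ)..t, l1 * ((l1*t)^k / (Nat.factorial k : ℝ)) := by
        apply intervalIntegral.integral_mono_on ht.le
          ((continuous_mf l0 l1 t k).intervalIntegrable 0 t)
          (intervalIntegrable_const) hb
    _ = t * (l1 * ((l1*t)^k / (Nat.factorial k : ℝ))) := by
        simp; ring

include hl0 hl1 ht in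
lemma tendsto_mf_integral :
    Tendsto (fun k => ∫ u in (0:ℝ)..t, mf l0 l1 t k u) atTop (nhds 0) := by
  apply squeeze_zero (fun k => mf_integral_nonneg hl0 hl1 ht k)
    (fun k => mf_integral_le hl0 hl1 ht k)
  have := (FloorSemiring.tendsto_pow_div_factorial_atTop (l1*t)).const_mul (t * l1)
  simp only [mul_zero] at this
  convert this using 2 with k
  ring

include hl0 hl1 ht in
lemma hasSum_integral_hkf :
    HasSum (fun k => ∫ u in (0:ℝ)..t, hkf l0 l1 t k u) (1 - Real.exp (-(l0 * t))) := by
  have hnn : ∀ k, 0 ≤ ∫ u in (0:ℝ)..t, hkf l0 l1 t k u := by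
    intro k
    apply intervalIntegral.integral_nonneg ht.le
    intro u hu
    have h1 : 0 ≤ l1 * (t - u) := mul_nonneg hl1.le (by linarith [hu.2])
    have h2 : 0 ≤ l0 * u := mul_nonneg hl0.le hu.1
    unfold hkf
    have := pp_nonneg h1 k
    have := pp_nonneg h2 k
    have := pp_nonneg h2 (k+1)
    positivity
  rw [hasSum_iff_tendsto_nat_of_nonneg hnn]
  have h1 : Tendsto (fun N : ℕ => ∑ k ∈ Finset.range (N+1), ∫ u in (0:ℝ)..t, hkf l0 l1 t k u)
      atTop (nhds (1 - Real.exp (-(l0 * t)))) := by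
    simp only [sum_integral_hkf]
    simpa using tendsto_const_nhds.sub (tendsto_mf_integral hl0 hl1 ht)
  exact (tendsto_add_atTop_iff_nat 1).mp h1

end

section
variable {l0 l1 t : ℝ} (hl0 : 0 < l0) (hl1 : 0 < l1) (ht : 0 < t)

/-- uniform bound for `hkf k` on `[0, t]`. -/
noncomputable def Bk (l0 l1 t : ℝ) (k : ℕ) : ℝ :=
  l0 * ((l1*t)^k / (Nat.factorial k : ℝ)) * ((l0*t)^k / (Nat.factorial k : ℝ)) +
  l1 * ((l1*t)^k / (Nat.factorial k : ℝ)) * ((l0*t)^(k+1) / (Nat.factorial (k+1) : ℝ))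

include hl0 hl1 ht in
lemma hkf_le_Bk (k : ℕ) {u : ℝ} (hu : u ∈ Set.Icc (0:ℝ) t) :
    |hkf l0 l1 t k u| ≤ Bk l0 l1 t k := by
  have h1 : 0 ≤ l1 * (t - u) := mul_nonneg hl1.le (by linarith [hu.2])
  have h2 : 0 ≤ l0 * u := mul_nonneg hl0.le hu.1
  have h3 : l1 * (t - u) ≤ l1 * t := by nlinarith [hu.1]
  have h4 : l0 * u ≤ l0 * t := by nlinarith [hu.2]
  have hP := pp_le h1 h3 k
  have hp := pp_le h2 h4 k
  have hp1 := pp_le h2 h4 (k+1)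
  have hPn := pp_nonneg h1 k
  have hpn := pp_nonneg h2 k
  have hp1n := pp_nonneg h2 (k+1)
  have hnn : 0 ≤ hkf l0 l1 t k u := by
    unfold hkf; positivity
  rw [abs_of_nonneg hnn]
  unfold hkf Bk
  have hb1 : (0:ℝ) ≤ (l1*t)^k / (Nat.factorial k : ℝ) := le_trans hPn hP
  have hb2 : (0:ℝ) ≤ (l0*t)^k / (Nat.factorial k : ℝ) := le_trans hpn hp
  have hb3 : (0:ℝ) ≤ (l0*t)^(k+1) / (Nat.factorial (k+1) : ℝ) := le_trans hp1n hp1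
  gcongr <;> first | exact hl0.le | exact hl1.le | positivity

include hl0 hl1 ht in
lemma summable_Bk : Summable (Bk l0 l1 t) := by
  have hC : Summable (fun k : ℕ => (l0 + l1 * (l0 * t)) * ((l0*l1*t*t)^k / (Nat.factorial k : ℝ))) :=
    (Real.summable_pow_div_factorial (l0*l1*t*t)).mul_left _
  apply Summable.of_nonneg_of_le ?_ ?_ hC
  · intro k
    unfold Bk
    positivity
  · intro k
    unfold Bk
    have h1 := one_le_factorial k
    have h2 : (Nat.factorial k : ℝ) ≤ (Nat.factorial (k+1) : ℝ) := by
      exact_mod_cast Nat.factorial_le (Nat.le_succ k)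
    have hfk : (0:ℝ) < (Nat.factorial k : ℝ) := by positivity
    have hfk1 : (0:ℝ) < (Nat.factorial (k+1) : ℝ) := by positivity
    have key1 : (l1*t)^k / (Nat.factorial k : ℝ) * ((l0*t)^k / (Nat.factorial k : ℝ))
        ≤ (l0*l1*t*t)^k / (Nat.factorial k : ℝ) := by
      have : (l1*t)^k * (l0*t)^k = (l0*l1*t*t)^k := by rw [← mul_pow]; ring_nf
      rw [div_mul_div_comm, this]
      gcongr
      nlinarith
    have key2 : (l1*t)^k / (Nat.factorial k : ℝ) * ((l0*t)^(k+1) / (Nat.factorial (k+1) : ℝ))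
        ≤ (l0*t) * ((l0*l1*t*t)^k / (Nat.factorial k : ℝ)) := by
      have hpow : (l1*t)^k * (l0*t)^(k+1) = (l0*t) * (l0*l1*t*t)^k := by
        rw [show l0*l1*t*t = (l1*t)*(l0*t) from by ring, mul_pow, pow_succ]; ring
      rw [div_mul_div_comm, hpow]
      rw [mul_div_assoc]
      gcongr
      nlinarith
    calc l0 * ((l1*t)^k / (Nat.factorial k : ℝ)) * ((l0*t)^k / (Nat.factorial k : ℝ)) +
          l1 * ((l1*t)^k / (Nat.factorial k : ℝ)) * ((l0*t)^(k+1) / (Nat.factorial (k+1) : ℝ))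
        ≤ l0 * ((l0*l1*t*t)^k / (Nat.factorial k : ℝ)) +
          l1 * ((l0*t) * ((l0*l1*t*t)^k / (Nat.factorial k : ℝ))) := by
          have e1 : l0 * ((l1*t)^k / (Nat.factorial k : ℝ)) * ((l0*t)^k / (Nat.factorial k : ℝ))
              = l0 * ((l1*t)^k / (Nat.factorial k : ℝ) * ((l0*t)^k / (Nat.factorial k : ℝ))) := by ring
          have e2 : l1 * ((l1*t)^k / (Nat.factorial k : ℝ)) * ((l0*t)^(k+1) / (Nat.factorial (k+1) : ℝ))
              = l1 * ((l1*t)^k / (Nat.factorial k : ℝ) * ((l0*t)^(k+1) / (Nat.factorial (k+1) : ℝ))) := by ring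
          rw [e1, e2]
          exact add_le_add (mul_le_mul_of_nonneg_left key1 hl0.le)
            (mul_le_mul_of_nonneg_left key2 hl1.le)
      _ = (l0 + l1 * (l0 * t)) * ((l0*l1*t*t)^k / (Nat.factorial k : ℝ)) := by ring

include hl0 hl1 ht in
lemma integral_swap_hkf :
    ∫ u in Set.Ioc (0:ℝ) t, (∑' k, hkf l0 l1 t k u) =
      ∑' k, ∫ u in Set.Ioc (0:ℝ) t, hkf l0 l1 t k u := by
  apply MeasureTheory.integral_tsum
  · exact fun k => (continuous_hkf l0 l1 t k).aestronglyMeasurable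
  · have hbound : ∀ k : ℕ, (∫⁻ u in Set.Ioc (0:ℝ) t, ‖hkf l0 l1 t k u‖₊) ≤
        ENNReal.ofReal (Bk l0 l1 t k) * ENNReal.ofReal t := by
      intro k
      calc (∫⁻ u in Set.Ioc (0:ℝ) t, ‖hkf l0 l1 t k u‖₊)
          ≤ ∫⁻ _u in Set.Ioc (0:ℝ) t, ENNReal.ofReal (Bk l0 l1 t k) := by
            apply setLIntegral_mono measurable_const
            intro u hu
            rw [← enorm_eq_nnnorm, Real.enorm_eq_ofReal_abs]
            exact ENNReal.ofReal_le_ofReal (hkf_le_Bk hl0 hl1 ht k (Set.mem_Icc_of_Ioc hu))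
        _ = ENNReal.ofReal (Bk l0 l1 t k) * volume (Set.Ioc (0:ℝ) t) := setLIntegral_const _ _
        _ = ENNReal.ofReal (Bk l0 l1 t k) * ENNReal.ofReal t := by
            rw [Real.volume_Ioc, sub_zero]
    apply ne_top_of_le_ne_top ?_ (ENNReal.tsum_le_tsum hbound)
    rw [ENNReal.tsum_mul_right, ← ENNReal.ofReal_tsum_of_nonneg
      (fun k => by unfold Bk; positivity) (summable_Bk hl0 hl1 ht)]
    exact ENNReal.mul_ne_top ENNReal.ofReal_ne_top ENNReal.ofReal_ne_top

include hl0 hl1 ht in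
lemma key_integral :
    ∫ u in (0:ℝ)..t,
      l0 * (calI0 (l0 * l1 * u * (t - u)) + l1 * u * calI1 (l0 * l1 * u * (t - u))) *
        Real.exp (-(l0 * u) - l1 * (t - u)) = 1 - Real.exp (-(l0 * t)) := by
  have h1 : ∀ u : ℝ,
      l0 * (calI0 (l0 * l1 * u * (t - u)) + l1 * u * calI1 (l0 * l1 * u * (t - u))) *
        Real.exp (-(l0 * u) - l1 * (t - u)) = ∑' k, hkf l0 l1 t k u :=
    fun u => (tsum_hkf l0 l1 t u).symm
  simp_rw [h1]
  rw [intervalIntegral.integral_of_le ht.le, integral_swap_hkf hl0 hl1 ht]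
  have h2 : ∀ k : ℕ, ∫ u in Set.Ioc (0:ℝ) t, hkf l0 l1 t k u =
      ∫ u in (0:ℝ)..t, hkf l0 l1 t k u :=
    fun k => (intervalIntegral.integral_of_le ht.le).symm
  simp_rw [h2]
  exact (hasSum_integral_hkf hl0 hl1 ht).tsum_eq

end

end Telegraph

/-- the distribution of Γ(t) started from state 0 (atom of mass `e^{−λ₀t}`
at `γ₀t` plus the absolutely continuous part) has total mass 1. -/
theorem telegraph_distribution_state0_total_mass (l0 l1 g0 g1 t : ℝ)
    (hl0 : 0 < l0) (hl1 : 0 < l1) (hg : g1 < g0) (ht : 0 < t) :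
    Real.exp (-(l0 * t)) +
      ∫ x in (g1 * t)..(g0 * t),
        l0 * (calI0 (zf l0 l1 g0 g1 t x) +
              l1 * xi0 g0 g1 t x * calI1 (zf l0 l1 g0 g1 t x)) *
          thetaf l0 l1 g0 g1 t x
      = 1 := by
  have hc : (0:ℝ) < g0 - g1 := by linarith
  have hc' : g0 - g1 ≠ 0 := hc.ne'
  set F : ℝ → ℝ := fun x =>
    l0 * (calI0 (zf l0 l1 g0 g1 t x) +
          l1 * xi0 g0 g1 t x * calI1 (zf l0 l1 g0 g1 t x)) *
      thetaf l0 l1 g0 g1 t x with hF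
  have hsub : ∀ u : ℝ, F ((g0 - g1) * u + g1 * t) =
      (l0 * (calI0 (l0 * l1 * u * (t - u)) + l1 * u * calI1 (l0 * l1 * u * (t - u))) *
        Real.exp (-(l0 * u) - l1 * (t - u))) / (g0 - g1) := by
    intro u
    have h0 : xi0 g0 g1 t ((g0 - g1) * u + g1 * t) = u := by
      unfold xi0; field_simp; ring
    have h1 : xi1 g0 g1 t ((g0 - g1) * u + g1 * t) = t - u := by
      unfold xi1
      rw [show g0 * t - ((g0 - g1) * u + g1 * t) = (g0 - g1) * (t - u) by ring]
      field_simp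
    rw [hF]
    simp only [zf, thetaf, h0, h1]
    ring
  have h2 : ((g0 - g1) : ℝ) • (∫ u in (0:ℝ)..t, F ((g0 - g1) * u + g1 * t)) =
      ∫ x in (g1 * t)..(g0 * t), F x := by
    rw [intervalIntegral.smul_integral_comp_mul_add]
    congr 1 <;> ring
  have h3 : ((g0 - g1) : ℝ) • (∫ u in (0:ℝ)..t, F ((g0 - g1) * u + g1 * t)) =
      1 - Real.exp (-(l0 * t)) := by
    rw [smul_eq_mul, ← intervalIntegral.integral_const_mul]
    have h4 : ∀ u : ℝ, (g0 - g1) * F ((g0 - g1) * u + g1 * t) =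
        l0 * (calI0 (l0 * l1 * u * (t - u)) + l1 * u * calI1 (l0 * l1 * u * (t - u))) *
          Real.exp (-(l0 * u) - l1 * (t - u)) := by
      intro u
      rw [hsub u]
      field_simp
    simp_rw [h4]
    exact Telegraph.key_integral hl0 hl1 ht
  show Real.exp (-(l0 * t)) + ∫ x in (g1 * t)..(g0 * t), F x = 1
  rw [← h2, h3]
  ring
end

section
/- Let λ0, λ1 > 0, γ0 > γ1 and t > 0. Then e^{−λ1·t} + ∫_{γ1·t}^{γ0·t} λ1·(ℐ0(z(t,x)) + λ0·ξ1(t,x)·ℐ1(z(t,x)))·θ(t,x) dx = 1. (This says that the distribution of the telegraph particle position Γ(t) started from state 1 — an atom of mass e^{−λ1·t} at x = γ1·t plus the absolutely continuous part with the stated density on (γ1·t, γ0·t) — is a probability distribution.) -/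
open Real Filter MeasureTheory

lemma summable_coef (c : ℕ → ℝ) (C A : ℝ) (hA : 0 ≤ A)
    (hc : ∀ n, |c n| ≤ C * A ^ n / (Nat.factorial n : ℝ)) (z : ℝ) :
    Summable (fun n => c n * z ^ n) := by
  apply Summable.of_norm
  refine Summable.of_nonneg_of_le (fun n => norm_nonneg _) (fun n => ?_)
    (((Real.summable_pow_div_factorial (A * |z|))).mul_left C)
  have h1 : ‖c n * z ^ n‖ = |c n| * |z| ^ n := by
    rw [Real.norm_eq_abs, abs_mul, abs_pow]
  rw [h1]
  have h2 : |c n| * |z| ^ n ≤ C * A ^ n / (Nat.factorial n : ℝ) * |z| ^ n :=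
    mul_le_mul_of_nonneg_right (hc n) (by positivity)
  refine h2.trans (le_of_eq ?_)
  rw [mul_pow]
  ring

lemma hasDerivAt_psum (c : ℕ → ℝ) (C A : ℝ) (hC : 0 ≤ C) (hA : 0 ≤ A)
    (hc : ∀ n, |c n| ≤ C * A ^ n / (Nat.factorial n : ℝ)) (z : ℝ) :
    HasDerivAt (fun y => ∑' n, c n * y ^ n) (∑' n, (c (n + 1) * (n + 1)) * z ^ n) z := by
  set R : ℝ := |z| + 1 with hR
  have hR1 : (1:ℝ) ≤ R := by rw [hR]; linarith [abs_nonneg z]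
  have hR0 : (0:ℝ) < R := by linarith
  have hderivcoef : ∀ n, |c (n+1) * ((n:ℝ)+1)| ≤ (C * A) * A ^ n / (Nat.factorial n : ℝ) := by
    intro n
    rw [abs_mul]
    have h1 : |((n:ℝ)+1)| = ((n:ℝ)+1) := abs_of_nonneg (by positivity)
    rw [h1]
    calc |c (n+1)| * ((n:ℝ)+1) ≤ C * A ^ (n+1) / (Nat.factorial (n+1) : ℝ) * ((n:ℝ)+1) :=
          mul_le_mul_of_nonneg_right (hc (n+1)) (by positivity)
      _ = C * A * A ^ n / (Nat.factorial n : ℝ) := by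
          rw [Nat.factorial_succ]
          have hfn : (0:ℝ) < (Nat.factorial n : ℝ) := by positivity
          push_cast
          field_simp
          ring
  have key : HasDerivAt (fun y => ∑' n, c n * y ^ n)
      (∑' n, c n * (n * z ^ (n - 1))) z := by
    apply hasDerivAt_tsum_of_isPreconnected
      (u := fun n => C * (2 * (A + 1) * R) ^ n / (Nat.factorial n : ℝ))
      (g' := fun n x => c n * (n * x ^ (n - 1)))
      (((Real.summable_pow_div_factorial (2 * (A+1) * R)).mul_left C).congr
        (by intro n; simp [mul_div_assoc]))
      (Metric.isOpen_ball (x := (0:ℝ)) (ε := R))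
      ((convex_ball (0:ℝ) R).isPreconnected)
    · intro n x _
      exact (hasDerivAt_pow n x).const_mul (c n)
    · intro n x hx
      have hxR : |x| ≤ R := by
        have := Metric.mem_ball.mp hx
        rw [Real.dist_eq, sub_zero] at this
        linarith
      have h2 : (n:ℝ) ≤ 2 ^ n := by exact_mod_cast (Nat.lt_two_pow_self (n := n)).le
      have h3 : |x| ^ (n-1) ≤ R ^ n := by
        calc |x| ^ (n-1) ≤ R ^ (n-1) := pow_le_pow_left₀ (abs_nonneg x) hxR _
          _ ≤ R ^ n := pow_le_pow_right₀ hR1 (Nat.sub_le n 1)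
      have h1 : ‖c n * (↑n * x ^ (n - 1))‖ = |c n| * ((n:ℝ) * |x| ^ (n-1)) := by
        rw [Real.norm_eq_abs, abs_mul, abs_mul, abs_pow, Nat.abs_cast]
      rw [h1]
      calc |c n| * ((n:ℝ) * |x| ^ (n-1)) ≤ (C * A ^ n / (Nat.factorial n : ℝ)) * (2 ^ n * R ^ n) := by
            refine mul_le_mul (hc n) ?_ (by positivity) (by positivity)
            exact mul_le_mul h2 h3 (by positivity) (by positivity)
        _ ≤ C * (2 * (A + 1) * R) ^ n / (Nat.factorial n : ℝ) := by
            rw [div_mul_eq_mul_div, div_le_div_iff_of_pos_right (by positivity), mul_assoc]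
            refine mul_le_mul_of_nonneg_left ?_ hC
            rw [mul_pow, mul_pow]
            calc A ^ n * (2 ^ n * R ^ n) = 2 ^ n * A ^ n * R ^ n := by ring
              _ ≤ 2 ^ n * (A+1) ^ n * R ^ n := by
                  refine mul_le_mul_of_nonneg_right ?_ (by positivity)
                  exact mul_le_mul_of_nonneg_left (pow_le_pow_left₀ hA (by linarith) n) (by positivity)
    · exact Metric.mem_ball_self hR0
    · exact summable_coef c C A hA hc 0
    · rw [Metric.mem_ball, Real.dist_eq, sub_zero]
      linarith [le_abs_self z, neg_abs_le z, abs_nonneg z]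
  have hshift : (fun n => c (n+1) * (((n:ℕ)+1 : ℕ) * z ^ ((n+1) - 1))) =
      (fun n => (c (n+1) * ((n:ℝ)+1)) * z ^ n) := by
    funext n; push_cast; ring
  have hsum : Summable (fun n => c n * ((n:ℝ) * z ^ (n - 1))) := by
    rw [← summable_nat_add_iff 1]
    have : (fun n => c (n+1) * (((n+1 : ℕ):ℝ) * z ^ ((n+1) - 1))) =
        (fun n => (c (n+1) * ((n:ℝ)+1)) * z ^ n) := by
      funext n; push_cast; ring
    rw [this]
    exact summable_coef _ (C * A) A hA hderivcoef z
  have heq : (∑' n, c n * ((n:ℝ) * z ^ (n - 1))) = ∑' n, (c (n + 1) * ((n:ℝ) + 1)) * z ^ n := by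
    rw [Summable.tsum_eq_zero_add hsum]
    simp only [Nat.cast_zero, zero_mul, mul_zero, zero_add]
    apply tsum_congr
    intro n
    push_cast
    ring
  rw [← heq]
  exact key

lemma fact_pos (n : ℕ) : (0:ℝ) < (Nat.factorial n : ℝ) := by
  exact_mod_cast Nat.factorial_pos n

lemma fact_one_le (n : ℕ) : (1:ℝ) ≤ (Nat.factorial n : ℝ) := by
  exact_mod_cast Nat.one_le_iff_ne_zero.mpr (Nat.factorial_ne_zero n)

lemma calI0_comp_eq (a : ℝ) : (fun w => calI0 (a * w)) =
    (fun w => ∑' n, (a ^ n / ((Nat.factorial n : ℝ))^2) * w ^ n) := by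
  funext w
  exact tsum_congr fun n => by rw [mul_pow]; ring

lemma calI1_comp_eq (a : ℝ) : (fun w => calI1 (a * w)) =
    (fun w => ∑' n, (a ^ n / ((Nat.factorial n : ℝ) * (Nat.factorial (n+1) : ℝ))) * w ^ n) := by
  funext w
  exact tsum_congr fun n => by rw [mul_pow]; ring

lemma calI0_coef_bound (a : ℝ) :
    ∀ n, |a ^ n / ((Nat.factorial n : ℝ))^2| ≤ 1 * (|a|) ^ n / (Nat.factorial n : ℝ) := by
  intro n
  rw [abs_div, abs_pow, abs_pow, Nat.abs_cast, one_mul]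
  have h1 : (Nat.factorial n : ℝ) ≤ (Nat.factorial n : ℝ)^2 := by nlinarith [fact_one_le n]
  exact div_le_div_of_nonneg_left (by positivity) (fact_pos n) h1

lemma calI1_coef_bound (a : ℝ) :
    ∀ n, |a ^ n / ((Nat.factorial n : ℝ) * (Nat.factorial (n+1) : ℝ))| ≤ 1 * (|a|) ^ n / (Nat.factorial n : ℝ) := by
  intro n
  rw [abs_div, abs_pow, abs_mul, Nat.abs_cast, Nat.abs_cast, one_mul]
  have h1 : (Nat.factorial n : ℝ) ≤ (Nat.factorial n : ℝ) * (Nat.factorial (n+1) : ℝ) := by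
    nlinarith [fact_pos n, fact_one_le (n+1)]
  exact div_le_div_of_nonneg_left (by positivity) (fact_pos n) h1

lemma summable_calI0 (z : ℝ) : Summable (fun n : ℕ => z ^ n / (Nat.factorial n : ℝ) ^ 2) := by
  have := summable_coef _ 1 (|(1:ℝ)|) (abs_nonneg 1) (calI0_coef_bound 1) z
  refine this.congr fun n => ?_
  rw [one_pow]
  ring

lemma summable_calI1 (z : ℝ) :
    Summable (fun n : ℕ => z ^ n / ((Nat.factorial n : ℝ) * (Nat.factorial (n+1) : ℝ))) := by
  have := summable_coef _ 1 (|(1:ℝ)|) (abs_nonneg 1) (calI1_coef_bound 1) z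
  refine this.congr fun n => ?_
  rw [one_pow]
  ring

/-- `d/dw calI0 (a w) = a * calI1 (a w)` -/
lemma hasDerivAt_calI0_linear (a w : ℝ) :
    HasDerivAt (fun w => calI0 (a * w)) (a * calI1 (a * w)) w := by
  have hder : a * calI1 (a * w)
      = ∑' n, ((a ^ (n+1) / ((Nat.factorial (n+1) : ℝ))^2) * ((n:ℝ)+1)) * w ^ n := by
    unfold calI1
    rw [← tsum_mul_left]
    exact tsum_congr fun n => by
      rw [Nat.factorial_succ, mul_pow]
      have := fact_pos n
      push_cast
      field_simp
      ring
  rw [calI0_comp_eq a, hder]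
  exact hasDerivAt_psum _ 1 (|a|) one_pos.le (abs_nonneg a) (calI0_coef_bound a) w

/-- `d/dw (w * calI1 (a w)) = calI0 (a w)` -/
lemma hasDerivAt_mul_calI1 (a w : ℝ) :
    HasDerivAt (fun w => w * calI1 (a * w)) (calI0 (a * w)) w := by
  set c : ℕ → ℝ := fun n => match n with
    | 0 => 0
    | (m+1) => a ^ m / ((Nat.factorial m : ℝ) * (Nat.factorial (m+1) : ℝ)) with hc
  have hbound : ∀ n, |c n| ≤ 1 * (|a| + 1) ^ n / (Nat.factorial n : ℝ) := by
    intro n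
    match n with
    | 0 => simp [hc]
    | (m+1) =>
      show |a ^ m / ((Nat.factorial m : ℝ) * (Nat.factorial (m+1) : ℝ))| ≤ _
      rw [abs_div, abs_pow, abs_mul, Nat.abs_cast, Nat.abs_cast, one_mul]
      have h2 : |a| ^ m ≤ (|a| + 1) ^ (m+1) := by
        calc |a| ^ m ≤ (|a| + 1) ^ m :=
              pow_le_pow_left₀ (abs_nonneg a) (by linarith [abs_nonneg a]) m
          _ ≤ (|a| + 1) ^ (m+1) :=
              pow_le_pow_right₀ (by linarith [abs_nonneg a]) (Nat.le_succ m)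
      have h3 : (Nat.factorial (m+1) : ℝ) ≤ (Nat.factorial m : ℝ) * (Nat.factorial (m+1) : ℝ) := by
        nlinarith [fact_pos (m+1), fact_one_le m]
      calc |a| ^ m / ((Nat.factorial m : ℝ) * (Nat.factorial (m+1) : ℝ))
          ≤ (|a|+1) ^ (m+1) / ((Nat.factorial m : ℝ) * (Nat.factorial (m+1) : ℝ)) := by
            exact div_le_div_of_nonneg_right h2
              (by positivity : (0:ℝ) ≤ (Nat.factorial m : ℝ) * (Nat.factorial (m+1) : ℝ))
        _ ≤ (|a|+1) ^ (m+1) / (Nat.factorial (m+1) : ℝ) := by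
            exact div_le_div_of_nonneg_left (by positivity) (fact_pos (m+1)) h3
  have heqfun : (fun w => w * calI1 (a * w)) = (fun w => ∑' n, c n * w ^ n) := by
    funext w
    have hs : Summable (fun n => c n * w ^ n) :=
      summable_coef c 1 (|a| + 1) (by positivity) hbound w
    rw [Summable.tsum_eq_zero_add hs]
    show w * calI1 (a * w) = c 0 * w ^ 0 + ∑' n, c (n+1) * w ^ (n+1)
    have h0 : c 0 * w ^ 0 = 0 := by simp [hc]
    rw [h0, zero_add]
    unfold calI1
    rw [← tsum_mul_left]
    exact tsum_congr fun n => by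
      show w * ((a*w) ^ n / _) = (a ^ n / _) * w ^ (n+1)
      rw [mul_pow]
      ring
  rw [heqfun]
  have h := hasDerivAt_psum c 1 (|a| + 1) one_pos.le (by positivity) hbound w
  convert h using 1
  unfold calI0
  exact tsum_congr fun n => by
    show (a*w) ^ n / _ = (a ^ n / ((Nat.factorial n : ℝ) * (Nat.factorial (n+1) : ℝ)) * ((n:ℝ)+1)) * w ^ n
    rw [Nat.factorial_succ, mul_pow]
    have := fact_pos n
    push_cast
    field_simp

lemma hasDerivAt_calI0 (z : ℝ) : HasDerivAt calI0 (calI1 z) z := by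
  have h := hasDerivAt_calI0_linear 1 z
  simp only [one_mul] at h
  exact h

lemma hasDerivAt_calI1 (z : ℝ) : HasDerivAt calI1
    (∑' n, ((1:ℝ) / ((Nat.factorial (n+1) : ℝ) * (Nat.factorial (n+2) : ℝ)) * ((n:ℝ)+1)) * z ^ n) z := by
  have heq : calI1 = (fun w => ∑' n, ((1:ℝ) / ((Nat.factorial n : ℝ) * (Nat.factorial (n+1) : ℝ))) * w ^ n) := by
    funext w
    exact tsum_congr fun n => by ring
  rw [heq]
  have h := hasDerivAt_psum
    (fun n => (1:ℝ)/((Nat.factorial n : ℝ) * (Nat.factorial (n+1) : ℝ))) 1 1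
    one_pos.le one_pos.le (fun n => by
      rw [abs_div, abs_one, abs_mul, Nat.abs_cast, Nat.abs_cast, one_mul, one_pow]
      have h1 : (Nat.factorial n : ℝ) ≤ (Nat.factorial n : ℝ) * (Nat.factorial (n+1) : ℝ) := by
        nlinarith [fact_pos n, fact_one_le (n+1)]
      exact div_le_div_of_nonneg_left one_pos.le (fact_pos n) h1) z
  convert h using 2

lemma continuous_calI0 : Continuous calI0 :=
  continuous_iff_continuousAt.mpr fun z => (hasDerivAt_calI0 z).continuousAt

lemma continuous_calI1 : Continuous calI1 :=
  continuous_iff_continuousAt.mpr fun z => (hasDerivAt_calI1 z).continuousAt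

lemma calI0_zero : calI0 0 = 1 := by
  unfold calI0
  rw [tsum_eq_single 0 (fun n hn => by
    rw [zero_pow hn]
    simp)]
  simp

lemma calI1_zero : calI1 0 = 1 := by
  unfold calI1
  rw [tsum_eq_single 0 (fun n hn => by
    rw [zero_pow hn]
    simp)]
  simp [Nat.factorial]

lemma triangle_swap (f : ℝ → ℝ → ℝ) (hf : Continuous (Function.uncurry f)) (t : ℝ) (ht : 0 ≤ t) :
    (∫ u in (0:ℝ)..t, ∫ s in u..t, f u s) = ∫ s in (0:ℝ)..t, ∫ u in (0:ℝ)..s, f u s := by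
  set F : ℝ × ℝ → ℝ := Function.uncurry f with hF
  set T : Set (ℝ × ℝ) := {p | 0 < p.1 ∧ p.1 < p.2 ∧ p.2 ≤ t} with hT
  have hTmeas : MeasurableSet T := by
    apply MeasurableSet.inter
    · exact measurableSet_lt measurable_const measurable_fst
    · exact MeasurableSet.inter (measurableSet_lt measurable_fst measurable_snd)
        (measurableSet_le measurable_snd measurable_const)
  have hTsub : T ⊆ Set.Icc ((0:ℝ), (0:ℝ)) (t, t) := by
    rintro ⟨u, s⟩ ⟨h1, h2, h3⟩
    constructor
    · exact ⟨le_of_lt h1, le_trans (le_of_lt h1) (le_of_lt h2)⟩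
    · exact ⟨le_trans (le_of_lt h2) h3, h3⟩
  have hInt : Integrable (T.indicator F) := by
    rw [integrable_indicator_iff hTmeas]
    exact ((hf.continuousOn).integrableOn_compact isCompact_Icc).mono_set hTsub
  have hslice1 : ∀ u : ℝ, Set.indicator (Set.Ioc 0 t) (fun u => ∫ s in u..t, f u s) u
      = ∫ s, T.indicator F (u, s) := by
    intro u
    by_cases hu : u ∈ Set.Ioc 0 t
    · rw [Set.indicator_of_mem hu]
      rw [intervalIntegral.integral_of_le hu.2]
      rw [← MeasureTheory.integral_indicator measurableSet_Ioc]
      congr 1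
      funext s
      by_cases hs : s ∈ Set.Ioc u t
      · have hmem : (u, s) ∈ T := ⟨hu.1, hs.1, hs.2⟩
        rw [Set.indicator_of_mem hs, Set.indicator_of_mem hmem]
        rfl
      · have hmem : (u, s) ∉ T := by rintro ⟨-, h2, h3⟩; exact hs ⟨h2, h3⟩
        rw [Set.indicator_of_notMem hs, Set.indicator_of_notMem hmem]
    · rw [Set.indicator_of_notMem hu]
      symm
      apply integral_eq_zero_of_ae
      apply Filter.Eventually.of_forall
      intro s
      show T.indicator F (u, s) = 0
      exact Set.indicator_of_notMem
        (by rintro ⟨h1, h2, h3⟩; exact hu ⟨h1, le_trans (le_of_lt h2) h3⟩) F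
  have hslice2 : ∀ s : ℝ, (∫ u, T.indicator F (u, s))
      = Set.indicator (Set.Ioc 0 t) (fun s => ∫ u in (0:ℝ)..s, f u s) s := by
    intro s
    by_cases hs : s ∈ Set.Ioc 0 t
    · rw [Set.indicator_of_mem hs]
      rw [intervalIntegral.integral_of_le hs.1.le]
      rw [MeasureTheory.integral_Ioc_eq_integral_Ioo]
      rw [← MeasureTheory.integral_indicator measurableSet_Ioo]
      congr 1
      funext u
      by_cases hu : u ∈ Set.Ioo 0 s
      · have hmem : (u, s) ∈ T := ⟨hu.1, hu.2, hs.2⟩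
        rw [Set.indicator_of_mem hu, Set.indicator_of_mem hmem]
        rfl
      · have hmem : (u, s) ∉ T := by rintro ⟨h1, h2, -⟩; exact hu ⟨h1, h2⟩
        rw [Set.indicator_of_notMem hu, Set.indicator_of_notMem hmem]
    · rw [Set.indicator_of_notMem hs]
      apply integral_eq_zero_of_ae
      apply Filter.Eventually.of_forall
      intro u
      show T.indicator F (u, s) = 0
      exact Set.indicator_of_notMem
        (by rintro ⟨h1, h2, h3⟩; exact hs ⟨lt_trans h1 h2, h3⟩) F
  calc (∫ u in (0:ℝ)..t, ∫ s in u..t, f u s)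
      = ∫ u, Set.indicator (Set.Ioc 0 t) (fun u => ∫ s in u..t, f u s) u := by
        rw [intervalIntegral.integral_of_le ht, ← MeasureTheory.integral_indicator measurableSet_Ioc]
    _ = ∫ u, ∫ s, T.indicator F (u, s) := by
        congr 1; funext u; exact hslice1 u
    _ = ∫ s, ∫ u, T.indicator F (u, s) := by
        apply MeasureTheory.integral_integral_swap
        have : Function.uncurry (fun u s => T.indicator F (u, s)) = T.indicator F := by
          funext p; cases p; rfl
        rw [this, ← MeasureTheory.Measure.volume_eq_prod]
        exact hInt
    _ = ∫ s, Set.indicator (Set.Ioc 0 t) (fun s => ∫ u in (0:ℝ)..s, f u s) s := by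
        congr 1; funext s; exact hslice2 s
    _ = ∫ s in (0:ℝ)..t, ∫ u in (0:ℝ)..s, f u s := by
        rw [intervalIntegral.integral_of_le ht, ← MeasureTheory.integral_indicator measurableSet_Ioc]

attribute [fun_prop] continuous_calI0 continuous_calI1

noncomputable def phiF (l0 l1 u w : ℝ) : ℝ :=
  l1 * (calI0 (l0 * l1 * u * w) + l0 * (w * calI1 (l0 * l1 * u * w))) *
    Real.exp (-(l0 * u) - l1 * w)

noncomputable def psiF (l0 l1 u w : ℝ) : ℝ :=
  l1 * ((l0 - l1) * calI0 (l0 * l1 * u * w) + l0 * l1 * (u - w) * calI1 (l0 * l1 * u * w)) *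
    Real.exp (-(l0 * u) - l1 * w)

lemma continuous_psi_anti (l0 l1 : ℝ) :
    Continuous (Function.uncurry (fun u s => psiF l0 l1 u (s - u))) := by
  unfold psiF Function.uncurry
  fun_prop

lemma phi_zero (l0 l1 u : ℝ) : phiF l0 l1 u 0 = l1 * Real.exp (-(l0 * u)) := by
  simp [phiF, calI0_zero]

lemma hasDerivAt_phi_w (l0 l1 u w : ℝ) :
    HasDerivAt (fun w => phiF l0 l1 u w) (psiF l0 l1 u w) w := by
  set a : ℝ := l0 * l1 * u with ha
  have h1 : HasDerivAt (fun w => calI0 (a * w)) (a * calI1 (a * w)) w :=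
    hasDerivAt_calI0_linear a w
  have h2 : HasDerivAt (fun w => l0 * (w * calI1 (a * w))) (l0 * calI0 (a * w)) w :=
    (hasDerivAt_mul_calI1 a w).const_mul l0
  have h3 : HasDerivAt (fun w => Real.exp (-(l0 * u) - l1 * w))
      (Real.exp (-(l0 * u) - l1 * w) * (-l1)) w := by
    have hinner : HasDerivAt (fun w : ℝ => -(l0 * u) - l1 * w) (-l1) w := by
      have := ((hasDerivAt_id w).const_mul l1).const_sub (-(l0 * u))
      simpa using this
    exact hinner.exp
  have h4 := ((h1.add h2).mul h3).const_mul l1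
  have : phiF l0 l1 u = fun w =>
      l1 * ((calI0 (a * w) + l0 * (w * calI1 (a * w))) * Real.exp (-(l0 * u) - l1 * w)) := by
    funext w
    unfold phiF
    rw [← ha]
    ring
  rw [this]
  refine h4.congr_deriv ?_
  unfold psiF
  rw [← ha]
  simp only [Pi.add_apply]
  ring

/-- FTC in the `w` direction. -/
lemma phi_eq_integral_psi (l0 l1 u b : ℝ) :
    phiF l0 l1 u b = l1 * Real.exp (-(l0 * u)) + ∫ w in (0:ℝ)..b, psiF l0 l1 u w := by
  have hFTC := intervalIntegral.integral_eq_sub_of_hasDerivAt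
    (f := fun w => phiF l0 l1 u w) (f' := fun w => psiF l0 l1 u w)
    (a := 0) (b := b)
    (fun w _ => hasDerivAt_phi_w l0 l1 u w)
    (by apply Continuous.intervalIntegrable; unfold psiF; fun_prop)
  rw [hFTC]
  rw [phi_zero]
  ring

/-- FTC along the antidiagonal. -/
lemma integral_psi_anti (l0 l1 s : ℝ) :
    (∫ u in (0:ℝ)..s, psiF l0 l1 u (s - u))
      = l1 * Real.exp (-(l1 * s)) - l1 * Real.exp (-(l0 * s)) := by
  have hderiv : ∀ u : ℝ, HasDerivAt
      (fun u => -(l1 * (Real.exp (-(l0 * u) - l1 * (s - u)) * calI0 (l0 * l1 * u * (s - u)))))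
      (psiF l0 l1 u (s - u)) u := by
    intro u
    have hinner : HasDerivAt (fun u : ℝ => l0 * l1 * u * (s - u))
        (l0 * l1 * (s - u) + l0 * l1 * u * (-1)) u := by
      have hq : HasDerivAt (fun u : ℝ => l0 * l1 * u) (l0 * l1) u := by
        simpa using (hasDerivAt_id u).const_mul (l0 * l1)
      have hr : HasDerivAt (fun u : ℝ => s - u) (-1) u := by
        simpa using (hasDerivAt_id u).const_sub s
      exact (hq.mul hr).congr_deriv (by ring)
    have hI : HasDerivAt (fun u => calI0 (l0 * l1 * u * (s - u)))
        (calI1 (l0 * l1 * u * (s - u)) * (l0 * l1 * (s - u) + l0 * l1 * u * (-1))) u :=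
      (hasDerivAt_calI0 _).comp u hinner
    have hE : HasDerivAt (fun u => Real.exp (-(l0 * u) - l1 * (s - u)))
        (Real.exp (-(l0 * u) - l1 * (s - u)) * (-l0 + l1)) u := by
      have hinner2 : HasDerivAt (fun u : ℝ => -(l0 * u) - l1 * (s - u)) (-l0 + l1) u := by
        have ha : HasDerivAt (fun u : ℝ => -(l0 * u)) (-l0) u := by
          exact (((hasDerivAt_id u).const_mul l0).neg).congr_deriv (by ring)
        have hb : HasDerivAt (fun u : ℝ => l1 * (s - u)) (-l1) u := by
          simpa using ((hasDerivAt_id u).const_sub s).const_mul l1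
        exact (ha.sub hb).congr_deriv (by ring)
      exact hinner2.exp
    have h := ((hE.mul hI).const_mul l1).neg
    refine h.congr_deriv ?_
    unfold psiF
    ring
  have hFTC := intervalIntegral.integral_eq_sub_of_hasDerivAt
    (f := fun u => -(l1 * (Real.exp (-(l0 * u) - l1 * (s - u)) * calI0 (l0 * l1 * u * (s - u)))))
    (f' := fun u => psiF l0 l1 u (s - u)) (a := 0) (b := s)
    (fun u _ => hderiv u)
    (by apply Continuous.intervalIntegrable; unfold psiF; fun_prop)
  rw [hFTC]
  simp [calI0_zero]
  ring

lemma exp_int (lam t : ℝ) :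
    (∫ s in (0:ℝ)..t, lam * Real.exp (-(lam * s))) = 1 - Real.exp (-(lam * t)) := by
  have hFTC := intervalIntegral.integral_eq_sub_of_hasDerivAt
    (f := fun s => -Real.exp (-(lam * s))) (f' := fun s => lam * Real.exp (-(lam * s)))
    (a := 0) (b := t)
    (fun s _ => by
      have hinner : HasDerivAt (fun s : ℝ => -(lam * s)) (-lam) s := by
        exact (((hasDerivAt_id s).const_mul lam).neg).congr_deriv (by ring)
      have := hinner.exp.neg
      exact this.congr_deriv (by ring))
    (by apply Continuous.intervalIntegrable; fun_prop)
  rw [hFTC]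
  simp
  ring

/-- the distribution of Γ(t) started from state 1 (atom of mass `e^{−λ₁t}`
at `γ₁t` plus the absolutely continuous part) has total mass 1. -/
theorem telegraph_distribution_state1_total_mass (l0 l1 g0 g1 t : ℝ)
    (hl0 : 0 < l0) (hl1 : 0 < l1) (hg : g1 < g0) (ht : 0 < t) :
    Real.exp (-(l1 * t)) +
      ∫ x in (g1 * t)..(g0 * t),
        l1 * (calI0 (zf l0 l1 g0 g1 t x) +
              l0 * xi1 g0 g1 t x * calI1 (zf l0 l1 g0 g1 t x)) *
          thetaf l0 l1 g0 g1 t x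
      = 1 := by
  set c : ℝ := g0 - g1 with hc
  have hcpos : 0 < c := by simp [hc]; linarith
  have hcne : c ≠ 0 := ne_of_gt hcpos
  set G : ℝ → ℝ := fun u => phiF l0 l1 u (t - u) with hG
  -- Step 1: substitution
  have hpt : ∀ x : ℝ,
      l1 * (calI0 (zf l0 l1 g0 g1 t x) +
          l0 * xi1 g0 g1 t x * calI1 (zf l0 l1 g0 g1 t x)) * thetaf l0 l1 g0 g1 t x
        = c⁻¹ • G (c⁻¹ * x + -(g1 * t) / c) := by
    intro x
    have hxi0 : c⁻¹ * x + -(g1 * t) / c = xi0 g0 g1 t x := by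
      unfold xi0
      rw [← hc]
      field_simp
      ring
    have hxi1 : xi1 g0 g1 t x = t - xi0 g0 g1 t x := by
      unfold xi0 xi1
      rw [← hc]
      field_simp
      ring
    rw [hxi0]
    unfold G
    unfold phiF zf thetaf
    rw [hxi1, smul_eq_mul, div_eq_mul_inv]
    ring
  have step1 : (∫ x in (g1 * t)..(g0 * t),
      l1 * (calI0 (zf l0 l1 g0 g1 t x) +
          l0 * xi1 g0 g1 t x * calI1 (zf l0 l1 g0 g1 t x)) * thetaf l0 l1 g0 g1 t x)
      = ∫ u in (0:ℝ)..t, G u := by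
    rw [intervalIntegral.integral_congr (g := fun x => c⁻¹ • G (c⁻¹ * x + -(g1 * t) / c))
      (fun x _ => hpt x)]
    rw [intervalIntegral.integral_smul]
    rw [intervalIntegral.integral_comp_mul_add G (inv_ne_zero hcne) (-(g1 * t) / c)]
    have e1 : c⁻¹ * (g1 * t) + -(g1 * t) / c = 0 := by field_simp; ring
    have e2 : c⁻¹ * (g0 * t) + -(g1 * t) / c = t := by field_simp; ring
    rw [e1, e2, inv_inv, smul_smul, inv_mul_cancel₀ hcne, one_smul]
  -- Step 2: rewrite G using FTC in w
  have h2 : ∀ u : ℝ, G u = l1 * Real.exp (-(l0 * u)) + ∫ s in u..t, psiF l0 l1 u (s - u) := by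
    intro u
    show phiF l0 l1 u (t - u) = _
    rw [phi_eq_integral_psi]
    congr 1
    have := intervalIntegral.integral_comp_sub_right (a := u) (b := t)
      (fun w => psiF l0 l1 u w) u
    simp only [sub_self] at this
    rw [this]
  have hIntPhi : IntervalIntegrable G volume 0 t := by
    apply Continuous.intervalIntegrable
    unfold G
    unfold phiF
    fun_prop
  have hInt1 : IntervalIntegrable (fun u => l1 * Real.exp (-(l0 * u))) volume 0 t := by
    apply Continuous.intervalIntegrable; fun_prop
  have hInt2 : IntervalIntegrable (fun u => ∫ s in u..t, psiF l0 l1 u (s - u)) volume 0 t := by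
    have heq : (fun u => ∫ s in u..t, psiF l0 l1 u (s - u))
        = fun u => G u - l1 * Real.exp (-(l0 * u)) := by
      funext u
      rw [h2 u]
      ring
    rw [heq]
    exact hIntPhi.sub hInt1
  have step2 : (∫ u in (0:ℝ)..t, G u)
      = (∫ u in (0:ℝ)..t, l1 * Real.exp (-(l0 * u)))
        + ∫ u in (0:ℝ)..t, (∫ s in u..t, psiF l0 l1 u (s - u)) := by
    rw [← intervalIntegral.integral_add hInt1 hInt2]
    exact intervalIntegral.integral_congr (fun u _ => h2 u)
  -- Step 3: swap and evaluate
  have step3 : (∫ u in (0:ℝ)..t, (∫ s in u..t, psiF l0 l1 u (s - u)))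
      = ∫ s in (0:ℝ)..t, (l1 * Real.exp (-(l1 * s)) - l1 * Real.exp (-(l0 * s))) := by
    rw [triangle_swap (fun u s => psiF l0 l1 u (s - u)) (continuous_psi_anti l0 l1) t ht.le]
    exact intervalIntegral.integral_congr (fun s _ => integral_psi_anti l0 l1 s)
  have hIntb : IntervalIntegrable (fun s => l1 * Real.exp (-(l1 * s))) volume 0 t := by
    apply Continuous.intervalIntegrable; fun_prop
  have step4 : (∫ s in (0:ℝ)..t, (l1 * Real.exp (-(l1 * s)) - l1 * Real.exp (-(l0 * s))))
      = (∫ s in (0:ℝ)..t, l1 * Real.exp (-(l1 * s)))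
        - ∫ s in (0:ℝ)..t, l1 * Real.exp (-(l0 * s)) := by
    exact intervalIntegral.integral_sub hIntb hInt1
  rw [step1, step2, step3, step4, exp_int l1 t]
  ring
end

section
/- Let λ0, λ1 > 0, γ0 > γ1 > 0 and y > 0. Then e^{−λ0·y/γ0} + ∫_{y/γ0}^{y/γ1} λ0·(γ1·ℐ0(z(t,y)) + λ1·γ0·ξ0(t,y)·ℐ1(z(t,y)))·θ(t,y) dt = 1. (This is the statement of Theorem 2.1 that when both velocities are positive the first passage time T(y) through the level y, started from state 0, is almost surely finite and supported on the segment [y/γ0, y/γ1]: its distribution, an atom of mass e^{−λ0·y/γ0} at t = y/γ0 plus the absolutely continuous part with the stated density, has total mass 1.) -/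
open Real Filter MeasureTheory

set_option linter.unreachableTactic false
set_option linter.unnecessarySeqFocus false
set_option linter.unusedTactic false


/-- `S_k(p) = ∑_{n=0}^{k} (-1)^{k+n} p^n / ((k-n)! (n!)^2)` -/
noncomputable def Scal (k : ℕ) (p : ℝ) : ℝ :=
  ∑ n ∈ Finset.range (k+1),
    (-1:ℝ)^(k+n) * p^n / ((Nat.factorial (k-n) : ℝ) * (Nat.factorial n : ℝ)^2)

/-- `U_k(p) = ∑_{n=0}^{k} (-1)^{k+n} p^n / ((k-n)! n! (n+1)!)` -/
noncomputable def Ucal (k : ℕ) (p : ℝ) : ℝ :=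
  ∑ n ∈ Finset.range (k+1),
    (-1:ℝ)^(k+n) * p^n / ((Nat.factorial (k-n) : ℝ) * (Nat.factorial n : ℝ)
      * (Nat.factorial (n+1) : ℝ))

lemma Scal_zero (p : ℝ) : Scal 0 p = 1 := by
  simp [Scal]

lemma key_algebra (k : ℕ) (p : ℝ) :
    ((k:ℝ)+1) * Scal (k+1) p = p * Ucal k p - Scal k p := by
  have h1 : ((k:ℝ)+1) * Scal (k+1) p
      = (∑ n ∈ Finset.range (k+2),
          (n:ℝ) * ((-1:ℝ)^(k+1+n) * p^n / ((Nat.factorial (k+1-n) : ℝ) * (Nat.factorial n : ℝ)^2)))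
        + (∑ n ∈ Finset.range (k+2),
          ((k+1-n : ℕ):ℝ) * ((-1:ℝ)^(k+1+n) * p^n / ((Nat.factorial (k+1-n) : ℝ) * (Nat.factorial n : ℝ)^2))) := by
    rw [Scal, Finset.mul_sum, ← Finset.sum_add_distrib]
    apply Finset.sum_congr rfl
    intro n hn
    have hn' : n ≤ k + 1 := by
      have := Finset.mem_range.mp hn; omega
    have : ((k+1-n : ℕ):ℝ) = (k:ℝ) + 1 - (n:ℝ) := by
      push_cast [Nat.cast_sub hn']; ring
    rw [this]; ring
  have h2 : (∑ n ∈ Finset.range (k+2),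
          (n:ℝ) * ((-1:ℝ)^(k+1+n) * p^n / ((Nat.factorial (k+1-n) : ℝ) * (Nat.factorial n : ℝ)^2)))
      = p * Ucal k p := by
    rw [Finset.sum_range_succ']
    simp only [Nat.cast_zero, zero_mul, add_zero, Nat.cast_add, Nat.cast_one]
    rw [Ucal, Finset.mul_sum]
    apply Finset.sum_congr rfl
    intro m hm
    have e1 : k + 1 - (m+1) = k - m := by omega
    have e2 : (-1:ℝ)^(k+1+(m+1)) = (-1:ℝ)^(k+m) := by
      have : k+1+(m+1) = (k+m)+2 := by ring
      rw [this, pow_add]; norm_num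
    rw [e1, e2, Nat.factorial_succ (m)]
    push_cast
    have hm0 : (Nat.factorial m : ℝ) ≠ 0 := by positivity
    have hk0 : (Nat.factorial (k-m) : ℝ) ≠ 0 := by positivity
    have hm1 : (Nat.factorial (m+1) : ℝ) ≠ 0 := by positivity
    field_simp
    ring
  have h3 : (∑ n ∈ Finset.range (k+2),
          ((k+1-n : ℕ):ℝ) * ((-1:ℝ)^(k+1+n) * p^n / ((Nat.factorial (k+1-n) : ℝ) * (Nat.factorial n : ℝ)^2)))
      = - Scal k p := by
    rw [Finset.sum_range_succ]
    have : k + 1 - (k+1) = 0 := by omega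
    rw [this]
    simp only [Nat.cast_zero, zero_mul, add_zero]
    rw [Scal, ← Finset.sum_neg_distrib]
    apply Finset.sum_congr rfl
    intro n hn
    have hn' : n ≤ k := by
      have := Finset.mem_range.mp hn; omega
    have e1 : k + 1 - n = (k - n) + 1 := by omega
    have e2 : (-1:ℝ)^(k+1+n) = -(-1:ℝ)^(k+n) := by
      have : k+1+n = (k+n)+1 := by ring
      rw [this, pow_succ]; ring
    rw [e1, e2, Nat.factorial_succ]
    push_cast [Nat.cast_sub hn']
    have h0 : (Nat.factorial (k-n) : ℝ) ≠ 0 := by positivity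
    have h1 : (Nat.factorial n : ℝ) ≠ 0 := by positivity
    have h2 : (k:ℝ) - (n:ℝ) + 1 ≠ 0 := by
      have h3 : (n:ℝ) ≤ (k:ℝ) := by exact_mod_cast hn'
      linarith
    field_simp
  rw [h1, h2, h3]; ring

lemma hasDerivAt_pU (k : ℕ) (p : ℝ) :
    HasDerivAt (fun x => x * Ucal k x) (Scal k p) p := by
  have heq : (fun x => x * Ucal k x)
      = fun x => ∑ n ∈ Finset.range (k+1),
          (-1:ℝ)^(k+n) * x^(n+1) / ((Nat.factorial (k-n) : ℝ) * (Nat.factorial n : ℝ)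
            * (Nat.factorial (n+1) : ℝ)) := by
    funext x
    rw [Ucal, Finset.mul_sum]
    apply Finset.sum_congr rfl
    intro n _
    ring
  rw [heq, Scal]
  apply HasDerivAt.fun_sum
  intro n _
  have h : HasDerivAt (fun x : ℝ => x^(n+1)) (((n:ℝ)+1) * p^n) p := by
    simpa using hasDerivAt_pow (n+1) p
  have := (h.const_mul ((-1:ℝ)^(k+n))).div_const
    ((Nat.factorial (k-n) : ℝ) * (Nat.factorial n : ℝ) * (Nat.factorial (n+1) : ℝ))
  refine this.congr_deriv ?_
  rw [Nat.factorial_succ]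
  have h0 : (Nat.factorial (k-n) : ℝ) ≠ 0 := by positivity
  have h1 : (Nat.factorial n : ℝ) ≠ 0 := by positivity
  have h2 : ((n:ℝ)+1) ≠ 0 := by positivity
  push_cast
  field_simp

lemma summable_norm_I0 (z : ℝ) :
    Summable (fun n : ℕ => ‖z ^ n / ((Nat.factorial n : ℝ)) ^ 2‖) := by
  apply Summable.of_nonneg_of_le (fun n => norm_nonneg _)
    (f := fun n => |z|^n / (Nat.factorial n : ℝ))
  · intro n
    rw [norm_div, norm_pow, Real.norm_eq_abs]
    have h1 : (0:ℝ) < (Nat.factorial n : ℝ) := by positivity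
    have h2 : (Nat.factorial n : ℝ) ≤ ‖((Nat.factorial n : ℝ))^2‖ := by
      rw [norm_pow, Real.norm_natCast, sq]
      have h3 : (1:ℝ) ≤ (Nat.factorial n : ℝ) := by exact_mod_cast Nat.one_le_iff_ne_zero.mpr (Nat.factorial_ne_zero n)
      nlinarith
    exact div_le_div_of_nonneg_left (by positivity) h1 h2
  · exact Real.summable_pow_div_factorial _

lemma summable_norm_I1 (z : ℝ) :
    Summable (fun n : ℕ => ‖z ^ n / ((Nat.factorial n : ℝ) * (Nat.factorial (n+1) : ℝ))‖) := by
  apply Summable.of_nonneg_of_le (fun n => norm_nonneg _)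
    (f := fun n => |z|^n / (Nat.factorial n : ℝ))
  · intro n
    rw [norm_div, norm_pow, Real.norm_eq_abs]
    have h1 : (0:ℝ) < (Nat.factorial n : ℝ) := by positivity
    have h2 : (Nat.factorial n : ℝ) ≤ ‖(Nat.factorial n : ℝ) * (Nat.factorial (n+1) : ℝ)‖ := by
      rw [norm_mul, Real.norm_natCast, Real.norm_natCast]
      have h3 : (1:ℝ) ≤ (Nat.factorial (n+1) : ℝ) := by exact_mod_cast Nat.one_le_iff_ne_zero.mpr (Nat.factorial_ne_zero (n+1))
      have h4 : (0:ℝ) < (Nat.factorial n : ℝ) := by positivity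
      nlinarith
    exact div_le_div_of_nonneg_left (by positivity) h1 h2
  · exact Real.summable_pow_div_factorial _

lemma summable_norm_exp (x : ℝ) :
    Summable (fun n : ℕ => ‖x ^ n / (Nat.factorial n : ℝ)‖) := by
  simpa [norm_div, Real.norm_eq_abs, abs_pow, Nat.abs_cast] using
    Real.summable_pow_div_factorial |x|

lemma real_exp_tsum (x : ℝ) : Real.exp x = ∑' n : ℕ, x ^ n / (Nat.factorial n : ℝ) := by
  rw [Real.exp_eq_exp_ℝ, NormedSpace.exp_eq_tsum_div]

lemma neg_one_pow_sub (k j : ℕ) (h : j ≤ k) : ((-1:ℝ))^(k-j) = (-1:ℝ)^(k+j) := by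
  have e : k + j = (k-j) + 2*j := by omega
  rw [e, pow_add, pow_mul]
  norm_num

lemma exp_mul_calI0 (μ r p : ℝ) :
    Real.exp (-(μ*r)) * calI0 (μ*p*r) = ∑' k : ℕ, μ^k * r^k * Scal k p := by
  rw [real_exp_tsum, calI0,
    tsum_mul_tsum_eq_tsum_sum_antidiagonal_of_summable_norm
      (summable_norm_exp (-(μ*r))) (summable_norm_I0 (μ*p*r))]
  congr 1
  funext k
  rw [Finset.Nat.sum_antidiagonal_eq_sum_range_succ_mk]
  rw [← Finset.sum_range_reflect]
  simp only [Nat.succ_sub_one]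
  rw [Scal, Finset.mul_sum]
  apply Finset.sum_congr rfl
  intro j hj
  have hj' : j ≤ k := by have := Finset.mem_range.mp hj; omega
  have e1 : k - (k - j) = j := by omega
  rw [e1]
  have e2 : (-(μ*r))^(k-j) = (-1:ℝ)^(k+j) * μ^(k-j) * r^(k-j) := by
    rw [neg_pow, ← neg_one_pow_sub k j hj', mul_pow]; ring
  have e3 : (μ*p*r)^j = μ^j * p^j * r^j := by ring
  rw [e2, e3]
  have e4 : μ^(k-j) * μ^j = μ^k := by rw [← pow_add, Nat.sub_add_cancel hj']
  have e5 : r^(k-j) * r^j = r^k := by rw [← pow_add, Nat.sub_add_cancel hj']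
  rw [div_mul_div_comm]
  have e6 : (-1:ℝ)^(k+j) * μ^(k-j) * r^(k-j) * (μ^j * p^j * r^j)
      = μ^k * r^k * ((-1:ℝ)^(k+j) * p^j) := by rw [← e4, ← e5]; ring
  rw [e6, mul_div_assoc]

lemma exp_mul_calI1 (μ r p : ℝ) :
    Real.exp (-(μ*r)) * calI1 (μ*p*r) = ∑' k : ℕ, μ^k * r^k * Ucal k p := by
  rw [real_exp_tsum, calI1,
    tsum_mul_tsum_eq_tsum_sum_antidiagonal_of_summable_norm
      (summable_norm_exp (-(μ*r))) (summable_norm_I1 (μ*p*r))]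
  congr 1
  funext k
  rw [Finset.Nat.sum_antidiagonal_eq_sum_range_succ_mk]
  rw [← Finset.sum_range_reflect]
  simp only [Nat.succ_sub_one]
  rw [Ucal, Finset.mul_sum]
  apply Finset.sum_congr rfl
  intro j hj
  have hj' : j ≤ k := by have := Finset.mem_range.mp hj; omega
  have e1 : k - (k - j) = j := by omega
  rw [e1]
  have e2 : (-(μ*r))^(k-j) = (-1:ℝ)^(k+j) * μ^(k-j) * r^(k-j) := by
    rw [neg_pow, ← neg_one_pow_sub k j hj', mul_pow]; ring
  have e3 : (μ*p*r)^j = μ^j * p^j * r^j := by ring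
  rw [e2, e3]
  have e4 : μ^(k-j) * μ^j = μ^k := by rw [← pow_add, Nat.sub_add_cancel hj']
  have e5 : r^(k-j) * r^j = r^k := by rw [← pow_add, Nat.sub_add_cancel hj']
  rw [div_mul_div_comm]
  have e6 : (-1:ℝ)^(k+j) * μ^(k-j) * r^(k-j) * (μ^j * p^j * r^j)
      = μ^k * r^k * ((-1:ℝ)^(k+j) * p^j) := by rw [← e4, ← e5]; ring
  rw [e6, mul_div_assoc]
  ring

lemma abs_Scal_le (k : ℕ) (p : ℝ) : |Scal k p| ≤ (1+|p|)^k / (Nat.factorial k : ℝ) := by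
  have h1 : |Scal k p| ≤ ∑ n ∈ Finset.range (k+1),
      |p|^n * (Nat.choose k n : ℝ) / (Nat.factorial k : ℝ) := by
    refine (Finset.abs_sum_le_sum_abs _ _).trans (Finset.sum_le_sum ?_)
    intro n hn
    have hn' : n ≤ k := by have := Finset.mem_range.mp hn; omega
    have hD : (0:ℝ) < (Nat.factorial (k-n) : ℝ) * (Nat.factorial n : ℝ)^2 := by positivity
    have e1 : |(-1:ℝ)^(k+n) * p^n / ((Nat.factorial (k-n) : ℝ) * (Nat.factorial n : ℝ)^2)|
        = |p|^n / ((Nat.factorial (k-n) : ℝ) * (Nat.factorial n : ℝ)^2) := by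
      rw [abs_div, abs_mul, abs_pow, abs_pow, abs_neg, abs_one, one_pow, one_mul,
        abs_of_pos hD]
    rw [e1]
    have e2 : (Nat.factorial (k-n) : ℝ) * (Nat.factorial n : ℝ)^2
        ≥ (Nat.factorial (k-n) : ℝ) * (Nat.factorial n : ℝ) := by
      have : (1:ℝ) ≤ (Nat.factorial n : ℝ) := by
        exact_mod_cast Nat.one_le_iff_ne_zero.mpr (Nat.factorial_ne_zero n)
      have h0 : (0:ℝ) < (Nat.factorial (k-n) : ℝ) := by positivity
      nlinarith
    have e3 : |p|^n / ((Nat.factorial (k-n) : ℝ) * (Nat.factorial n : ℝ)^2)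
        ≤ |p|^n / ((Nat.factorial (k-n) : ℝ) * (Nat.factorial n : ℝ)) :=
      div_le_div_of_nonneg_left (by positivity) (by positivity) e2
    refine e3.trans_eq ?_
    have e4 : (Nat.choose k n : ℝ) * (Nat.factorial n : ℝ) * (Nat.factorial (k-n) : ℝ)
        = (Nat.factorial k : ℝ) := by exact_mod_cast Nat.choose_mul_factorial_mul_factorial hn'
    have h5 : (0:ℝ) < (Nat.factorial k : ℝ) := by positivity
    field_simp
    linear_combination (-(|p| ^ n)) * e4
  refine h1.trans_eq ?_
  rw [← Finset.sum_div]
  congr 1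
  have := add_pow |p| 1 k
  simp only [one_pow, mul_one] at this
  rw [add_comm (|p|) 1] at this
  exact this.symm

lemma abs_Ucal_le (k : ℕ) (p : ℝ) : |Ucal k p| ≤ (1+|p|)^k / (Nat.factorial k : ℝ) := by
  have h1 : |Ucal k p| ≤ ∑ n ∈ Finset.range (k+1),
      |p|^n * (Nat.choose k n : ℝ) / (Nat.factorial k : ℝ) := by
    refine (Finset.abs_sum_le_sum_abs _ _).trans (Finset.sum_le_sum ?_)
    intro n hn
    have hn' : n ≤ k := by have := Finset.mem_range.mp hn; omega
    have hD : (0:ℝ) < (Nat.factorial (k-n) : ℝ) * (Nat.factorial n : ℝ)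
        * (Nat.factorial (n+1) : ℝ) := by positivity
    have e1 : |(-1:ℝ)^(k+n) * p^n / ((Nat.factorial (k-n) : ℝ) * (Nat.factorial n : ℝ)
          * (Nat.factorial (n+1) : ℝ))|
        = |p|^n / ((Nat.factorial (k-n) : ℝ) * (Nat.factorial n : ℝ)
          * (Nat.factorial (n+1) : ℝ)) := by
      rw [abs_div, abs_mul, abs_pow, abs_pow, abs_neg, abs_one, one_pow, one_mul,
        abs_of_pos hD]
    rw [e1]
    have e2 : (Nat.factorial (k-n) : ℝ) * (Nat.factorial n : ℝ) * (Nat.factorial (n+1) : ℝ)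
        ≥ (Nat.factorial (k-n) : ℝ) * (Nat.factorial n : ℝ) := by
      have h6 : (1:ℝ) ≤ (Nat.factorial (n+1) : ℝ) := by
        exact_mod_cast Nat.one_le_iff_ne_zero.mpr (Nat.factorial_ne_zero (n+1))
      have h0 : (0:ℝ) < (Nat.factorial (k-n) : ℝ) * (Nat.factorial n : ℝ) := by positivity
      nlinarith
    have e3 : |p|^n / ((Nat.factorial (k-n) : ℝ) * (Nat.factorial n : ℝ)
          * (Nat.factorial (n+1) : ℝ))
        ≤ |p|^n / ((Nat.factorial (k-n) : ℝ) * (Nat.factorial n : ℝ)) :=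
      div_le_div_of_nonneg_left (by positivity) (by positivity) e2
    refine e3.trans_eq ?_
    have e4 : (Nat.choose k n : ℝ) * (Nat.factorial n : ℝ) * (Nat.factorial (k-n) : ℝ)
        = (Nat.factorial k : ℝ) := by exact_mod_cast Nat.choose_mul_factorial_mul_factorial hn'
    have h5 : (0:ℝ) < (Nat.factorial k : ℝ) := by positivity
    field_simp
    linear_combination (-(|p| ^ n)) * e4
  refine h1.trans_eq ?_
  rw [← Finset.sum_div]
  congr 1
  have := add_pow |p| 1 k
  simp only [one_pow, mul_one] at this
  rw [add_comm (|p|) 1] at this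
  exact this.symm

lemma continuous_Scal (k : ℕ) : Continuous (fun p => Scal k p) := by
  unfold Scal
  apply continuous_finset_sum
  intro n _
  fun_prop

lemma continuous_Ucal (k : ℕ) : Continuous (fun p => Ucal k p) := by
  unfold Ucal
  apply continuous_finset_sum
  intro n _
  fun_prop

lemma hasDerivAt_W (P : ℝ) (k : ℕ) (p : ℝ) :
    HasDerivAt (fun p => -(Real.exp (-p) * ((P-p)^(k+1) * (p * Ucal k p))) / ((k:ℝ)+1))
      (Real.exp (-p) * ((P-p)^(k+1) * Scal (k+1) p + (P-p)^k * (p * Ucal k p))) p := by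
  have h1 : HasDerivAt (fun p : ℝ => Real.exp (-p)) (-Real.exp (-p)) p := by
    simpa [Function.comp_def] using (Real.hasDerivAt_exp (-p)).comp p ((hasDerivAt_id p).neg)
  have h2 : HasDerivAt (fun p : ℝ => (P-p)^(k+1)) (-(((k:ℝ)+1) * (P-p)^k)) p := by
    have hsub : HasDerivAt (fun p : ℝ => P - p) (-1) p := (hasDerivAt_id p).const_sub P
    have := (hasDerivAt_pow (k+1) (P-p)).comp p hsub
    simpa [mul_comm, Function.comp_def] using this
  have h3 := hasDerivAt_pU k p
  have h := ((h1.mul (h2.mul h3)).neg).div_const ((k:ℝ)+1)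
  refine h.congr_deriv ?_
  simp only [Pi.mul_apply]
  have hk : ((k:ℝ)+1) ≠ 0 := by positivity
  have ka := key_algebra k p
  rw [div_eq_iff hk]
  linear_combination (-(Real.exp (-p) * (P-p)^(k+1))) * ka

lemma integral_term_zero (P : ℝ) (k : ℕ) :
    ∫ p in (0:ℝ)..P,
      Real.exp (-p) * ((P-p)^(k+1) * Scal (k+1) p + (P-p)^k * (p * Ucal k p)) = 0 := by
  have hcont : Continuous (fun p =>
      Real.exp (-p) * ((P-p)^(k+1) * Scal (k+1) p + (P-p)^k * (p * Ucal k p))) := by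
    have := continuous_Scal (k+1)
    have := continuous_Ucal k
    fun_prop
  rw [intervalIntegral.integral_eq_sub_of_hasDerivAt
    (fun x _ => hasDerivAt_W P k x) (hcont.intervalIntegrable 0 P)]
  simp

lemma summable_A_fam (μ r p : ℝ) : Summable (fun k : ℕ => μ^k * r^k * Scal k p) := by
  apply Summable.of_norm_bounded (g := fun k => (|μ| * |r| * (1+|p|))^k / (Nat.factorial k : ℝ))
    (Real.summable_pow_div_factorial _)
  intro k
  have h1 : ‖μ^k * r^k * Scal k p‖ = |μ|^k * |r|^k * |Scal k p| := by
    rw [Real.norm_eq_abs, abs_mul, abs_mul, abs_pow, abs_pow]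
  rw [h1, mul_pow, mul_pow]
  calc |μ|^k * |r|^k * |Scal k p| ≤ |μ|^k * |r|^k * ((1+|p|)^k / (Nat.factorial k : ℝ)) := by
        apply mul_le_mul_of_nonneg_left (abs_Scal_le k p) (by positivity)
    _ = |μ|^k * |r|^k * (1+|p|)^k / (Nat.factorial k : ℝ) := by ring

lemma summable_B_fam (μ r p : ℝ) :
    Summable (fun k : ℕ => μ^(k+1) * r^k * (p * Ucal k p)) := by
  apply Summable.of_norm_bounded
    (g := fun k => (|μ| * |p|) * ((|μ| * |r| * (1+|p|))^k / (Nat.factorial k : ℝ)))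
    ((Real.summable_pow_div_factorial _).mul_left _)
  intro k
  have h1 : ‖μ^(k+1) * r^k * (p * Ucal k p)‖ = |μ|^(k+1) * |r|^k * (|p| * |Ucal k p|) := by
    rw [Real.norm_eq_abs, abs_mul, abs_mul, abs_mul, abs_pow, abs_pow]
  rw [h1, pow_succ]
  calc |μ|^k * |μ| * |r|^k * (|p| * |Ucal k p|)
      ≤ |μ|^k * |μ| * |r|^k * (|p| * ((1+|p|)^k / (Nat.factorial k : ℝ))) := by
        apply mul_le_mul_of_nonneg_left
          (mul_le_mul_of_nonneg_left (abs_Ucal_le k p) (abs_nonneg p)) (by positivity)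
    _ = (|μ| * |p|) * ((|μ| * |r| * (1+|p|))^k / (Nat.factorial k : ℝ)) := by
        rw [mul_pow, mul_pow]; ring

lemma pointwise_expand (μ P p : ℝ) :
    Real.exp (-p - μ*(P-p)) * (calI0 (μ*p*(P-p)) + μ*p*calI1 (μ*p*(P-p)))
    = ∑' k : ℕ, (Real.exp (-p) * (μ^k * (P-p)^k * Scal k p)
        + Real.exp (-p) * (μ^(k+1) * (P-p)^k * (p * Ucal k p))) := by
  have e0 : Real.exp (-p - μ*(P-p)) = Real.exp (-p) * Real.exp (-(μ*(P-p))) := by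
    rw [← Real.exp_add]; ring_nf
  have h0 := exp_mul_calI0 μ (P-p) p
  have h1 := exp_mul_calI1 μ (P-p) p
  calc Real.exp (-p - μ*(P-p)) * (calI0 (μ*p*(P-p)) + μ*p*calI1 (μ*p*(P-p)))
      = Real.exp (-p) * ((Real.exp (-(μ*(P-p))) * calI0 (μ*p*(P-p)))
          + (μ*p) * (Real.exp (-(μ*(P-p))) * calI1 (μ*p*(P-p)))) := by
        rw [e0]; ring
    _ = Real.exp (-p) * ((∑' k : ℕ, μ^k * (P-p)^k * Scal k p)
          + (μ*p) * (∑' k : ℕ, μ^k * (P-p)^k * Ucal k p)) := by rw [h0, h1]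
    _ = Real.exp (-p) * ((∑' k : ℕ, μ^k * (P-p)^k * Scal k p)
          + (∑' k : ℕ, μ^(k+1) * (P-p)^k * (p * Ucal k p))) := by
        congr 2
        rw [← tsum_mul_left]
        congr 1; funext k; ring
    _ = Real.exp (-p) * (∑' k : ℕ, (μ^k * (P-p)^k * Scal k p
          + μ^(k+1) * (P-p)^k * (p * Ucal k p))) := by
        rw [Summable.tsum_add (summable_A_fam μ (P-p) p) (summable_B_fam μ (P-p) p)]
    _ = ∑' k : ℕ, (Real.exp (-p) * (μ^k * (P-p)^k * Scal k p)
        + Real.exp (-p) * (μ^(k+1) * (P-p)^k * (p * Ucal k p))) := by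
        rw [← tsum_mul_left]
        congr 1; funext k; ring

lemma core_identity (μ P : ℝ) (hμ : 0 ≤ μ) (hP : 0 ≤ P) :
    ∫ p in (0:ℝ)..P,
      Real.exp (-p - μ*(P-p)) * (calI0 (μ*p*(P-p)) + μ*p*calI1 (μ*p*(P-p)))
      = 1 - Real.exp (-P) := by
  set F : ℕ → ℝ → ℝ := fun k p => Real.exp (-p) * (μ^k * (P-p)^k * Scal k p)
      + Real.exp (-p) * (μ^(k+1) * (P-p)^k * (p * Ucal k p)) with hF
  have hFcont : ∀ k, Continuous (F k) := by
    intro k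
    have h1 := continuous_Scal k
    have h2 := continuous_Ucal k
    fun_prop
  -- pointwise bound on Ioc 0 P
  have hbound : ∀ k, ∀ p ∈ Set.Ioc (0:ℝ) P,
      ‖F k p‖ ≤ (1 + μ*P) * ((μ*P*(1+P))^k / (Nat.factorial k : ℝ)) := by
    intro k p hp
    obtain ⟨hp0, hpP⟩ := hp
    have he : Real.exp (-p) ≤ 1 := Real.exp_le_one_iff.mpr (by linarith)
    have he0 : 0 < Real.exp (-p) := Real.exp_pos _
    have hPp0 : 0 ≤ P - p := by linarith
    have hPpP : P - p ≤ P := by linarith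
    have hS : |Scal k p| ≤ (1+P)^k / (Nat.factorial k : ℝ) := by
      refine (abs_Scal_le k p).trans ?_
      apply div_le_div_of_nonneg_right ?_ (by positivity)
      · apply pow_le_pow_left₀ (by positivity)
        rw [abs_of_pos hp0]; linarith
    have hU : |Ucal k p| ≤ (1+P)^k / (Nat.factorial k : ℝ) := by
      refine (abs_Ucal_le k p).trans ?_
      apply div_le_div_of_nonneg_right ?_ (by positivity)
      · apply pow_le_pow_left₀ (by positivity)
        rw [abs_of_pos hp0]; linarith
    calc ‖F k p‖ ≤ ‖Real.exp (-p) * (μ^k * (P-p)^k * Scal k p)‖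
          + ‖Real.exp (-p) * (μ^(k+1) * (P-p)^k * (p * Ucal k p))‖ := norm_add_le _ _
      _ = Real.exp (-p) * (μ^k * (P-p)^k * |Scal k p|)
          + Real.exp (-p) * (μ^(k+1) * (P-p)^k * (p * |Ucal k p|)) := by
          simp only [Real.norm_eq_abs, abs_mul, abs_pow, abs_of_pos he0, abs_of_nonneg hμ,
            abs_of_nonneg hPp0, abs_of_pos hp0]
      _ ≤ 1 * (μ^k * P^k * ((1+P)^k / (Nat.factorial k : ℝ)))
          + 1 * (μ^(k+1) * P^k * (P * ((1+P)^k / (Nat.factorial k : ℝ)))) := by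
          gcongr <;> first
            | exact hS
            | exact hU
            | linarith
      _ = (1 + μ*P) * ((μ*P*(1+P))^k / (Nat.factorial k : ℝ)) := by
          rw [mul_pow, mul_pow, pow_succ]; ring
  have hInt : ∀ k, IntegrableOn (F k) (Set.Ioc (0:ℝ) P) volume :=
    fun k => (hFcont k).integrableOn_Ioc
  have hSumNorm : Summable (fun k => ∫ p in Set.Ioc (0:ℝ) P, ‖F k p‖) := by
    apply Summable.of_nonneg_of_le
      (f := fun k => ((1 + μ*P) * ((μ*P*(1+P))^k / (Nat.factorial k : ℝ))) * P)
      (fun k => integral_nonneg (fun p => norm_nonneg _))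
    · intro k
      have h1 : ∫ p in Set.Ioc (0:ℝ) P, ‖F k p‖
          ≤ ∫ _ in Set.Ioc (0:ℝ) P, (1 + μ*P) * ((μ*P*(1+P))^k / (Nat.factorial k : ℝ)) := by
        apply setIntegral_mono_on (hInt k).norm (integrableOn_const measure_Ioc_lt_top.ne)
          measurableSet_Ioc (hbound k)
      refine h1.trans_eq ?_
      rw [setIntegral_const, Real.volume_real_Ioc, smul_eq_mul, sub_zero,
        max_eq_left hP, mul_comm]
    · apply Summable.mul_right
      exact (Real.summable_pow_div_factorial _).mul_left _
  -- the split integrals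
  set A : ℕ → ℝ := fun k => ∫ p in (0:ℝ)..P, Real.exp (-p) * (μ^k * (P-p)^k * Scal k p)
    with hA
  set B : ℕ → ℝ := fun k =>
      ∫ p in (0:ℝ)..P, Real.exp (-p) * (μ^(k+1) * (P-p)^k * (p * Ucal k p)) with hB
  have hIntA : ∀ k, IntervalIntegrable
      (fun p => Real.exp (-p) * (μ^k * (P-p)^k * Scal k p)) volume 0 P := by
    intro k
    have h1 := continuous_Scal k
    apply Continuous.intervalIntegrable
    fun_prop
  have hIntB : ∀ k, IntervalIntegrable
      (fun p => Real.exp (-p) * (μ^(k+1) * (P-p)^k * (p * Ucal k p))) volume 0 P := by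
    intro k
    have h2 := continuous_Ucal k
    apply Continuous.intervalIntegrable
    fun_prop
  have hFk : ∀ k, ∫ p in Set.Ioc (0:ℝ) P, F k p = A k + B k := by
    intro k
    rw [← intervalIntegral.integral_of_le hP, hF, hA, hB,
      intervalIntegral.integral_add (hIntA k) (hIntB k)]
  -- summability of A and B
  have hASum : Summable A := by
    apply Summable.of_norm_bounded
      (g := fun k => ((μ*P*(1+P))^k / (Nat.factorial k : ℝ)) * P)
      ((Real.summable_pow_div_factorial _).mul_right _)
    intro k
    rw [hA]
    have := intervalIntegral.norm_integral_le_of_norm_le_const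
      (C := (μ*P*(1+P))^k / (Nat.factorial k : ℝ))
      (f := fun p => Real.exp (-p) * (μ^k * (P-p)^k * Scal k p)) (a := (0:ℝ)) (b := P) ?_
    · calc ‖∫ p in (0:ℝ)..P, Real.exp (-p) * (μ^k * (P-p)^k * Scal k p)‖
          ≤ (μ*P*(1+P))^k / (Nat.factorial k : ℝ) * |P - 0| := this
        _ = ((μ*P*(1+P))^k / (Nat.factorial k : ℝ)) * P := by
            rw [sub_zero, abs_of_nonneg hP]
    · intro p hp
      rw [Set.uIoc_of_le hP] at hp
      obtain ⟨hp0, hpP⟩ := hp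
      have he : Real.exp (-p) ≤ 1 := Real.exp_le_one_iff.mpr (by linarith)
      have he0 : 0 < Real.exp (-p) := Real.exp_pos _
      have hPp0 : 0 ≤ P - p := by linarith
      have hS : |Scal k p| ≤ (1+P)^k / (Nat.factorial k : ℝ) := by
        refine (abs_Scal_le k p).trans ?_
        apply div_le_div_of_nonneg_right ?_ (by positivity)
        · apply pow_le_pow_left₀ (by positivity)
          rw [abs_of_pos hp0]; linarith
      calc ‖Real.exp (-p) * (μ^k * (P-p)^k * Scal k p)‖
          = Real.exp (-p) * (μ^k * (P-p)^k * |Scal k p|) := by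
            rw [Real.norm_eq_abs, abs_mul, abs_mul, abs_mul, abs_of_pos he0,
              abs_pow, abs_pow, abs_of_nonneg hμ, abs_of_nonneg hPp0]
        _ ≤ 1 * (μ^k * P^k * ((1+P)^k / (Nat.factorial k : ℝ))) := by
            gcongr <;> first | exact hS | linarith
        _ = (μ*P*(1+P))^k / (Nat.factorial k : ℝ) := by rw [mul_pow, mul_pow]; ring
  have hBSum : Summable B := by
    apply Summable.of_norm_bounded
      (g := fun k => (μ*P) * (((μ*P*(1+P))^k / (Nat.factorial k : ℝ)) * P))
      (((Real.summable_pow_div_factorial _).mul_right _).mul_left _)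
    intro k
    rw [hB]
    have := intervalIntegral.norm_integral_le_of_norm_le_const
      (C := (μ*P) * ((μ*P*(1+P))^k / (Nat.factorial k : ℝ)))
      (f := fun p => Real.exp (-p) * (μ^(k+1) * (P-p)^k * (p * Ucal k p)))
      (a := (0:ℝ)) (b := P) ?_
    · calc ‖∫ p in (0:ℝ)..P, Real.exp (-p) * (μ^(k+1) * (P-p)^k * (p * Ucal k p))‖
          ≤ (μ*P) * ((μ*P*(1+P))^k / (Nat.factorial k : ℝ)) * |P - 0| := this
        _ = (μ*P) * (((μ*P*(1+P))^k / (Nat.factorial k : ℝ)) * P) := by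
            rw [sub_zero, abs_of_nonneg hP]; ring
    · intro p hp
      rw [Set.uIoc_of_le hP] at hp
      obtain ⟨hp0, hpP⟩ := hp
      have he : Real.exp (-p) ≤ 1 := Real.exp_le_one_iff.mpr (by linarith)
      have he0 : 0 < Real.exp (-p) := Real.exp_pos _
      have hPp0 : 0 ≤ P - p := by linarith
      have hU : |Ucal k p| ≤ (1+P)^k / (Nat.factorial k : ℝ) := by
        refine (abs_Ucal_le k p).trans ?_
        apply div_le_div_of_nonneg_right ?_ (by positivity)
        · apply pow_le_pow_left₀ (by positivity)
          rw [abs_of_pos hp0]; linarith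
      calc ‖Real.exp (-p) * (μ^(k+1) * (P-p)^k * (p * Ucal k p))‖
          = Real.exp (-p) * (μ^(k+1) * (P-p)^k * (p * |Ucal k p|)) := by
            rw [Real.norm_eq_abs, abs_mul, abs_mul, abs_mul, abs_mul, abs_of_pos he0,
              abs_pow, abs_pow, abs_of_nonneg hμ, abs_of_nonneg hPp0, abs_of_pos hp0]
        _ ≤ 1 * (μ^(k+1) * P^k * (P * ((1+P)^k / (Nat.factorial k : ℝ)))) := by
            gcongr <;> first | exact hU | linarith
        _ = (μ*P) * ((μ*P*(1+P))^k / (Nat.factorial k : ℝ)) := by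
            rw [mul_pow, mul_pow, pow_succ]; ring
  -- pairing: A (k+1) + B k = 0
  have hPair : ∀ k, A (k+1) + B k = 0 := by
    intro k
    rw [hA, hB, ← intervalIntegral.integral_add (hIntA (k+1)) (hIntB k)]
    have : ∀ p : ℝ, Real.exp (-p) * (μ^(k+1) * (P-p)^(k+1) * Scal (k+1) p)
        + Real.exp (-p) * (μ^(k+1) * (P-p)^k * (p * Ucal k p))
        = μ^(k+1) * (Real.exp (-p) * ((P-p)^(k+1) * Scal (k+1) p
            + (P-p)^k * (p * Ucal k p))) := by
      intro p; ring
    simp only [this]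
    rw [intervalIntegral.integral_const_mul, integral_term_zero]
    ring
  -- A 0 = 1 - exp (-P)
  have hA0 : A 0 = 1 - Real.exp (-P) := by
    rw [hA]
    have : ∀ p : ℝ, Real.exp (-p) * (μ^0 * (P-p)^0 * Scal 0 p) = Real.exp (-p) := by
      intro p; rw [Scal_zero]; ring
    simp only [this]
    have hd : ∀ x ∈ Set.uIcc (0:ℝ) P, HasDerivAt (fun p : ℝ => -Real.exp (-p)) (Real.exp (-x)) x := by
      intro x _
      have h1 : HasDerivAt (fun p : ℝ => Real.exp (-p)) (-Real.exp (-x)) x := by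
        simpa [Function.comp_def] using (Real.hasDerivAt_exp (-x)).comp x ((hasDerivAt_id x).neg)
      exact h1.neg.congr_deriv (neg_neg _)
    rw [intervalIntegral.integral_eq_sub_of_hasDerivAt hd
      ((Real.continuous_exp.comp continuous_neg).intervalIntegrable 0 P)]
    simp
    ring
  -- put everything together
  have hpt : ∀ p : ℝ, Real.exp (-p - μ*(P-p)) * (calI0 (μ*p*(P-p)) + μ*p*calI1 (μ*p*(P-p)))
      = ∑' k : ℕ, F k p := fun p => pointwise_expand μ P p
  calc ∫ p in (0:ℝ)..P,
        Real.exp (-p - μ*(P-p)) * (calI0 (μ*p*(P-p)) + μ*p*calI1 (μ*p*(P-p)))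
      = ∫ p in (0:ℝ)..P, ∑' k : ℕ, F k p := by
        apply intervalIntegral.integral_congr
        intro p _
        exact hpt p
    _ = ∫ p in Set.Ioc (0:ℝ) P, ∑' k : ℕ, F k p := intervalIntegral.integral_of_le hP
    _ = ∑' k : ℕ, ∫ p in Set.Ioc (0:ℝ) P, F k p := by
        rw [← MeasureTheory.integral_tsum_of_summable_integral_norm hInt hSumNorm]
    _ = ∑' k : ℕ, (A k + B k) := by
        congr 1; funext k; exact hFk k
    _ = (∑' k : ℕ, A k) + ∑' k : ℕ, B k := Summable.tsum_add hASum hBSum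
    _ = (A 0 + ∑' k : ℕ, A (k+1)) + ∑' k : ℕ, B k := by
        rw [Summable.tsum_eq_zero_add hASum]
    _ = (A 0 + ∑' k : ℕ, (- B k)) + ∑' k : ℕ, B k := by
        have h : ∑' k : ℕ, A (k+1) = ∑' k : ℕ, (- B k) :=
          tsum_congr (fun k => by have := hPair k; linarith)
        rw [h]
    _ = A 0 := by rw [tsum_neg]; ring
    _ = 1 - Real.exp (-P) := hA0

/-- with both velocities positive, the first passage time through `y > 0`
started from state 0 (atom of mass `e^{−λ₀y/γ₀}` at `y/γ₀` plus the absolutely continuous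
part supported on `[y/γ₀, y/γ₁]`) has total mass 1. -/
theorem fpt_state0_total_mass_positive_velocities (l0 l1 g0 g1 y : ℝ)
    (hl0 : 0 < l0) (hl1 : 0 < l1) (hg : g1 < g0) (hg1 : 0 < g1) (hy : 0 < y) :
    Real.exp (-(l0 * y / g0)) +
      ∫ t in (y / g0)..(y / g1),
        l0 * (g1 * calI0 (zf l0 l1 g0 g1 t y) +
              l1 * g0 * xi0 g0 g1 t y * calI1 (zf l0 l1 g0 g1 t y)) *
          thetaf l0 l1 g0 g1 t y
      = 1 := by
  have hg0 : 0 < g0 := lt_trans hg1 hg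
  have hc : 0 < g0 - g1 := by linarith
  set μ : ℝ := l1 * g0 / (l0 * g1) with hμdef
  set P : ℝ := l0 * y / g0 with hPdef
  have hμ : 0 ≤ μ := by positivity
  have hP : 0 ≤ P := by positivity
  set Φ : ℝ → ℝ := fun q =>
    Real.exp (-q - μ*(P-q)) * (calI0 (μ*q*(P-q)) + μ*q*calI1 (μ*q*(P-q))) with hΦ
  set a : ℝ := -(l0 * g1 / (g0 - g1)) with ha
  set b : ℝ := l0 * y / (g0 - g1) with hb
  have ha0 : a ≠ 0 := by
    rw [ha]
    have : 0 < l0 * g1 / (g0 - g1) := by positivity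
    linarith
  -- pointwise identity
  have hpt : ∀ t : ℝ,
      l0 * (g1 * calI0 (zf l0 l1 g0 g1 t y) +
          l1 * g0 * xi0 g0 g1 t y * calI1 (zf l0 l1 g0 g1 t y)) * thetaf l0 l1 g0 g1 t y
      = (l0 * g1 / (g0 - g1)) * Φ (a * t + b) := by
    intro t
    have e1 : μ * (a*t+b) * (P - (a*t+b)) = zf l0 l1 g0 g1 t y := by
      rw [ha, hb, hμdef, hPdef]
      unfold zf xi0 xi1
      field_simp
      ring
    have e2 : -(a*t+b) - μ*(P - (a*t+b))
        = -(l0 * xi0 g0 g1 t y) - l1 * xi1 g0 g1 t y := by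
      rw [ha, hb, hμdef, hPdef]
      unfold xi0 xi1
      field_simp
      ring
    have e3 : μ * (a*t+b) = l1 * g0 / g1 * xi0 g0 g1 t y := by
      rw [ha, hb, hμdef]
      unfold xi0
      field_simp
      ring
    rw [hΦ]
    simp only [e1]
    simp only [e2, e3]
    rw [thetaf]
    field_simp
  rw [intervalIntegral.integral_congr (g := fun t => (l0 * g1 / (g0 - g1)) * Φ (a * t + b))
    (fun t _ => hpt t)]
  rw [intervalIntegral.integral_const_mul]
  have hcomp : ∫ t in (y/g0)..(y/g1), Φ (a * t + b)
      = a⁻¹ • ∫ q in (a*(y/g0)+b)..(a*(y/g1)+b), Φ q :=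
    intervalIntegral.integral_comp_mul_add Φ ha0 b
  have hep1 : a*(y/g0)+b = P := by
    rw [ha, hb, hPdef]; field_simp; ring
  have hep2 : a*(y/g1)+b = 0 := by
    rw [ha, hb]; field_simp; ring
  rw [hcomp, hep1, hep2, intervalIntegral.integral_symm]
  have hcore : ∫ q in (0:ℝ)..P, Φ q = 1 - Real.exp (-P) := core_identity μ P hμ hP
  rw [hcore]
  rw [ha]
  have hgne : g0 - g1 ≠ 0 := ne_of_gt hc
  have : Real.exp (-(l0 * y / g0)) = Real.exp (-P) := by rw [hPdef]
  rw [this]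
  have hl0' := hl0.ne'
  have hg1' := hg1.ne'
  simp only [smul_eq_mul]
  field_simp
  ring
end

section
/- Let λ0, λ1 > 0, γ0 > γ1 > 0 and y > 0. Then e^{−λ1·y/γ1} + ∫_{y/γ0}^{y/γ1} λ1·(γ0·ℐ0(z(t,y)) + λ0·γ1·ξ1(t,y)·ℐ1(z(t,y)))·θ(t,y) dt = 1. (This is the statement of Theorem 2.1 that when both velocities are positive the first passage time T(y) through the level y, started from state 1, is almost surely finite and supported on the segment [y/γ0, y/γ1]: its distribution, an atom of mass e^{−λ1·y/γ1} at t = y/γ1 plus the absolutely continuous part with the stated density, has total mass 1.) -/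
open Real Filter MeasureTheory

noncomputable def pois (x : ℝ) (n : ℕ) : ℝ := x ^ n * Real.exp (-x) / (Nat.factorial n : ℝ)

noncomputable def qp (x : ℝ) (n : ℕ) : ℝ :=
  Real.exp (-x) * ∑ k ∈ Finset.range n, x ^ k / (Nat.factorial k : ℝ)

lemma expPartial_hasDerivAt (n : ℕ) (x : ℝ) :
    HasDerivAt (fun x : ℝ => ∑ k ∈ Finset.range (n+1), x ^ k / (Nat.factorial k : ℝ))
      (∑ k ∈ Finset.range n, x ^ k / (Nat.factorial k : ℝ)) x := by
  induction n with
  | zero =>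
    simp only [Finset.sum_range_one, Finset.sum_range_zero, pow_zero, Nat.factorial_zero]
    simpa using (hasDerivAt_const x (1:ℝ))
  | succ n ih =>
    have h2 : HasDerivAt (fun x : ℝ => x ^ (n+1) / (Nat.factorial (n+1) : ℝ))
        (x ^ n / (Nat.factorial n : ℝ)) x := by
      have := (hasDerivAt_pow (n+1) x).div_const (Nat.factorial (n+1) : ℝ)
      convert this using 1
      · rfl
      · rfl
      push_cast [Nat.factorial_succ]
      field_simp
    have := ih.add h2
    convert this using 1
    · rfl
    · rfl
    · funext y; rw [Finset.sum_range_succ]; rfl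
    · rw [Finset.sum_range_succ]

lemma pois_hasDerivAt (k : ℕ) (x : ℝ) :
    HasDerivAt (fun y => pois y (k+1)) (pois x k - pois x (k+1)) x := by
  have h : HasDerivAt (fun y : ℝ => y ^ (k+1) * Real.exp (-y))
      ((k+1 : ℕ) * x ^ k * Real.exp (-x) + x ^ (k+1) * (-Real.exp (-x))) x := by
    have hexp : HasDerivAt (fun y : ℝ => Real.exp (-y)) (-Real.exp (-x)) x := by
      simpa using ((hasDerivAt_id x).neg).exp
    exact (hasDerivAt_pow (k+1) x).mul hexp
  have := h.div_const (Nat.factorial (k+1) : ℝ)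
  convert this using 1
  · rfl
  · rfl
  · rfl
  simp only [pois]
  have hk : (Nat.factorial k : ℝ) ≠ 0 := Nat.cast_ne_zero.2 (Nat.factorial_ne_zero k)
  have hk1 : (Nat.factorial (k+1) : ℝ) ≠ 0 := Nat.cast_ne_zero.2 (Nat.factorial_ne_zero (k+1))
  rw [Nat.factorial_succ]
  push_cast
  field_simp
  ring

lemma qp_hasDerivAt (n : ℕ) (x : ℝ) :
    HasDerivAt (fun y => qp y (n+1)) (-(pois x n)) x := by
  have h : HasDerivAt (fun y : ℝ => Real.exp (-y) * ∑ k ∈ Finset.range (n+1), y ^ k / (Nat.factorial k : ℝ))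
      ((-Real.exp (-x)) * (∑ k ∈ Finset.range (n+1), x ^ k / (Nat.factorial k : ℝ))
        + Real.exp (-x) * (∑ k ∈ Finset.range n, x ^ k / (Nat.factorial k : ℝ))) x :=
    by
      have hexp : HasDerivAt (fun y : ℝ => Real.exp (-y)) (-Real.exp (-x)) x := by
        simpa using ((hasDerivAt_id x).neg).exp
      exact hexp.mul (expPartial_hasDerivAt n x)
  have := h
  convert this using 1
  · rfl
  simp only [pois, Finset.sum_range_succ]
  ring

lemma pois_abs_le {x R : ℝ} (h : |x| ≤ R) (k : ℕ) :
    |pois x k| ≤ Real.exp R * R ^ k / (Nat.factorial k : ℝ) := by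
  have hR : 0 ≤ R := le_trans (abs_nonneg x) h
  have h1 : |pois x k| = |x| ^ k * Real.exp (-x) / (Nat.factorial k : ℝ) := by
    rw [pois, abs_div, abs_mul, abs_pow, abs_of_pos (Real.exp_pos _),
      Nat.abs_cast]
  rw [h1]
  have h2 : Real.exp (-x) ≤ Real.exp R :=
    Real.exp_le_exp.2 (le_trans (neg_le_abs x) h)
  have hfac : (0:ℝ) < (Nat.factorial k : ℝ) := Nat.cast_pos.2 (Nat.factorial_pos k)
  have hnum : |x| ^ k * Real.exp (-x) ≤ R ^ k * Real.exp R :=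
    mul_le_mul (pow_le_pow_left₀ (abs_nonneg x) h k) h2 (Real.exp_pos _).le (pow_nonneg hR k)
  rw [div_le_div_iff₀ hfac hfac]
  nlinarith [hfac]

lemma qp_abs_le {x R : ℝ} (h : |x| ≤ R) (m : ℕ) :
    |qp x m| ≤ Real.exp R * Real.exp R := by
  have h2 : Real.exp (-x) ≤ Real.exp R :=
    Real.exp_le_exp.2 (le_trans (neg_le_abs x) h)
  have h3 : |∑ k ∈ Finset.range m, x ^ k / (Nat.factorial k : ℝ)| ≤ Real.exp R := by
    calc |∑ k ∈ Finset.range m, x ^ k / (Nat.factorial k : ℝ)|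
        ≤ ∑ k ∈ Finset.range m, |x| ^ k / (Nat.factorial k : ℝ) := by
          refine le_trans (Finset.abs_sum_le_sum_abs _ _) ?_
          refine Finset.sum_le_sum fun k _ => ?_
          rw [abs_div, abs_pow, Nat.abs_cast]
      _ ≤ Real.exp |x| := Real.sum_le_exp_of_nonneg (abs_nonneg x) m
      _ ≤ Real.exp R := Real.exp_le_exp.2 h
  calc |qp x m| = Real.exp (-x) * |∑ k ∈ Finset.range m, x ^ k / (Nat.factorial k : ℝ)| := by
        rw [qp, abs_mul, abs_of_pos (Real.exp_pos _)]
    _ ≤ Real.exp R * Real.exp R := by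
        apply mul_le_mul h2 h3 (abs_nonneg _) (Real.exp_pos _).le

lemma summable_of_bound (f : ℕ → ℝ) (C r : ℝ)
    (h : ∀ n, |f n| ≤ C * (r ^ n / (Nat.factorial n : ℝ))) : Summable f :=
  Summable.of_norm_bounded ((Real.summable_pow_div_factorial r).mul_left C)
    (by simpa [Real.norm_eq_abs] using h)

lemma pois_succ_abs_le (w : ℝ) (n : ℕ) :
    |pois w (n+1)| ≤ Real.exp |w| * |w| * (|w| ^ n / (Nat.factorial n : ℝ)) := by
  have hpos : (0:ℝ) < (Nat.factorial n : ℝ) := Nat.cast_pos.2 (Nat.factorial_pos n)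
  have hpos1 : (0:ℝ) < (Nat.factorial (n+1) : ℝ) := Nat.cast_pos.2 (Nat.factorial_pos (n+1))
  have hle : (Nat.factorial n : ℝ) ≤ (Nat.factorial (n+1) : ℝ) := by
    exact_mod_cast Nat.factorial_le (Nat.le_succ n)
  calc |pois w (n+1)| ≤ Real.exp |w| * |w| ^ (n+1) / (Nat.factorial (n+1) : ℝ) :=
        pois_abs_le le_rfl (n+1)
    _ = Real.exp |w| * |w| ^ (n+1) * (1 / (Nat.factorial (n+1) : ℝ)) := by ring
    _ ≤ Real.exp |w| * |w| ^ (n+1) * (1 / (Nat.factorial n : ℝ)) := by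
        apply mul_le_mul_of_nonneg_left (one_div_le_one_div_of_le hpos hle) (by positivity)
    _ = Real.exp |w| * |w| * (|w| ^ n / (Nat.factorial n : ℝ)) := by rw [pow_succ]; ring

lemma pois_abs_le' (w : ℝ) (a n : ℕ) (ha : a = n ∨ a = n + 1) :
    |pois w a| ≤ Real.exp |w| * (1 + |w|) * (|w| ^ n / (Nat.factorial n : ℝ)) := by
  have hb : (0:ℝ) ≤ |w| ^ n / (Nat.factorial n : ℝ) := by positivity
  have hE : (0:ℝ) ≤ Real.exp |w| := (Real.exp_pos _).le
  rcases ha with h | h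
  · rw [h]
    calc |pois w n| ≤ Real.exp |w| * |w| ^ n / (Nat.factorial n : ℝ) := pois_abs_le le_rfl n
      _ = Real.exp |w| * (|w| ^ n / (Nat.factorial n : ℝ)) := by ring
      _ ≤ Real.exp |w| * (1 + |w|) * (|w| ^ n / (Nat.factorial n : ℝ)) := by
          apply mul_le_mul_of_nonneg_right _ hb
          nlinarith [abs_nonneg w]
  · rw [h]
    calc |pois w (n+1)| ≤ Real.exp |w| * |w| * (|w| ^ n / (Nat.factorial n : ℝ)) :=
        pois_succ_abs_le w n
      _ ≤ Real.exp |w| * (1 + |w|) * (|w| ^ n / (Nat.factorial n : ℝ)) := by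
          apply mul_le_mul_of_nonneg_right _ hb
          nlinarith [abs_nonneg w]

lemma summable_p_q (w x : ℝ) (a b : ℕ → ℕ) (ha : ∀ n, a n = n ∨ a n = n + 1) :
    Summable fun n => pois w (a n) * qp x (b n) := by
  apply summable_of_bound _ (Real.exp |w| * (1 + |w|) * (Real.exp |x| * Real.exp |x|)) |w|
  intro n
  calc |pois w (a n) * qp x (b n)| = |pois w (a n)| * |qp x (b n)| := abs_mul _ _
    _ ≤ (Real.exp |w| * (1 + |w|) * (|w| ^ n / (Nat.factorial n : ℝ))) *
          (Real.exp |x| * Real.exp |x|) :=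
        mul_le_mul (pois_abs_le' w (a n) n (ha n)) (qp_abs_le le_rfl (b n)) (abs_nonneg _)
          (by positivity)
    _ = Real.exp |w| * (1 + |w|) * (Real.exp |x| * Real.exp |x|) *
          (|w| ^ n / (Nat.factorial n : ℝ)) := by ring

lemma summable_pp (w x : ℝ) (a : ℕ → ℕ) (ha : ∀ n, a n = n ∨ a n = n + 1) :
    Summable fun n => pois w (a n) * pois x n := by
  apply summable_of_bound _ (Real.exp |w| * (1 + |w|) * Real.exp |x|) (|w| * |x|)
  intro n
  have h1 : (1:ℝ) ≤ (Nat.factorial n : ℝ) := by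
    exact_mod_cast Nat.one_le_iff_ne_zero.2 (Nat.factorial_ne_zero n)
  have hx : |pois x n| ≤ Real.exp |x| * |x| ^ n := by
    calc |pois x n| ≤ Real.exp |x| * |x| ^ n / (Nat.factorial n : ℝ) := pois_abs_le le_rfl n
      _ ≤ Real.exp |x| * |x| ^ n := by
        rw [div_le_iff₀ (by linarith)]
        nlinarith [mul_nonneg (Real.exp_pos |x|).le (pow_nonneg (abs_nonneg x) n)]
  calc |pois w (a n) * pois x n| = |pois w (a n)| * |pois x n| := abs_mul _ _
    _ ≤ (Real.exp |w| * (1 + |w|) * (|w| ^ n / (Nat.factorial n : ℝ))) *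
          (Real.exp |x| * |x| ^ n) :=
        mul_le_mul (pois_abs_le' w (a n) n (ha n)) hx (abs_nonneg _) (by positivity)
    _ = Real.exp |w| * (1 + |w|) * Real.exp |x| * ((|w| * |x|) ^ n / (Nat.factorial n : ℝ)) := by
        rw [mul_pow]; ring

lemma pois_mul_pois (w x : ℝ) (n : ℕ) :
    pois w n * pois x n
      = Real.exp (-w - x) * ((x * w) ^ n / ((Nat.factorial n : ℝ)) ^ 2) := by
  have hk : (Nat.factorial n : ℝ) ≠ 0 := Nat.cast_ne_zero.2 (Nat.factorial_ne_zero n)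
  rw [pois, pois, mul_pow, show -w - x = -w + -x by ring, Real.exp_add]
  field_simp

lemma pois_succ_mul_pois (w x : ℝ) (n : ℕ) :
    pois w (n+1) * pois x n
      = (Real.exp (-w - x) * w) * ((x * w) ^ n / ((Nat.factorial n : ℝ) * (Nat.factorial (n+1) : ℝ))) := by
  have hk : (Nat.factorial n : ℝ) ≠ 0 := Nat.cast_ne_zero.2 (Nat.factorial_ne_zero n)
  have hk1 : (Nat.factorial (n+1) : ℝ) ≠ 0 := Nat.cast_ne_zero.2 (Nat.factorial_ne_zero (n+1))
  rw [pois, pois, mul_pow, show -w - x = -w + -x by ring, Real.exp_add, pow_succ]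
  field_simp

lemma qp_succ_sub (x : ℝ) (n : ℕ) : qp x (n+1) - qp x n = pois x n := by
  rw [qp, qp, pois, Finset.sum_range_succ]
  ring

lemma tsum_telescope (w x : ℝ) :
    ∑' n, (pois w n - pois w (n+1)) * qp x (n+1) = ∑' n, pois w n * pois x n := by
  have S1 : Summable fun n => pois w n * qp x (n+1) :=
    summable_p_q w x _ _ (fun n => Or.inl rfl)
  have S2 : Summable fun n => pois w (n+1) * qp x (n+1) :=
    summable_p_q w x _ _ (fun n => Or.inr rfl)
  have S0 : Summable fun n => pois w n * qp x n :=
    summable_p_q w x _ _ (fun n => Or.inl rfl)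
  have h0 : pois w 0 * qp x 0 = 0 := by simp [qp]
  have h2 : ∑' n, pois w (n+1) * qp x (n+1) = ∑' n, pois w n * qp x n := by
    have := Summable.tsum_eq_zero_add S0
    rw [h0, zero_add] at this
    exact this.symm
  calc ∑' n, (pois w n - pois w (n+1)) * qp x (n+1)
      = ∑' n, (pois w n * qp x (n+1) - pois w (n+1) * qp x (n+1)) :=
        tsum_congr fun n => by ring
    _ = (∑' n, pois w n * qp x (n+1)) - ∑' n, pois w (n+1) * qp x (n+1) :=
        Summable.tsum_sub S1 S2
    _ = (∑' n, pois w n * qp x (n+1)) - ∑' n, pois w n * qp x n := by rw [h2]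
    _ = ∑' n, (pois w n * qp x (n+1) - pois w n * qp x n) := (Summable.tsum_sub S1 S0).symm
    _ = ∑' n, pois w n * pois x n := tsum_congr fun n => by rw [← mul_sub, qp_succ_sub]

lemma tsum_pois_pois (w x : ℝ) :
    ∑' n, pois w n * pois x n = Real.exp (-w - x) * calI0 (x * w) := by
  rw [calI0, ← tsum_mul_left]
  exact tsum_congr fun n => pois_mul_pois w x n

lemma tsum_pois_succ_pois (w x : ℝ) :
    ∑' n, pois w (n+1) * pois x n = Real.exp (-w - x) * (w * calI1 (x * w)) := by
  rw [show Real.exp (-w - x) * (w * calI1 (x*w)) = (Real.exp (-w-x) * w) * calI1 (x*w) by ring,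
    calI1, ← tsum_mul_left]
  exact tsum_congr fun n => pois_succ_mul_pois w x n

lemma tsum_gDeriv (c1 c2 w x : ℝ) :
    ∑' n, (c1 * ((pois w n - pois w (n+1)) * qp x (n+1)) + c2 * (pois w (n+1) * pois x n))
      = c1 * (Real.exp (-w - x) * calI0 (x * w))
        + c2 * (Real.exp (-w - x) * (w * calI1 (x * w))) := by
  have S1 : Summable fun n => pois w n * qp x (n+1) :=
    summable_p_q w x _ _ (fun n => Or.inl rfl)
  have S2 : Summable fun n => pois w (n+1) * qp x (n+1) :=
    summable_p_q w x _ _ (fun n => Or.inr rfl)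
  have Sd : Summable fun n => (pois w n - pois w (n+1)) * qp x (n+1) :=
    (S1.sub S2).congr (fun n => by ring)
  have Sp : Summable fun n => pois w (n+1) * pois x n :=
    summable_pp w x _ (fun n => Or.inr rfl)
  rw [Summable.tsum_add (Sd.mul_left c1) (Sp.mul_left c2), tsum_mul_left, tsum_mul_left,
    tsum_telescope, tsum_pois_pois, tsum_pois_succ_pois]

lemma tsum_pois_succ (w : ℝ) : ∑' n, pois w (n+1) = 1 - Real.exp (-w) := by
  have hsum : Summable fun n : ℕ => w ^ n / (Nat.factorial n : ℝ) :=
    Real.summable_pow_div_factorial w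
  have hexp : ∑' n : ℕ, w ^ n / (Nat.factorial n : ℝ) = Real.exp w := by
    rw [Real.exp_eq_exp_ℝ, NormedSpace.exp_eq_tsum_div]
  have h := Summable.tsum_eq_zero_add hsum
  rw [hexp] at h
  simp only [pow_zero, Nat.factorial_zero, Nat.cast_one] at h
  have h2 : ∑' n : ℕ, w ^ (n+1) / (Nat.factorial (n+1) : ℝ) = Real.exp w - 1 := by
    rw [h]; ring
  calc ∑' n, pois w (n+1)
      = ∑' n : ℕ, Real.exp (-w) * (w ^ (n+1) / (Nat.factorial (n+1) : ℝ)) :=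
        tsum_congr fun n => by rw [pois]; ring
    _ = Real.exp (-w) * (Real.exp w - 1) := by rw [tsum_mul_left, h2]
    _ = 1 - Real.exp (-w) := by rw [mul_sub, ← Real.exp_add]; simp

lemma qp_zero_succ (n : ℕ) : qp 0 (n+1) = 1 := by
  rw [qp]
  simp only [neg_zero, Real.exp_zero, one_mul]
  rw [Finset.sum_eq_single 0]
  · simp
  · intro b _ hb
    rw [zero_pow hb]; simp
  · intro h; exact absurd (Finset.mem_range.2 (Nat.succ_pos n)) h

noncomputable def gTerm (l0 l1 g0 g1 y t : ℝ) (n : ℕ) : ℝ :=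
  pois (l1 * xi1 g0 g1 t y) (n+1) * qp (l0 * xi0 g0 g1 t y) (n+1)

noncomputable def gDeriv (l0 l1 g0 g1 y t : ℝ) (n : ℕ) : ℝ :=
  (l1 * g0 / (g0 - g1)) *
      ((pois (l1 * xi1 g0 g1 t y) n - pois (l1 * xi1 g0 g1 t y) (n+1)) *
        qp (l0 * xi0 g0 g1 t y) (n+1))
    + (l0 * g1 / (g0 - g1)) *
      (pois (l1 * xi1 g0 g1 t y) (n+1) * pois (l0 * xi0 g0 g1 t y) n)

lemma xi1_hasDerivAt (l1 g0 g1 y t : ℝ) :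
    HasDerivAt (fun t => l1 * xi1 g0 g1 t y) (l1 * g0 / (g0 - g1)) t := by
  have h : HasDerivAt (fun t : ℝ => l1 * ((g0 * t - y) / (g0 - g1)))
      (l1 * (g0 * 1 / (g0 - g1))) t :=
    ((((hasDerivAt_id t).const_mul g0).sub_const y).div_const (g0 - g1)).const_mul l1
  simp only [xi1]
  convert h using 1
  ring

lemma xi0_hasDerivAt (l0 g0 g1 y t : ℝ) :
    HasDerivAt (fun t => l0 * xi0 g0 g1 t y) (-(l0 * g1 / (g0 - g1))) t := by
  have h : HasDerivAt (fun t : ℝ => l0 * ((y - g1 * t) / (g0 - g1)))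
      (l0 * ((0 - g1 * 1) / (g0 - g1))) t :=
    (((hasDerivAt_const t y).sub ((hasDerivAt_id t).const_mul g1)).div_const (g0 - g1)).const_mul l0
  simp only [xi0]
  convert h using 1
  ring

lemma gTerm_hasDerivAt (l0 l1 g0 g1 y t : ℝ) (n : ℕ) :
    HasDerivAt (fun t => gTerm l0 l1 g0 g1 y t n) (gDeriv l0 l1 g0 g1 y t n) t := by
  have hp : HasDerivAt (fun t => pois (l1 * xi1 g0 g1 t y) (n+1))
      ((pois (l1 * xi1 g0 g1 t y) n - pois (l1 * xi1 g0 g1 t y) (n+1)) * (l1 * g0 / (g0 - g1))) t :=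
    HasDerivAt.comp (h₂ := fun w => pois w (n+1)) t (pois_hasDerivAt n (l1 * xi1 g0 g1 t y)) (xi1_hasDerivAt l1 g0 g1 y t)
  have hq : HasDerivAt (fun t => qp (l0 * xi0 g0 g1 t y) (n+1))
      ((-(pois (l0 * xi0 g0 g1 t y) n)) * (-(l0 * g1 / (g0 - g1)))) t :=
    HasDerivAt.comp (h₂ := fun w => qp w (n+1)) t (qp_hasDerivAt n (l0 * xi0 g0 g1 t y)) (xi0_hasDerivAt l0 g0 g1 y t)
  have := hp.mul hq
  simp only [gTerm, gDeriv]
  convert this using 1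
  · rfl
  · rfl
  · rfl
  ring

lemma pois_continuous (k : ℕ) : Continuous fun x : ℝ => pois x k := by
  simp only [pois]
  exact ((continuous_pow k).mul (continuous_neg.rexp)).div_const _

lemma qp_continuous (m : ℕ) : Continuous fun x : ℝ => qp x m := by
  simp only [qp]
  exact (continuous_neg.rexp).mul
    (continuous_finset_sum _ fun k _ => (continuous_pow k).div_const _)

lemma gDeriv_continuous (l0 l1 g0 g1 y : ℝ) (n : ℕ) :
    Continuous fun t => gDeriv l0 l1 g0 g1 y t n := by
  have h1 : Continuous fun t => l1 * xi1 g0 g1 t y := by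
    simp only [xi1]; fun_prop
  have h0 : Continuous fun t => l0 * xi0 g0 g1 t y := by
    simp only [xi0]; fun_prop
  exact ((continuous_const.mul ((((pois_continuous n).comp h1).sub
      ((pois_continuous (n+1)).comp h1)).mul ((qp_continuous (n+1)).comp h0)))).add
    (continuous_const.mul (((pois_continuous (n+1)).comp h1).mul ((pois_continuous n).comp h0)))

lemma pois_succ_abs_le'' {w R : ℝ} (hw : |w| ≤ R) (n : ℕ) :
    |pois w (n+1)| ≤ Real.exp R * R * (R ^ n / (Nat.factorial n : ℝ)) := by
  have hpos : (0:ℝ) < (Nat.factorial n : ℝ) := Nat.cast_pos.2 (Nat.factorial_pos n)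
  have hle : (Nat.factorial n : ℝ) ≤ (Nat.factorial (n+1) : ℝ) := by
    exact_mod_cast Nat.factorial_le (Nat.le_succ n)
  have hR : 0 ≤ R := le_trans (abs_nonneg w) hw
  calc |pois w (n+1)| ≤ Real.exp R * R ^ (n+1) / (Nat.factorial (n+1) : ℝ) :=
        pois_abs_le hw (n+1)
    _ = Real.exp R * R ^ (n+1) * (1 / (Nat.factorial (n+1) : ℝ)) := by ring
    _ ≤ Real.exp R * R ^ (n+1) * (1 / (Nat.factorial n : ℝ)) := by
        apply mul_le_mul_of_nonneg_left (one_div_le_one_div_of_le hpos hle) (by positivity)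
    _ = Real.exp R * R * (R ^ n / (Nat.factorial n : ℝ)) := by rw [pow_succ]; ring

lemma pois_abs_le'' {w R : ℝ} (hw : |w| ≤ R) (a n : ℕ) (ha : a = n ∨ a = n + 1) :
    |pois w a| ≤ Real.exp R * (1 + R) * (R ^ n / (Nat.factorial n : ℝ)) := by
  have hR : 0 ≤ R := le_trans (abs_nonneg w) hw
  have hb : (0:ℝ) ≤ R ^ n / (Nat.factorial n : ℝ) := by positivity
  rcases ha with h | h
  · rw [h]
    calc |pois w n| ≤ Real.exp R * R ^ n / (Nat.factorial n : ℝ) := pois_abs_le hw n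
      _ = Real.exp R * (R ^ n / (Nat.factorial n : ℝ)) := by ring
      _ ≤ Real.exp R * (1 + R) * (R ^ n / (Nat.factorial n : ℝ)) := by
          apply mul_le_mul_of_nonneg_right _ hb
          nlinarith [Real.exp_pos R]
  · rw [h]
    calc |pois w (n+1)| ≤ Real.exp R * R * (R ^ n / (Nat.factorial n : ℝ)) :=
        pois_succ_abs_le'' hw n
      _ ≤ Real.exp R * (1 + R) * (R ^ n / (Nat.factorial n : ℝ)) := by
          apply mul_le_mul_of_nonneg_right _ hb
          nlinarith [Real.exp_pos R]

lemma gDeriv_abs_le (c1 c2 w x R : ℝ) (hc1 : 0 ≤ c1) (hc2 : 0 ≤ c2)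
    (hw : |w| ≤ R) (hx : |x| ≤ R) (n : ℕ) :
    |c1 * ((pois w n - pois w (n+1)) * qp x (n+1)) + c2 * (pois w (n+1) * pois x n)|
      ≤ (c1 * (2 * (Real.exp R * (1 + R)) * (Real.exp R * Real.exp R))) * (R ^ n / (Nat.factorial n : ℝ))
        + (c2 * ((Real.exp R * (1 + R)) * (Real.exp R * (1 + R)))) * ((R * R) ^ n / (Nat.factorial n : ℝ)) := by
  have hR : 0 ≤ R := le_trans (abs_nonneg w) hw
  have hfac1 : (1:ℝ) ≤ (Nat.factorial n : ℝ) := by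
    exact_mod_cast Nat.one_le_iff_ne_zero.2 (Nat.factorial_ne_zero n)
  have hb : (0:ℝ) ≤ R ^ n / (Nat.factorial n : ℝ) := by positivity
  have e1 : |pois w n - pois w (n+1)| ≤ 2 * (Real.exp R * (1 + R)) * (R ^ n / (Nat.factorial n : ℝ)) := by
    calc |pois w n - pois w (n+1)| ≤ |pois w n| + |pois w (n+1)| := abs_sub _ _
      _ ≤ Real.exp R * (1 + R) * (R ^ n / (Nat.factorial n : ℝ))
            + Real.exp R * (1 + R) * (R ^ n / (Nat.factorial n : ℝ)) :=
          add_le_add (pois_abs_le'' hw n n (Or.inl rfl)) (pois_abs_le'' hw (n+1) n (Or.inr rfl))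
      _ = 2 * (Real.exp R * (1 + R)) * (R ^ n / (Nat.factorial n : ℝ)) := by ring
  have e2 : |qp x (n+1)| ≤ Real.exp R * Real.exp R := qp_abs_le hx (n+1)
  have e3 : |pois w (n+1)| ≤ Real.exp R * (1 + R) * (R ^ n / (Nat.factorial n : ℝ)) :=
    pois_abs_le'' hw (n+1) n (Or.inr rfl)
  have e4 : |pois x n| ≤ Real.exp R * (1 + R) * R ^ n := by
    calc |pois x n| ≤ Real.exp R * (1 + R) * (R ^ n / (Nat.factorial n : ℝ)) :=
        pois_abs_le'' hx n n (Or.inl rfl)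
      _ ≤ Real.exp R * (1 + R) * R ^ n := by
        apply mul_le_mul_of_nonneg_left _ (by positivity)
        rw [div_le_iff₀ (by linarith)]
        nlinarith [pow_nonneg hR n]
  calc |c1 * ((pois w n - pois w (n+1)) * qp x (n+1)) + c2 * (pois w (n+1) * pois x n)|
      ≤ c1 * (|pois w n - pois w (n+1)| * |qp x (n+1)|)
          + c2 * (|pois w (n+1)| * |pois x n|) := by
        refine le_trans (abs_add_le _ _) (add_le_add ?_ ?_) <;>
          rw [abs_mul, abs_mul] <;> gcongr <;> simp [abs_of_nonneg, hc1, hc2, le_refl]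
    _ ≤ c1 * ((2 * (Real.exp R * (1 + R)) * (R ^ n / (Nat.factorial n : ℝ))) * (Real.exp R * Real.exp R))
          + c2 * ((Real.exp R * (1 + R) * (R ^ n / (Nat.factorial n : ℝ))) * (Real.exp R * (1 + R) * R ^ n)) := by
        refine add_le_add ?_ ?_
        · exact mul_le_mul_of_nonneg_left
            (mul_le_mul e1 e2 (abs_nonneg _) (by positivity)) hc1
        · exact mul_le_mul_of_nonneg_left
            (mul_le_mul e3 e4 (abs_nonneg _) (by positivity)) hc2
    _ = (c1 * (2 * (Real.exp R * (1 + R)) * (Real.exp R * Real.exp R))) * (R ^ n / (Nat.factorial n : ℝ))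
          + (c2 * ((Real.exp R * (1 + R)) * (Real.exp R * (1 + R)))) * ((R * R) ^ n / (Nat.factorial n : ℝ)) := by
        rw [mul_pow]
        ring

/-- with both velocities positive, the first passage time through `y > 0`
started from state 1 (atom of mass `e^{−λ₁y/γ₁}` at `y/γ₁` plus the absolutely continuous
part supported on `[y/γ₀, y/γ₁]`) has total mass 1. -/
theorem fpt_state1_total_mass_positive_velocities (l0 l1 g0 g1 y : ℝ)
    (hl0 : 0 < l0) (hl1 : 0 < l1) (hg : g1 < g0) (hg1 : 0 < g1) (hy : 0 < y) :
    Real.exp (-(l1 * y / g1)) +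
      ∫ t in (y / g0)..(y / g1),
        l1 * (g0 * calI0 (zf l0 l1 g0 g1 t y) +
              l0 * g1 * xi1 g0 g1 t y * calI1 (zf l0 l1 g0 g1 t y)) *
          thetaf l0 l1 g0 g1 t y
      = 1 := by
  have hg0 : 0 < g0 := hg1.trans hg
  have hD : 0 < g0 - g1 := sub_pos.2 hg
  have hab : y / g0 < y / g1 := div_lt_div_of_pos_left hy hg1 hg
  have hc1 : 0 ≤ l1 * g0 / (g0 - g1) := div_nonneg (by positivity) hD.le
  have hc2 : 0 ≤ l0 * g1 / (g0 - g1) := div_nonneg (by positivity) hD.le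
  set A : ℝ := y / g0 - 1 with hA
  set B : ℝ := y / g1 + 1 with hB
  set R : ℝ := (l0 + l1) * (y + g0 * (|A| + |B|)) / (g0 - g1) + 1 with hRdef
  have hMD : 0 ≤ (y + g0 * (|A| + |B|)) / (g0 - g1) := div_nonneg (by positivity) hD.le
  have hbounds : ∀ t ∈ Set.Ioo A B, |l1 * xi1 g0 g1 t y| ≤ R ∧ |l0 * xi0 g0 g1 t y| ≤ R := by
    intro t ht
    have ht1 : |t| ≤ |A| + |B| := by
      rw [abs_le]
      constructor
      · have h1 := neg_abs_le A
        have h2 := abs_nonneg B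
        have := ht.1
        linarith
      · have h1 := le_abs_self B
        have h2 := abs_nonneg A
        have := ht.2
        linarith
    have habs : 0 ≤ |t| := abs_nonneg t
    have hRsplit : R = (l0 + l1) * ((y + g0 * (|A| + |B|)) / (g0 - g1)) + 1 := by
      rw [hRdef, mul_div_assoc]
    constructor
    · rw [xi1, abs_mul, abs_div, abs_of_pos hl1, abs_of_pos hD]
      have h2 : |g0 * t - y| ≤ y + g0 * (|A| + |B|) := by
        calc |g0 * t - y| ≤ |g0 * t| + |y| := abs_sub _ _
          _ = g0 * |t| + y := by rw [abs_mul, abs_of_pos hg0, abs_of_pos hy]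
          _ ≤ y + g0 * (|A| + |B|) := by nlinarith
      calc l1 * (|g0 * t - y| / (g0 - g1))
          ≤ l1 * ((y + g0 * (|A| + |B|)) / (g0 - g1)) := by gcongr
        _ ≤ (l0 + l1) * ((y + g0 * (|A| + |B|)) / (g0 - g1)) + 1 := by nlinarith
        _ = R := hRsplit.symm
    · rw [xi0, abs_mul, abs_div, abs_of_pos hl0, abs_of_pos hD]
      have h2 : |y - g1 * t| ≤ y + g0 * (|A| + |B|) := by
        calc |y - g1 * t| ≤ |y| + |g1 * t| := abs_sub _ _
          _ = y + g1 * |t| := by rw [abs_mul, abs_of_pos hg1, abs_of_pos hy]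
          _ ≤ y + g0 * (|A| + |B|) := by nlinarith
      calc l0 * (|y - g1 * t| / (g0 - g1))
          ≤ l0 * ((y + g0 * (|A| + |B|)) / (g0 - g1)) := by gcongr
        _ ≤ (l0 + l1) * ((y + g0 * (|A| + |B|)) / (g0 - g1)) + 1 := by nlinarith
        _ = R := hRsplit.symm
  have hu : Summable (fun n : ℕ =>
      ((l1 * g0 / (g0 - g1)) * (2 * (Real.exp R * (1 + R)) * (Real.exp R * Real.exp R)))
          * (R ^ n / (Nat.factorial n : ℝ))
        + ((l0 * g1 / (g0 - g1)) * ((Real.exp R * (1 + R)) * (Real.exp R * (1 + R))))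
          * ((R * R) ^ n / (Nat.factorial n : ℝ))) :=
    ((Real.summable_pow_div_factorial R).mul_left _).add
      ((Real.summable_pow_div_factorial (R * R)).mul_left _)
  have hbd : ∀ (n : ℕ), ∀ t ∈ Set.Ioo A B, ‖gDeriv l0 l1 g0 g1 y t n‖ ≤
      ((l1 * g0 / (g0 - g1)) * (2 * (Real.exp R * (1 + R)) * (Real.exp R * Real.exp R)))
          * (R ^ n / (Nat.factorial n : ℝ))
        + ((l0 * g1 / (g0 - g1)) * ((Real.exp R * (1 + R)) * (Real.exp R * (1 + R))))
          * ((R * R) ^ n / (Nat.factorial n : ℝ)) := by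
    intro n t ht
    rw [Real.norm_eq_abs, gDeriv]
    exact gDeriv_abs_le _ _ _ _ R hc1 hc2 (hbounds t ht).1 (hbounds t ht).2 n
  have hsub : Set.uIcc (y / g0) (y / g1) ⊆ Set.Ioo A B := by
    rw [Set.uIcc_of_le hab.le]
    intro t ht
    exact ⟨by simp only [hA]; linarith [ht.1], by simp only [hB]; linarith [ht.2]⟩
  have hmem0 : y / g0 ∈ Set.Ioo A B := ⟨by simp only [hA]; linarith, by simp only [hB]; linarith⟩
  have hsum0 : Summable fun n => gTerm l0 l1 g0 g1 y (y / g0) n := by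
    simp only [gTerm]
    exact summable_p_q _ _ (fun n => n + 1) (fun n => n + 1) (fun n => Or.inr rfl)
  have hF : ∀ t ∈ Set.uIcc (y / g0) (y / g1),
      HasDerivAt (fun s => ∑' n, gTerm l0 l1 g0 g1 y s n)
        (∑' n, gDeriv l0 l1 g0 g1 y t n) t := by
    intro t ht
    exact hasDerivAt_tsum_of_isPreconnected hu isOpen_Ioo isPreconnected_Ioo
      (fun n s _ => gTerm_hasDerivAt l0 l1 g0 g1 y s n)
      (fun n s hs => hbd n s hs) hmem0 hsum0 (hsub ht)
  have hpt : ∀ t, ∑' n, gDeriv l0 l1 g0 g1 y t n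
      = l1 * (g0 * calI0 (zf l0 l1 g0 g1 t y) +
              l0 * g1 * xi1 g0 g1 t y * calI1 (zf l0 l1 g0 g1 t y)) *
          thetaf l0 l1 g0 g1 t y := by
    intro t
    have hz : zf l0 l1 g0 g1 t y = (l0 * xi0 g0 g1 t y) * (l1 * xi1 g0 g1 t y) := by
      rw [zf]; ring
    have hexp : (-(l1 * xi1 g0 g1 t y) - l0 * xi0 g0 g1 t y)
        = (-(l0 * xi0 g0 g1 t y) - l1 * xi1 g0 g1 t y) := by ring
    have key := tsum_gDeriv (l1 * g0 / (g0 - g1)) (l0 * g1 / (g0 - g1))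
      (l1 * xi1 g0 g1 t y) (l0 * xi0 g0 g1 t y)
    simp only [gDeriv]
    rw [key, thetaf, hz, hexp]
    field_simp
  have hcont : ContinuousOn
      (fun t => l1 * (g0 * calI0 (zf l0 l1 g0 g1 t y) +
              l0 * g1 * xi1 g0 g1 t y * calI1 (zf l0 l1 g0 g1 t y)) *
          thetaf l0 l1 g0 g1 t y) (Set.uIcc (y / g0) (y / g1)) := by
    have heq : (fun t => l1 * (g0 * calI0 (zf l0 l1 g0 g1 t y) +
              l0 * g1 * xi1 g0 g1 t y * calI1 (zf l0 l1 g0 g1 t y)) *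
          thetaf l0 l1 g0 g1 t y) = fun t => ∑' n, gDeriv l0 l1 g0 g1 y t n :=
      funext fun t => (hpt t).symm
    rw [heq]
    apply (tendstoUniformlyOn_tsum hu (fun n t ht => hbd n t (hsub ht))).continuousOn
    refine Filter.Frequently.of_forall fun N => ?_
    exact (continuous_finset_sum _ fun n _ => gDeriv_continuous l0 l1 g0 g1 y n).continuousOn
  have hint := intervalIntegral.integral_eq_sub_of_hasDerivAt
    (f := fun s => ∑' n, gTerm l0 l1 g0 g1 y s n)
    (f' := fun t => l1 * (g0 * calI0 (zf l0 l1 g0 g1 t y) +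
              l0 * g1 * xi1 g0 g1 t y * calI1 (zf l0 l1 g0 g1 t y)) *
          thetaf l0 l1 g0 g1 t y)
    (fun t ht => by
      have h := hF t ht
      rw [hpt t] at h
      exact h)
    (hcont.intervalIntegrable)
  rw [hint]
  have hxi1a : xi1 g0 g1 (y / g0) y = 0 := by
    rw [xi1]
    field_simp
    ring
  have hxi0b : xi0 g0 g1 (y / g1) y = 0 := by
    rw [xi0]
    field_simp
    ring
  have hxi1b : xi1 g0 g1 (y / g1) y = y / g1 := by
    rw [xi1]
    rw [div_eq_div_iff hD.ne' hg1.ne']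
    field_simp
  have hFa : ∑' n, gTerm l0 l1 g0 g1 y (y / g0) n = 0 := by
    have hz : ∀ n : ℕ, gTerm l0 l1 g0 g1 y (y / g0) n = 0 := by
      intro n
      rw [gTerm, hxi1a, mul_zero, pois]
      simp [zero_pow (Nat.succ_ne_zero n)]
    rw [tsum_congr hz]
    exact tsum_zero
  have hFb : ∑' n, gTerm l0 l1 g0 g1 y (y / g1) n = 1 - Real.exp (-(l1 * (y / g1))) := by
    have hz : ∀ n : ℕ, gTerm l0 l1 g0 g1 y (y / g1) n = pois (l1 * (y / g1)) (n + 1) := by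
      intro n
      rw [gTerm, hxi0b, hxi1b, mul_zero, qp_zero_succ, mul_one]
    rw [tsum_congr hz, tsum_pois_succ]
  simp only [hFa, hFb]
  rw [mul_div_assoc]
  ring
end

section
/- Assume the Kac-type scaling: sequences λ0_k, λ1_k > 0 and γ0_k > 0 > γ1_k satisfy λ0_k → ∞, λ1_k → ∞, λ0_k/λ1_k → ν² for some ν > 0, γ0_k/√λ0_k → σ0 and γ1_k/√λ1_k → −σ1 with σ0, σ1 > 0, and (γ0_k·λ1_k + γ1_k·λ0_k)/(λ0_k + λ1_k) → δ. Fix t > 0 and y ∈ ℝ. Then the exponent in the telegraph density converges: (√(λ0_k·ξ0_k(t,y)) − √(λ1_k·ξ1_k(t,y)))² → (y − δ·t)²/(2·Σ²·t) as k → ∞, where Σ = σ0·σ1/√((σ0² + σ1²)/2). Equivalently, λ0_k·ξ0_k(t,y) + λ1_k·ξ1_k(t,y) − 2√(z_k(t,y)) → (y − δ·t)²/(2·Σ²·t). -/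
open Real Filter MeasureTheory

set_option maxHeartbeats 2000000 in
/-- the key exponent limit behind the Kac scaling — under the Kac-type scaling
the exponent of the telegraph density converges to the Gaussian exponent
`(y − δt)²/(2Σ²t)` with `Σ = σ₀σ₁/√((σ₀²+σ₁²)/2)`, in both equivalent forms. -/
theorem kac_scaling_exponent_limit (l0 l1 g0 g1 : ℕ → ℝ) (ν σ0 σ1 δ t y : ℝ)
    (hl0 : ∀ k, 0 < l0 k) (hl1 : ∀ k, 0 < l1 k)
    (hg0 : ∀ k, 0 < g0 k) (hg1 : ∀ k, g1 k < 0)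
    (hν : 0 < ν) (hσ0 : 0 < σ0) (hσ1 : 0 < σ1)
    (hl0top : Tendsto l0 atTop atTop) (hl1top : Tendsto l1 atTop atTop)
    (hratio : Tendsto (fun k => l0 k / l1 k) atTop (nhds (ν ^ 2)))
    (hv0 : Tendsto (fun k => g0 k / Real.sqrt (l0 k)) atTop (nhds σ0))
    (hv1 : Tendsto (fun k => g1 k / Real.sqrt (l1 k)) atTop (nhds (-σ1)))
    (hdrift : Tendsto (fun k => (g0 k * l1 k + g1 k * l0 k) / (l0 k + l1 k)) atTop (nhds δ))
    (ht : 0 < t) :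
    Tendsto (fun k =>
        (Real.sqrt (l0 k * xi0 (g0 k) (g1 k) t y) -
          Real.sqrt (l1 k * xi1 (g0 k) (g1 k) t y)) ^ 2)
      atTop
      (nhds ((y - δ * t) ^ 2 /
        (2 * (σ0 * σ1 / Real.sqrt ((σ0 ^ 2 + σ1 ^ 2) / 2)) ^ 2 * t))) ∧
    Tendsto (fun k =>
        l0 k * xi0 (g0 k) (g1 k) t y + l1 k * xi1 (g0 k) (g1 k) t y -
          2 * Real.sqrt (zf (l0 k) (l1 k) (g0 k) (g1 k) t y))
      atTop
      (nhds ((y - δ * t) ^ 2 /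
        (2 * (σ0 * σ1 / Real.sqrt ((σ0 ^ 2 + σ1 ^ 2) / 2)) ^ 2 * t))) := by
  have hs0pos : ∀ k, 0 < Real.sqrt (l0 k) := fun k => Real.sqrt_pos.2 (hl0 k)
  have hs1pos : ∀ k, 0 < Real.sqrt (l1 k) := fun k => Real.sqrt_pos.2 (hl1 k)
  have hs0sq : ∀ k, Real.sqrt (l0 k) ^ 2 = l0 k := fun k => Real.sq_sqrt (hl0 k).le
  have hs1sq : ∀ k, Real.sqrt (l1 k) ^ 2 = l1 k := fun k => Real.sq_sqrt (hl1 k).le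
  have hsum : ∀ k, 0 < l0 k + l1 k := fun k => add_pos (hl0 k) (hl1 k)
  have hgg : ∀ k, 0 < g0 k - g1 k := fun k => sub_pos.2 ((hg1 k).trans (hg0 k))
  have sqrtTop : Tendsto Real.sqrt atTop atTop := by
    refine tendsto_atTop_atTop.2 fun b => ⟨(max 0 b)^2, fun a ha => ?_⟩
    have h : max 0 b ≤ Real.sqrt a := by
      rw [← Real.sqrt_sq (le_max_left 0 b)]; exact Real.sqrt_le_sqrt ha
    exact (le_max_right 0 b).trans h
  have hs0top : Tendsto (fun k => Real.sqrt (l0 k)) atTop atTop := sqrtTop.comp hl0top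
  have hs1top : Tendsto (fun k => Real.sqrt (l1 k)) atTop atTop := sqrtTop.comp hl1top
  have hw : (0:ℝ) < ν^2 + 1 := by positivity
  -- ratio limits
  have hr : Tendsto (fun k => Real.sqrt (l0 k) / Real.sqrt (l1 k)) atTop (nhds ν) := by
    have h1 : Tendsto (fun k => Real.sqrt (l0 k / l1 k)) atTop (nhds (Real.sqrt (ν^2))) :=
      hratio.sqrt
    rw [Real.sqrt_sq hν.le] at h1
    exact h1.congr fun k => by rw [Real.sqrt_div (hl0 k).le]
  have hr' : Tendsto (fun k => Real.sqrt (l1 k) / Real.sqrt (l0 k)) atTop (nhds ν⁻¹) :=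
    (hr.inv₀ hν.ne').congr fun k => by rw [inv_div]
  have hL0 : Tendsto (fun k => l0 k / (l0 k + l1 k)) atTop (nhds (ν^2 / (ν^2 + 1))) := by
    have h2 := hratio.div (hratio.add (tendsto_const_nhds (x := (1:ℝ)))) hw.ne'
    refine h2.congr fun k => ?_
    simp only [Pi.div_apply]
    have hpos : 0 < l0 k / l1 k + 1 := add_pos (div_pos (hl0 k) (hl1 k)) one_pos
    have h1 := (hl1 k).ne'
    rw [div_eq_div_iff hpos.ne' (hsum k).ne']
    field_simp
  have hL1 : Tendsto (fun k => l1 k / (l0 k + l1 k)) atTop (nhds (1 / (ν^2 + 1))) := by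
    have h2 := (tendsto_const_nhds (x := (1:ℝ))).div
      (hratio.add (tendsto_const_nhds (x := (1:ℝ)))) hw.ne'
    refine h2.congr fun k => ?_
    simp only [Pi.div_apply]
    have hpos : 0 < l0 k / l1 k + 1 := add_pos (div_pos (hl0 k) (hl1 k)) one_pos
    have h1 := (hl1 k).ne'
    rw [div_eq_div_iff hpos.ne' (hsum k).ne']
    field_simp
  -- derive σ0 = σ1 * ν from the drift hypothesis
  have hσν : σ0 = σ1 * ν := by
    have hinv : Tendsto (fun k => (Real.sqrt (l0 k))⁻¹) atTop (nhds 0) :=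
      hs0top.inv_tendsto_atTop
    have hd0 : Tendsto (fun k =>
        ((g0 k * l1 k + g1 k * l0 k) / (l0 k + l1 k)) * (Real.sqrt (l0 k))⁻¹) atTop
        (nhds (δ * 0)) := hdrift.mul hinv
    rw [mul_zero] at hd0
    have halt : Tendsto (fun k =>
        (g0 k / Real.sqrt (l0 k)) * (l1 k / (l0 k + l1 k)) +
          (g1 k / Real.sqrt (l1 k)) *
            ((Real.sqrt (l1 k) / Real.sqrt (l0 k)) * (l0 k / (l0 k + l1 k)))) atTop
        (nhds (σ0 * (1/(ν^2+1)) + (-σ1) * (ν⁻¹ * (ν^2/(ν^2+1))))) :=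
      (hv0.mul hL1).add (hv1.mul (hr'.mul hL0))
    have hexpr : ∀ k, (g0 k / Real.sqrt (l0 k)) * (l1 k / (l0 k + l1 k)) +
        (g1 k / Real.sqrt (l1 k)) *
          ((Real.sqrt (l1 k) / Real.sqrt (l0 k)) * (l0 k / (l0 k + l1 k))) =
        ((g0 k * l1 k + g1 k * l0 k) / (l0 k + l1 k)) * (Real.sqrt (l0 k))⁻¹ := by
      intro k
      have h0 := (hs0pos k).ne'
      have h1 := (hs1pos k).ne'
      have h2 := (hsum k).ne'
      field_simp
    have huniq := tendsto_nhds_unique (halt.congr hexpr) hd0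
    have hν2 : ν ≠ 0 := hν.ne'
    field_simp at huniq
    have hne : ν * (ν ^ 2 + 1) ≠ 0 := by positivity
    have hz : (σ0 - σ1 * ν) * (ν * (ν ^ 2 + 1)) = 0 := by linear_combination (ν * (ν ^ 2 + 1)) * huniq
    rcases mul_eq_zero.mp hz with h | h
    · linarith
    · exact absurd h hne
  subst hσν
  -- limits of the xi's
  have hdenpos : (0:ℝ) < σ1 * ν * ν + σ1 := by positivity
  have hggs1 : Tendsto (fun k => (g0 k - g1 k) / Real.sqrt (l1 k)) atTop
      (nhds (σ1 * ν * ν + σ1)) := by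
    have h2 := (hv0.mul hr).sub hv1
    have h3 : σ1 * ν * ν - -σ1 = σ1 * ν * ν + σ1 := by ring
    rw [h3] at h2
    refine h2.congr fun k => ?_
    have h0 := (hs0pos k).ne'
    have h1 := (hs1pos k).ne'
    field_simp
  have hxi0 : Tendsto (fun k => xi0 (g0 k) (g1 k) t y) atTop (nhds (t / (ν ^ 2 + 1))) := by
    have hnum : Tendsto (fun k => y / Real.sqrt (l1 k) - (g1 k / Real.sqrt (l1 k)) * t) atTop
        (nhds (0 - (-σ1) * t)) :=
      (tendsto_const_nhds.div_atTop hs1top).sub (hv1.mul_const t)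
    have h2 := hnum.div hggs1 hdenpos.ne'
    have h3 : (0 - -σ1 * t) / (σ1 * ν * ν + σ1) = t / (ν ^ 2 + 1) := by
      rw [div_eq_div_iff hdenpos.ne' hw.ne']; ring
    rw [h3] at h2
    refine h2.congr fun k => ?_
    simp only [xi0]
    have hs := (hs1pos k).ne'
    have hd := (hgg k).ne'
    simp only [Pi.div_apply]
    field_simp
  have hxi1 : Tendsto (fun k => xi1 (g0 k) (g1 k) t y) atTop
      (nhds (ν ^ 2 * t / (ν ^ 2 + 1))) := by
    have hnum : Tendsto (fun k => (g0 k / Real.sqrt (l0 k)) *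
        (Real.sqrt (l0 k) / Real.sqrt (l1 k)) * t - y / Real.sqrt (l1 k)) atTop
        (nhds (σ1 * ν * ν * t - 0)) :=
      ((hv0.mul hr).mul_const t).sub (tendsto_const_nhds.div_atTop hs1top)
    have h2 := hnum.div hggs1 hdenpos.ne'
    have h3 : (σ1 * ν * ν * t - 0) / (σ1 * ν * ν + σ1) = ν ^ 2 * t / (ν ^ 2 + 1) := by
      rw [div_eq_div_iff hdenpos.ne' hw.ne']; ring
    rw [h3] at h2
    refine h2.congr fun k => ?_
    simp only [xi1]
    have hs := (hs1pos k).ne'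
    have h0 := (hs0pos k).ne'
    have hd := (hgg k).ne'
    simp only [Pi.div_apply]
    field_simp
  -- sqrt limits
  have hA : Tendsto (fun k => Real.sqrt (xi0 (g0 k) (g1 k) t y)) atTop
      (nhds (Real.sqrt (t / (ν ^ 2 + 1)))) := hxi0.sqrt
  have hB : Tendsto (fun k => Real.sqrt (xi1 (g0 k) (g1 k) t y)) atTop
      (nhds (ν * Real.sqrt (t / (ν ^ 2 + 1)))) := by
    have h2 := hxi1.sqrt
    have h3 : Real.sqrt (ν ^ 2 * t / (ν ^ 2 + 1)) = ν * Real.sqrt (t / (ν ^ 2 + 1)) := by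
      rw [show ν ^ 2 * t / (ν ^ 2 + 1) = ν ^ 2 * (t / (ν ^ 2 + 1)) from by ring,
        Real.sqrt_mul (sq_nonneg ν), Real.sqrt_sq hν.le]
    rwa [h3] at h2
  -- the normalized denominator sequence
  have hCpos : 0 < 2 * σ1 * ν * Real.sqrt (t / (ν ^ 2 + 1)) :=
    mul_pos (by positivity) (Real.sqrt_pos.2 (div_pos ht hw))
  have hc : Tendsto (fun k => (g0 k - g1 k) *
        (Real.sqrt (l0 k) * Real.sqrt (xi0 (g0 k) (g1 k) t y) +
         Real.sqrt (l1 k) * Real.sqrt (xi1 (g0 k) (g1 k) t y)) / (l0 k + l1 k)) atTop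
      (nhds (2 * σ1 * ν * Real.sqrt (t / (ν ^ 2 + 1)))) := by
    have h2 := (hggs1.mul ((hr.mul hA).add hB)).mul hL1
    have h3 : (σ1 * ν * ν + σ1) * (ν * Real.sqrt (t / (ν ^ 2 + 1)) +
        ν * Real.sqrt (t / (ν ^ 2 + 1))) * (1 / (ν ^ 2 + 1)) =
        2 * σ1 * ν * Real.sqrt (t / (ν ^ 2 + 1)) := by
      field_simp
      ring
    rw [h3] at h2
    refine h2.congr fun k => ?_
    have hs := (hs1pos k).ne'
    have h0 := (hs0pos k).ne'
    have hsu := (hsum k).ne'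
    have k1 : Real.sqrt (l0 k) / Real.sqrt (l1 k) * Real.sqrt (xi0 (g0 k) (g1 k) t y) +
        Real.sqrt (xi1 (g0 k) (g1 k) t y) =
        (Real.sqrt (l0 k) * Real.sqrt (xi0 (g0 k) (g1 k) t y) +
         Real.sqrt (l1 k) * Real.sqrt (xi1 (g0 k) (g1 k) t y)) / Real.sqrt (l1 k) := by
      field_simp
    rw [k1, div_mul_div_comm, div_mul_div_comm,
      show Real.sqrt (l1 k) * Real.sqrt (l1 k) = l1 k from by
        rw [← sq]; exact hs1sq k,
      mul_comm ((g0 k - g1 k) * (Real.sqrt (l0 k) * Real.sqrt (xi0 (g0 k) (g1 k) t y) +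
        Real.sqrt (l1 k) * Real.sqrt (xi1 (g0 k) (g1 k) t y))) (l1 k),
      mul_div_mul_left _ _ (hl1 k).ne']
  -- eventual positivity of the xi's
  have hg0top : Tendsto g0 atTop atTop :=
    (hv0.pos_mul_atTop (by positivity) hs0top).congr fun k => div_mul_cancel₀ _ (hs0pos k).ne'
  have hg1bot : Tendsto g1 atTop atBot :=
    (hv1.neg_mul_atTop (by linarith) hs1top).congr fun k => div_mul_cancel₀ _ (hs1pos k).ne'
  have hEv0 : ∀ᶠ k in atTop, y < g0 k * t := (hg0top.atTop_mul_const ht).eventually_gt_atTop y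
  have hEv1 : ∀ᶠ k in atTop, g1 k * t < y := (hg1bot.atBot_mul_const ht).eventually_lt_atBot y
  -- the difference of square roots
  have hu : Tendsto (fun k => Real.sqrt (l0 k) * Real.sqrt (xi0 (g0 k) (g1 k) t y) -
      Real.sqrt (l1 k) * Real.sqrt (xi1 (g0 k) (g1 k) t y)) atTop
      (nhds ((y - δ * t) / (2 * σ1 * ν * Real.sqrt (t / (ν ^ 2 + 1))))) := by
    have hM : Tendsto (fun k => y - ((g0 k * l1 k + g1 k * l0 k) / (l0 k + l1 k)) * t) atTop
        (nhds (y - δ * t)) := tendsto_const_nhds.sub (hdrift.mul_const t)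
    refine (hM.div hc hCpos.ne').congr' ?_
    filter_upwards [hEv0, hEv1] with k h0k h1k
    simp only [Pi.div_apply]
    have hX0 : 0 < xi0 (g0 k) (g1 k) t y := div_pos (by linarith) (hgg k)
    have hX1 : 0 < xi1 (g0 k) (g1 k) t y := div_pos (by linarith) (hgg k)
    have hApos : 0 < Real.sqrt (xi0 (g0 k) (g1 k) t y) := Real.sqrt_pos.2 hX0
    have hBpos : 0 < Real.sqrt (xi1 (g0 k) (g1 k) t y) := Real.sqrt_pos.2 hX1
    have habpos : 0 < Real.sqrt (l0 k) * Real.sqrt (xi0 (g0 k) (g1 k) t y) +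
        Real.sqrt (l1 k) * Real.sqrt (xi1 (g0 k) (g1 k) t y) :=
      add_pos (mul_pos (hs0pos k) hApos) (mul_pos (hs1pos k) hBpos)
    have hcpos : 0 < (g0 k - g1 k) * (Real.sqrt (l0 k) * Real.sqrt (xi0 (g0 k) (g1 k) t y) +
        Real.sqrt (l1 k) * Real.sqrt (xi1 (g0 k) (g1 k) t y)) / (l0 k + l1 k) :=
      div_pos (mul_pos (hgg k) habpos) (hsum k)
    rw [div_eq_iff hcpos.ne']
    have e2 : (Real.sqrt (l0 k) * Real.sqrt (xi0 (g0 k) (g1 k) t y)) ^ 2 =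
        l0 k * xi0 (g0 k) (g1 k) t y := by
      rw [mul_pow, hs0sq, Real.sq_sqrt hX0.le]
    have e3 : (Real.sqrt (l1 k) * Real.sqrt (xi1 (g0 k) (g1 k) t y)) ^ 2 =
        l1 k * xi1 (g0 k) (g1 k) t y := by
      rw [mul_pow, hs1sq, Real.sq_sqrt hX1.le]
    have e1 : (Real.sqrt (l0 k) * Real.sqrt (xi0 (g0 k) (g1 k) t y) -
        Real.sqrt (l1 k) * Real.sqrt (xi1 (g0 k) (g1 k) t y)) *
        ((g0 k - g1 k) * (Real.sqrt (l0 k) * Real.sqrt (xi0 (g0 k) (g1 k) t y) +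
          Real.sqrt (l1 k) * Real.sqrt (xi1 (g0 k) (g1 k) t y)) / (l0 k + l1 k)) =
        ((Real.sqrt (l0 k) * Real.sqrt (xi0 (g0 k) (g1 k) t y)) ^ 2 -
         (Real.sqrt (l1 k) * Real.sqrt (xi1 (g0 k) (g1 k) t y)) ^ 2) *
          (g0 k - g1 k) / (l0 k + l1 k) := by
      ring
    rw [e1, e2, e3]
    simp only [xi0, xi1]
    have hd := (hgg k).ne'
    have hsu := (hsum k).ne'
    field_simp
    ring
  -- value of the limit constant
  have hCsq : ((y - δ * t) / (2 * σ1 * ν * Real.sqrt (t / (ν ^ 2 + 1)))) ^ 2 =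
      (y - δ * t) ^ 2 /
        (2 * (σ1 * ν * σ1 / Real.sqrt (((σ1 * ν) ^ 2 + σ1 ^ 2) / 2)) ^ 2 * t) := by
    have h1 : Real.sqrt (t / (ν ^ 2 + 1)) ^ 2 = t / (ν ^ 2 + 1) :=
      Real.sq_sqrt (by positivity)
    have h2 : Real.sqrt (((σ1 * ν) ^ 2 + σ1 ^ 2) / 2) ^ 2 = ((σ1 * ν) ^ 2 + σ1 ^ 2) / 2 :=
      Real.sq_sqrt (by positivity)
    rw [div_pow, show (2 * σ1 * ν * Real.sqrt (t / (ν ^ 2 + 1))) ^ 2 =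
        (2 * σ1 * ν) ^ 2 * Real.sqrt (t / (ν ^ 2 + 1)) ^ 2 from by ring, h1, div_pow, h2]
    rw [div_eq_div_iff (by positivity) (by positivity)]
    field_simp
  -- first limit
  have first : Tendsto (fun k =>
      (Real.sqrt (l0 k * xi0 (g0 k) (g1 k) t y) -
        Real.sqrt (l1 k * xi1 (g0 k) (g1 k) t y)) ^ 2) atTop
      (nhds ((y - δ * t) ^ 2 /
        (2 * (σ1 * ν * σ1 / Real.sqrt (((σ1 * ν) ^ 2 + σ1 ^ 2) / 2)) ^ 2 * t))) := by
    have h2 := hu.pow 2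
    rw [hCsq] at h2
    refine h2.congr fun k => ?_
    rw [Real.sqrt_mul (hl0 k).le, Real.sqrt_mul (hl1 k).le]
  refine ⟨first, ?_⟩
  refine first.congr' ?_
  filter_upwards [hEv0, hEv1] with k h0k h1k
  have hX0 : 0 < xi0 (g0 k) (g1 k) t y := div_pos (by linarith) (hgg k)
  have hX1 : 0 < xi1 (g0 k) (g1 k) t y := div_pos (by linarith) (hgg k)
  have hz : zf (l0 k) (l1 k) (g0 k) (g1 k) t y =
      (l0 k * xi0 (g0 k) (g1 k) t y) * (l1 k * xi1 (g0 k) (g1 k) t y) := by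
    simp only [zf]; ring
  rw [eq_comm, hz, Real.sqrt_mul (mul_nonneg (hl0 k).le hX0.le)]
  have e2 : Real.sqrt (l0 k * xi0 (g0 k) (g1 k) t y) ^ 2 = l0 k * xi0 (g0 k) (g1 k) t y :=
    Real.sq_sqrt (mul_nonneg (hl0 k).le hX0.le)
  have e3 : Real.sqrt (l1 k * xi1 (g0 k) (g1 k) t y) ^ 2 = l1 k * xi1 (g0 k) (g1 k) t y :=
    Real.sq_sqrt (mul_nonneg (hl1 k).le hX1.le)
  linear_combination -e2 - e3
end
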